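/- arXiv:1708.09777 — 9 statements merged into one kernel-verified Lean document; each statement's English description precedes it below -/
import Mathlib

section
/- Let n ≥ 5 be an integer and define g(n) = 2(n+1) if n ≡ 0 (mod 4) and g(n) = 2n otherwise. Then for every weighting f: E(K_n) → {-1, 1} satisfying |∑_{e ∈ E(K_n)} f(e)| ≤ C(n,2) − g(n), there exists a 4-element subset S of the vertices whose six edges have weights summing to 0 (a zero-sum copy of K_4). -/
open Finset
variable {n : ℕ}

lemma sum_pc2_insert (f : Finset (Fin n) → ℤ) {x : Fin n} {s : Finset (Fin n)} (h : x ∉ s) :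
    ∑ e ∈ powersetCard 2 (insert x s), f e =
      (∑ e ∈ powersetCard 2 s, f e) + ∑ y ∈ s, f {x, y} := by
  rw [show (2:ℕ) = Nat.succ 1 from rfl, powersetCard_succ_insert h, sum_union, sum_image]
  · rw [powersetCard_one, sum_map]
    rfl
  · intro a ha b hb hab
    rw [powersetCard_one, mem_coe, mem_map] at ha hb
    obtain ⟨u, hu, rfl⟩ := ha
    obtain ⟨v, hv, rfl⟩ := hb
    simp only [Function.Embedding.coeFn_mk] at hab ⊢
    have hu' : u ≠ x := fun e => h (e ▸ hu)
    have : u ∈ ({x, v} : Finset (Fin n)) := hab ▸ (by simp)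
    simp [hu'] at this
    simp [this]
  · rw [disjoint_left]
    intro e he he'
    rw [mem_powersetCard] at he
    rw [mem_image] at he'
    obtain ⟨t, _, rfl⟩ := he'
    exact h (he.1 (mem_insert_self x t))

lemma sum_pc2_quad (f : Finset (Fin n) → ℤ) {a b c d : Fin n}
    (hab : a ≠ b) (hac : a ≠ c) (had : a ≠ d) (hbc : b ≠ c) (hbd : b ≠ d) (hcd : c ≠ d) :
    ∑ e ∈ powersetCard 2 ({a, b, c, d} : Finset (Fin n)), f e =
      f {a,b} + f {a,c} + f {a,d} + f {b,c} + f {b,d} + f {c,d} := by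
  have h1 : a ∉ ({b,c,d} : Finset (Fin n)) := by simp [hab, hac, had]
  have h2 : b ∉ ({c,d} : Finset (Fin n)) := by simp [hbc, hbd]
  have h3 : c ∉ ({d} : Finset (Fin n)) := by simp [hcd]
  rw [show ({a,b,c,d} : Finset (Fin n)) = insert a {b,c,d} from rfl, sum_pc2_insert f h1,
    show ({b,c,d} : Finset (Fin n)) = insert b {c,d} from rfl, sum_pc2_insert f h2,
    show ({c,d} : Finset (Fin n)) = insert c {d} from rfl, sum_pc2_insert f h3]
  have h4 : powersetCard 2 ({d} : Finset (Fin n)) = ∅ := by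
    simp
  rw [h4, sum_empty, sum_singleton, sum_insert h3, sum_singleton, sum_insert h2,
    sum_insert (by simp [hcd] : c ∉ ({d} : Finset (Fin n)))]
  simp only [sum_singleton]
  ring

section main
variable {f : Finset (Fin n) → ℤ}
  (H : ∀ S ∈ Finset.powersetCard 4 (Finset.univ : Finset (Fin n)),
      (∑ e ∈ Finset.powersetCard 2 S, f e) ≠ 0)

include H in
lemma sum6_ne {a b c d : Fin n}
    (hab : a ≠ b) (hac : a ≠ c) (had : a ≠ d) (hbc : b ≠ c) (hbd : b ≠ d) (hcd : c ≠ d) :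
    f {a,b} + f {a,c} + f {a,d} + f {b,c} + f {b,d} + f {c,d} ≠ 0 := by
  rw [← sum_pc2_quad f hab hac had hbc hbd hcd]
  apply H
  rw [Finset.mem_powersetCard]
  refine ⟨Finset.subset_univ _, ?_⟩
  rw [Finset.card_insert_of_notMem (by simp [hab, hac, had]),
    Finset.card_insert_of_notMem (by simp [hbc, hbd]),
    Finset.card_insert_of_notMem (by simp [hcd]), Finset.card_singleton]

end main

lemma fpair_comm (f : Finset (Fin n) → ℤ) (u v : Fin n) : f {u, v} = f {v, u} := by
  rw [Finset.pair_comm]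

section sigma
variable {f : Finset (Fin n) → ℤ} {σ : ℤ}
  (hf : ∀ e ∈ Finset.powersetCard 2 (Finset.univ : Finset (Fin n)), f e = -1 ∨ f e = 1)
  (hσ : σ = 1 ∨ σ = -1)
  (H : ∀ S ∈ Finset.powersetCard 4 (Finset.univ : Finset (Fin n)),
      (∑ e ∈ Finset.powersetCard 2 S, f e) ≠ 0)

include hf hσ in
lemma hdi {u v : Fin n} (huv : u ≠ v) : f {u, v} = σ ∨ f {u, v} = -σ := by
  have h : ({u, v} : Finset (Fin n)) ∈ Finset.powersetCard 2 Finset.univ := by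
    rw [Finset.mem_powersetCard]
    exact ⟨Finset.subset_univ _, Finset.card_pair huv⟩
  rcases hf _ h with h1 | h1 <;> rcases hσ with rfl | rfl <;> omega

include hf hσ H in
/-- shared-vertex case of "no σ-triangle together with (-σ)-triangle" -/
lemma kShared {a b c y z : Fin n}
    (hab : a ≠ b) (hac : a ≠ c) (hbc : b ≠ c) (hay : a ≠ y) (haz : a ≠ z) (hyz : y ≠ z)
    (tab : f {a,b} = σ) (tac : f {a,c} = σ) (tbc : f {b,c} = σ)
    (iay : f {a,y} = -σ) (iaz : f {a,z} = -σ) (iyz : f {y,z} = -σ) : False := by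
  have hσ' : σ ≠ -σ := by rcases hσ with rfl | rfl <;> omega
  have hby : b ≠ y := by rintro rfl; exact hσ' (tab ▸ iay)
  have hcy : c ≠ y := by rintro rfl; exact hσ' (tac ▸ iay)
  have hbz : b ≠ z := by rintro rfl; exact hσ' (tab ▸ iaz)
  have hcz : c ≠ z := by rintro rfl; exact hσ' (tac ▸ iaz)
  -- C1 : f{b,y} = σ ∨ f{c,y} = σ
  have C1 : f {b,y} = σ ∨ f {c,y} = σ := by
    rcases hdi hf hσ hby with h1 | h1
    · exact Or.inl h1
    rcases hdi hf hσ hcy with h2 | h2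
    · exact Or.inr h2
    exact absurd (by rw [tab, tac, iay, tbc, h1, h2]; ring)
      (sum6_ne H hab hac hay hbc hby hcy)
  have C2 : f {b,z} = σ ∨ f {c,z} = σ := by
    rcases hdi hf hσ hbz with h1 | h1
    · exact Or.inl h1
    rcases hdi hf hσ hcz with h2 | h2
    · exact Or.inr h2
    exact absurd (by rw [tab, tac, iaz, tbc, h1, h2]; ring)
      (sum6_ne H hab hac haz hbc hbz hcz)
  have C3 : ¬ (f {b,y} = σ ∧ f {b,z} = σ) := by
    rintro ⟨h1, h2⟩
    exact sum6_ne H hab.symm hby hbz hay haz hyz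
      (by rw [fpair_comm f b a, tab, h1, h2, iay, iaz, iyz]; ring)
  have C4 : ¬ (f {c,y} = σ ∧ f {c,z} = σ) := by
    rintro ⟨h1, h2⟩
    exact sum6_ne H hac.symm hcy hcz hay haz hyz
      (by rw [fpair_comm f c a, tac, h1, h2, iay, iaz, iyz]; ring)
  -- forbidden diagonal patterns on {b,c,y,z}
  have C5 : ¬ (f {b,y} = σ ∧ f {c,z} = σ ∧ f {c,y} = -σ ∧ f {b,z} = -σ) := by
    rintro ⟨h1, h2, h3, h4⟩
    exact sum6_ne H hby.symm hcy.symm hyz hbc hbz hcz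
      (by rw [fpair_comm f y b, fpair_comm f y c, h1, h3, iyz, tbc, h4, h2]; ring)
  have C6 : ¬ (f {c,y} = σ ∧ f {b,z} = σ ∧ f {b,y} = -σ ∧ f {c,z} = -σ) := by
    rintro ⟨h1, h2, h3, h4⟩
    exact sum6_ne H hcy.symm hby.symm hyz hbc.symm hcz hbz
      (by rw [fpair_comm f y c, fpair_comm f y b, fpair_comm f c b, h1, h3, iyz, tbc, h4, h2]; ring)
  rcases hdi hf hσ hby with h1 | h1 <;> rcases hdi hf hσ hcy with h2 | h2 <;>
    rcases hdi hf hσ hbz with h3 | h3 <;> rcases hdi hf hσ hcz with h4 | h4 <;>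
      first
        | exact C3 ⟨h1, h3⟩
        | exact C4 ⟨h2, h4⟩
        | exact C5 ⟨h1, h4, h2, h3⟩
        | exact C6 ⟨h2, h3, h1, h4⟩
        | (rcases C1 with h | h; exacts [hσ' (h.symm.trans h1), hσ' (h.symm.trans h2)])
        | (rcases C2 with h | h; exacts [hσ' (h.symm.trans h3), hσ' (h.symm.trans h4)])

include hf hσ H in
/-- disjoint case, subcase: a~x, a~y, a≁z, b~z -/
lemma k0a {a b c x y z : Fin n}
    (hab : a ≠ b) (hac : a ≠ c) (hbc : b ≠ c) (hxy : x ≠ y) (hxz : x ≠ z) (hyz : y ≠ z)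
    (hax : a ≠ x) (hay : a ≠ y) (haz : a ≠ z) (hbx : b ≠ x) (hby : b ≠ y) (hbz : b ≠ z)
    (hcx : c ≠ x) (hcy : c ≠ y) (hcz : c ≠ z)
    (tab : f {a,b} = σ) (tac : f {a,c} = σ) (tbc : f {b,c} = σ)
    (ixy : f {x,y} = -σ) (ixz : f {x,z} = -σ) (iyz : f {y,z} = -σ)
    (sax : f {a,x} = σ) (say : f {a,y} = σ) (naz : f {a,z} = -σ) (sbz : f {b,z} = σ) :
    False := by
  have sbx : f {b,x} = σ := by
    rcases hdi hf hσ hbx with h | h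
    · exact h
    exact absurd (by rw [fpair_comm f x a, sax, fpair_comm f x b, h, ixz, tab, naz, sbz]; ring)
      (sum6_ne H hax.symm hbx.symm hxz hab haz hbz)
  have sby : f {b,y} = σ := by
    rcases hdi hf hσ hby with h | h
    · exact h
    exact absurd (by rw [fpair_comm f y a, say, fpair_comm f y b, h, iyz, tab, naz, sbz]; ring)
      (sum6_ne H hay.symm hby.symm hyz hab haz hbz)
  exact sum6_ne H hbx hby hbz hxy hxz hyz
    (by rw [sbx, sby, sbz, ixy, ixz, iyz]; ring)

include hf hσ H in
/-- disjoint case, subcase: a~x, a≁y, b~y -/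
lemma k0b {a b c x y z : Fin n}
    (hab : a ≠ b) (hac : a ≠ c) (hbc : b ≠ c) (hxy : x ≠ y) (hxz : x ≠ z) (hyz : y ≠ z)
    (hax : a ≠ x) (hay : a ≠ y) (haz : a ≠ z) (hbx : b ≠ x) (hby : b ≠ y) (hbz : b ≠ z)
    (hcx : c ≠ x) (hcy : c ≠ y) (hcz : c ≠ z)
    (tab : f {a,b} = σ) (tac : f {a,c} = σ) (tbc : f {b,c} = σ)
    (ixy : f {x,y} = -σ) (ixz : f {x,z} = -σ) (iyz : f {y,z} = -σ)
    (sax : f {a,x} = σ) (nay : f {a,y} = -σ) (sby : f {b,y} = σ) :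
    False := by
  have sbx : f {b,x} = σ := by
    rcases hdi hf hσ hbx with h | h
    · exact h
    exact absurd (by rw [fpair_comm f x a, sax, fpair_comm f x b, h, ixy, tab, nay, sby]; ring)
      (sum6_ne H hax.symm hbx.symm hxy hab hay hby)
  have hrowb : ¬ f {b,z} = σ := by
    intro sbz
    exact sum6_ne H hbx hby hbz hxy hxz hyz (by rw [sbx, sby, sbz, ixy, ixz, iyz]; ring)
  have nbz : f {b,z} = -σ := (hdi hf hσ hbz).resolve_left hrowb
  rcases hdi hf hσ haz with saz | naz
  · -- a~z : forces b~z via path z-a-b-y, contradiction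
    apply hrowb
    rcases hdi hf hσ hbz with h | h
    · exact h
    exact ((sum6_ne H hay.symm hby.symm hyz hab haz hbz)
      (by rw [fpair_comm f y a, nay, fpair_comm f y b, sby, iyz, tab, saz, h]; ring)).elim
  · -- a≁z, b≁z so c~z (column z)
    have scz : f {c,z} = σ := by
      rcases hdi hf hσ hcz with h | h
      · exact h
      exact absurd (by rw [tab, tac, naz, tbc, nbz, h]; ring)
        (sum6_ne H hab hac haz hbc hbz hcz)
    have scx : f {c,x} = σ := by
      rcases hdi hf hσ hcx with h | h
      · exact h
      exact absurd (by rw [fpair_comm f x b, sbx, fpair_comm f x c, h, ixz, tbc, nbz, scz]; ring)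
        (sum6_ne H hbx.symm hcx.symm hxz hbc hbz hcz)
    have scy : f {c,y} = σ := by
      rcases hdi hf hσ hcy with h | h
      · exact h
      exact absurd (by rw [fpair_comm f y b, sby, fpair_comm f y c, h, iyz, tbc, nbz, scz]; ring)
        (sum6_ne H hby.symm hcy.symm hyz hbc hbz hcz)
    exact sum6_ne H hcx hcy hcz hxy hxz hyz
      (by rw [scx, scy, scz, ixy, ixz, iyz]; ring)

include hf hσ H in
/-- disjoint case assuming a~x -/
lemma k0c {a b c x y z : Fin n}
    (hab : a ≠ b) (hac : a ≠ c) (hbc : b ≠ c) (hxy : x ≠ y) (hxz : x ≠ z) (hyz : y ≠ z)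
    (hax : a ≠ x) (hay : a ≠ y) (haz : a ≠ z) (hbx : b ≠ x) (hby : b ≠ y) (hbz : b ≠ z)
    (hcx : c ≠ x) (hcy : c ≠ y) (hcz : c ≠ z)
    (tab : f {a,b} = σ) (tac : f {a,c} = σ) (tbc : f {b,c} = σ)
    (ixy : f {x,y} = -σ) (ixz : f {x,z} = -σ) (iyz : f {y,z} = -σ)
    (sax : f {a,x} = σ) : False := by
  rcases hdi hf hσ hay with say | nay
  · have naz : f {a,z} = -σ := by
      rcases hdi hf hσ haz with h | h
      · exact ((sum6_ne H hax hay haz hxy hxz hyz)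
          (by rw [sax, say, h, ixy, ixz, iyz]; ring)).elim
      · exact h
    have colz : f {b,z} = σ ∨ f {c,z} = σ := by
      rcases hdi hf hσ hbz with h | h
      · exact Or.inl h
      rcases hdi hf hσ hcz with h' | h'
      · exact Or.inr h'
      exact ((sum6_ne H hab hac haz hbc hbz hcz) (by rw [tab, tac, naz, tbc, h, h']; ring)).elim
    rcases colz with h | h
    · exact k0a hf hσ H hab hac hbc hxy hxz hyz hax hay haz hbx hby hbz hcx hcy hcz
        tab tac tbc ixy ixz iyz sax say naz h
    · exact k0a hf hσ H hac hab hbc.symm hxy hxz hyz hax hay haz hcx hcy hcz hbx hby hbz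
        tac tab ((fpair_comm f c b).trans tbc) ixy ixz iyz sax say naz h
  · have coly : f {b,y} = σ ∨ f {c,y} = σ := by
      rcases hdi hf hσ hby with h | h
      · exact Or.inl h
      rcases hdi hf hσ hcy with h' | h'
      · exact Or.inr h'
      exact ((sum6_ne H hab hac hay hbc hby hcy) (by rw [tab, tac, nay, tbc, h, h']; ring)).elim
    rcases coly with h | h
    · exact k0b hf hσ H hab hac hbc hxy hxz hyz hax hay haz hbx hby hbz hcx hcy hcz
        tab tac tbc ixy ixz iyz sax nay h
    · exact k0b hf hσ H hac hab hbc.symm hxy hxz hyz hax hay haz hcx hcy hcz hbx hby hbz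
        tac tab ((fpair_comm f c b).trans tbc) ixy ixz iyz sax nay h

include hf hσ H in
/-- no σ-triangle coexists with a (-σ)-triangle -/
lemma noTriTri {a b c x y z : Fin n}
    (hab : a ≠ b) (hac : a ≠ c) (hbc : b ≠ c) (hxy : x ≠ y) (hxz : x ≠ z) (hyz : y ≠ z)
    (tab : f {a,b} = σ) (tac : f {a,c} = σ) (tbc : f {b,c} = σ)
    (ixy : f {x,y} = -σ) (ixz : f {x,z} = -σ) (iyz : f {y,z} = -σ) : False := by
  by_cases hax : a = x
  · subst hax
    exact kShared hf hσ H hab hac hbc hxy hxz hyz tab tac tbc ixy ixz iyz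
  by_cases hay : a = y
  · subst hay
    exact kShared hf hσ H hab hac hbc hxy.symm hyz hxz tab tac tbc
      ((fpair_comm f a x).trans ixy) iyz ixz
  by_cases haz : a = z
  · subst haz
    exact kShared hf hσ H hab hac hbc hxz.symm hyz.symm hxy tab tac tbc
      ((fpair_comm f a x).trans ixz) ((fpair_comm f a y).trans iyz) ixy
  by_cases hbx : b = x
  · subst hbx
    exact kShared hf hσ H hab.symm hbc hac hxy hxz hyz
      ((fpair_comm f b a).trans tab) tbc tac ixy ixz iyz
  by_cases hby : b = y
  · subst hby
    exact kShared hf hσ H hab.symm hbc hac hxy.symm hyz hxz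
      ((fpair_comm f b a).trans tab) tbc tac ((fpair_comm f b x).trans ixy) iyz ixz
  by_cases hbz : b = z
  · subst hbz
    exact kShared hf hσ H hab.symm hbc hac hxz.symm hyz.symm hxy
      ((fpair_comm f b a).trans tab) tbc tac
      ((fpair_comm f b x).trans ixz) ((fpair_comm f b y).trans iyz) ixy
  by_cases hcx : c = x
  · subst hcx
    exact kShared hf hσ H hac.symm hbc.symm hab hxy hxz hyz
      ((fpair_comm f c a).trans tac) ((fpair_comm f c b).trans tbc) tab ixy ixz iyz
  by_cases hcy : c = y
  · subst hcy
    exact kShared hf hσ H hac.symm hbc.symm hab hxy.symm hyz hxz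
      ((fpair_comm f c a).trans tac) ((fpair_comm f c b).trans tbc) tab
      ((fpair_comm f c x).trans ixy) iyz ixz
  by_cases hcz : c = z
  · subst hcz
    exact kShared hf hσ H hac.symm hbc.symm hab hxz.symm hyz.symm hxy
      ((fpair_comm f c a).trans tac) ((fpair_comm f c b).trans tbc) tab
      ((fpair_comm f c x).trans ixz) ((fpair_comm f c y).trans iyz) ixy
  have colx : f {a,x} = σ ∨ f {b,x} = σ ∨ f {c,x} = σ := by
    rcases hdi hf hσ hax with h | h
    · exact Or.inl h
    rcases hdi hf hσ hbx with h' | h'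
    · exact Or.inr (Or.inl h')
    rcases hdi hf hσ hcx with h'' | h''
    · exact Or.inr (Or.inr h'')
    exact ((sum6_ne H hab hac hax hbc hbx hcx) (by rw [tab, tac, tbc, h, h', h'']; ring)).elim
  rcases colx with h | h | h
  · exact k0c hf hσ H hab hac hbc hxy hxz hyz hax hay haz hbx hby hbz hcx hcy hcz
      tab tac tbc ixy ixz iyz h
  · exact k0c hf hσ H hab.symm hbc hac hxy hxz hyz hbx hby hbz hax hay haz hcx hcy hcz
      ((fpair_comm f b a).trans tab) tbc tac ixy ixz iyz h
  · exact k0c hf hσ H hac.symm hbc.symm hab hxy hxz hyz hcx hcy hcz hax hay haz hbx hby hbz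
      ((fpair_comm f c a).trans tac) ((fpair_comm f c b).trans tbc) tab ixy ixz iyz h

end sigma

def Nbr (f : Finset (Fin n) → ℤ) (σ : ℤ) (v : Fin n) : Finset (Fin n) :=
  Finset.univ.filter (fun u => u ≠ v ∧ f {v,u} = σ)

lemma mem_Nbr {f : Finset (Fin n) → ℤ} {σ : ℤ} {v u : Fin n} :
    u ∈ Nbr f σ v ↔ u ≠ v ∧ f {v,u} = σ := by
  simp [Nbr]

def Sv (f : Finset (Fin n) → ℤ) (σ : ℤ) (v : Fin n) : Finset (Fin n) :=
  insert v (Nbr f σ v ∪ (Nbr f σ v).biUnion (Nbr f σ))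

lemma Sv_eq {f : Finset (Fin n) → ℤ} {σ : ℤ} {v p q r : Fin n}
    (hNv : Nbr f σ v = {p, q}) (hNp : Nbr f σ p = {v, r}) (hNq : Nbr f σ q = {v, r}) :
    Sv f σ v = {v, p, q, r} := by
  rw [Sv, hNv, show ({p,q} : Finset (Fin n)) = insert p {q} from rfl, Finset.biUnion_insert,
    Finset.singleton_biUnion, hNp, hNq]
  ext u
  simp only [Finset.mem_insert, Finset.mem_union, Finset.mem_singleton]
  tauto

section sigma2
variable {f : Finset (Fin n) → ℤ} {σ : ℤ}
  (hf : ∀ e ∈ Finset.powersetCard 2 (Finset.univ : Finset (Fin n)), f e = -1 ∨ f e = 1)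
  (hσ : σ = 1 ∨ σ = -1)
  (H : ∀ S ∈ Finset.powersetCard 4 (Finset.univ : Finset (Fin n)),
      (∑ e ∈ Finset.powersetCard 2 S, f e) ≠ 0)
  (htf : ∀ p q r : Fin n, p ≠ q → p ≠ r → q ≠ r →
      f {p,q} = σ → f {p,r} = σ → f {q,r} = σ → False)

include hf hσ H htf in
lemma deg_le_two (v : Fin n) : (Nbr f σ v).card ≤ 2 := by
  by_contra h
  push_neg at h
  obtain ⟨a, b, c, ha, hb, hc, hab, hac, hbc⟩ := Finset.two_lt_card_iff.mp h
  rw [mem_Nbr] at ha hb hc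
  obtain ⟨hav, sva⟩ := ha
  obtain ⟨hbv, svb⟩ := hb
  obtain ⟨hcv, svc⟩ := hc
  have nab : f {a,b} = -σ := by
    rcases hdi hf hσ hab with h' | h'
    · exact (htf v a b hav.symm hbv.symm hab sva svb h').elim
    · exact h'
  have nac : f {a,c} = -σ := by
    rcases hdi hf hσ hac with h' | h'
    · exact (htf v a c hav.symm hcv.symm hac sva svc h').elim
    · exact h'
  have nbc : f {b,c} = -σ := by
    rcases hdi hf hσ hbc with h' | h'
    · exact (htf v b c hbv.symm hcv.symm hbc svb svc h').elim
    · exact h'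
  exact sum6_ne H hav.symm hbv.symm hcv.symm hab hac hbc
    (by rw [sva, svb, svc, nab, nac, nbc]; ring)

include hf hσ H htf in
lemma c4_struct (hreg : ∀ v : Fin n, (Nbr f σ v).card = 2) (v : Fin n) :
    ∃ p q r : Fin n, v ≠ p ∧ v ≠ q ∧ v ≠ r ∧ p ≠ q ∧ p ≠ r ∧ q ≠ r ∧
      Nbr f σ v = {p, q} ∧ Nbr f σ p = {v, r} ∧ Nbr f σ q = {v, r} ∧ Nbr f σ r = {p, q} := by
  have hσ' : σ ≠ -σ := by rcases hσ with rfl | rfl <;> omega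
  obtain ⟨p, q, hpq, hNv⟩ := Finset.card_eq_two.mp (hreg v)
  have hp : p ∈ Nbr f σ v := by rw [hNv]; simp
  have hq : q ∈ Nbr f σ v := by rw [hNv]; simp
  rw [mem_Nbr] at hp hq
  obtain ⟨hpv, svp⟩ := hp
  obtain ⟨hqv, svq⟩ := hq
  have npq : f {p,q} = -σ := by
    rcases hdi hf hσ hpq with h' | h'
    · exact (htf v p q hpv.symm hqv.symm hpq svp svq h').elim
    · exact h'
  -- Nbr p = {v, r}
  have hvNp : v ∈ Nbr f σ p := mem_Nbr.mpr ⟨hpv.symm, (fpair_comm f p v).trans svp⟩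
  obtain ⟨x, y, hxy, hNp⟩ := Finset.card_eq_two.mp (hreg p)
  have hvxy : v = x ∨ v = y := by
    have := hNp ▸ hvNp; simpa using this
  obtain ⟨r, hrv, hNp⟩ : ∃ r, r ≠ v ∧ Nbr f σ p = {v, r} := by
    rcases hvxy with rfl | rfl
    · exact ⟨y, hxy.symm, hNp⟩
    · exact ⟨x, hxy, hNp.trans (Finset.pair_comm x v)⟩
  have hr : r ∈ Nbr f σ p := by rw [hNp]; simp
  rw [mem_Nbr] at hr
  obtain ⟨hrp, spr⟩ := hr
  have hrq : r ≠ q := by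
    rintro rfl
    exact hσ' (spr.symm.trans npq)
  have nvr : f {v,r} = -σ := by
    rcases hdi hf hσ (Ne.symm hrv) with h' | h'
    · exact absurd (mem_Nbr.mpr ⟨hrv, h'⟩) (by rw [hNv]; simp [hrp, hrq])
    · exact h'
  have srq : f {r,q} = σ := by
    rcases hdi hf hσ hrq with h' | h'
    · exact h'
    exact ((sum6_ne H hrp hrv hrq hpv hpq hqv.symm)
      (by rw [fpair_comm f r p, spr, fpair_comm f r v, nvr, h', fpair_comm f p v, svp,
        npq, svq]; ring)).elim
  -- Nbr q = {v, r}
  have hNq : Nbr f σ q = {v, r} := by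
    refine (Finset.eq_of_subset_of_card_le ?_ (by rw [hreg q, Finset.card_pair hrv.symm])).symm
    intro u hu
    simp only [Finset.mem_insert, Finset.mem_singleton] at hu
    rcases hu with rfl | rfl
    · exact mem_Nbr.mpr ⟨hqv.symm, (fpair_comm f q u).trans svq⟩
    · exact mem_Nbr.mpr ⟨hrq, (fpair_comm f q u).trans srq⟩
  have hNr : Nbr f σ r = {p, q} := by
    refine (Finset.eq_of_subset_of_card_le ?_ (by rw [hreg r, Finset.card_pair hpq])).symm
    intro u hu
    simp only [Finset.mem_insert, Finset.mem_singleton] at hu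
    rcases hu with rfl | rfl
    · exact mem_Nbr.mpr ⟨Ne.symm hrp, (fpair_comm f r u).trans spr⟩
    · exact mem_Nbr.mpr ⟨hrq.symm, srq⟩
  exact ⟨p, q, r, hpv.symm, hqv.symm, hrv.symm, hpq, fun h => hrp h.symm, fun h => hrq h.symm,
    hNv, hNp, hNq, hNr⟩

include hf hσ H htf in
lemma Sv_good (hreg : ∀ v : Fin n, (Nbr f σ v).card = 2) (v : Fin n) :
    (Sv f σ v).card = 4 ∧ ∀ u ∈ Sv f σ v, Sv f σ u = Sv f σ v := by
  obtain ⟨p, q, r, hvp, hvq, hvr, hpq, hpr, hqr, hNv, hNp, hNq, hNr⟩ :=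
    c4_struct hf hσ H htf hreg v
  have e_v : Sv f σ v = {v,p,q,r} := Sv_eq hNv hNp hNq
  have e_p : Sv f σ p = {p,v,r,q} := Sv_eq hNp hNv hNr
  have e_q : Sv f σ q = {q,v,r,p} :=
    Sv_eq hNq (hNv.trans (Finset.pair_comm p q)) (hNr.trans (Finset.pair_comm p q))
  have e_r : Sv f σ r = {r,p,q,v} :=
    Sv_eq hNr (hNp.trans (Finset.pair_comm v r)) (hNq.trans (Finset.pair_comm v r))
  constructor
  · rw [e_v, Finset.card_insert_of_notMem (by simp [hvp, hvq, hvr]),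
      Finset.card_insert_of_notMem (by simp [hpq, hpr]),
      Finset.card_insert_of_notMem (by simp [hqr]), Finset.card_singleton]
  · intro u hu
    rw [e_v] at hu
    simp only [Finset.mem_insert, Finset.mem_singleton] at hu
    rcases hu with rfl | rfl | rfl | rfl
    · rfl
    · rw [e_p, e_v]; ext w; simp only [Finset.mem_insert, Finset.mem_singleton]; tauto
    · rw [e_q, e_v]; ext w; simp only [Finset.mem_insert, Finset.mem_singleton]; tauto
    · rw [e_r, e_v]; ext w; simp only [Finset.mem_insert, Finset.mem_singleton]; tauto

include hf hσ H htf in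
lemma four_dvd_of_reg (hreg : ∀ v : Fin n, (Nbr f σ v).card = 2) : 4 ∣ n := by
  classical
  have key := Sv_good hf hσ H htf hreg
  have hn : (Finset.univ : Finset (Fin n)).card = ∑ t ∈ Finset.univ.image (Sv f σ),
      (Finset.univ.filter (fun v => Sv f σ v = t)).card :=
    Finset.card_eq_sum_card_fiberwise
      (fun x _ => Finset.mem_image_of_mem _ (Finset.mem_univ x))
  have fib : ∀ t ∈ Finset.univ.image (Sv f σ),
      (Finset.univ.filter (fun v => Sv f σ v = t)).card = 4 := by
    intro t ht
    obtain ⟨v, _, rfl⟩ := Finset.mem_image.mp ht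
    have : (Finset.univ.filter (fun u => Sv f σ u = Sv f σ v)) = Sv f σ v := by
      ext u
      simp only [Finset.mem_filter, Finset.mem_univ, true_and]
      constructor
      · intro h
        exact h ▸ Finset.mem_insert_self u _
      · exact (key v).2 u
    rw [this, (key v).1]
  rw [Finset.sum_congr rfl fib, Finset.sum_const, smul_eq_mul, Finset.card_univ,
    Fintype.card_fin] at hn
  exact ⟨(Finset.univ.image (Sv f σ)).card, by omega⟩

end sigma2

lemma deg_eq_incidence (f : Finset (Fin n) → ℤ) (σ : ℤ) (v : Fin n) :
    (Nbr f σ v).card =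
      (((Finset.powersetCard 2 (Finset.univ : Finset (Fin n))).filter (fun e => f e = σ)).filter
        (fun e => v ∈ e)).card := by
  apply Finset.card_bij (fun u _ => ({v, u} : Finset (Fin n)))
  · intro u hu
    rw [mem_Nbr] at hu
    simp only [Finset.mem_filter]
    refine ⟨⟨?_, hu.2⟩, by simp⟩
    rw [Finset.mem_powersetCard]
    exact ⟨Finset.subset_univ _, Finset.card_pair (Ne.symm hu.1)⟩
  · intro u hu u' hu' h
    rw [mem_Nbr] at hu hu'
    have : u ∈ ({v, u'} : Finset (Fin n)) := h ▸ (by simp)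
    simp only [Finset.mem_insert, Finset.mem_singleton] at this
    rcases this with rfl | rfl
    · exact (hu.1 rfl).elim
    · rfl
  · intro e he
    simp only [Finset.mem_filter, Finset.mem_powersetCard] at he
    obtain ⟨⟨⟨_, hcard⟩, hfe⟩, hve⟩ := he
    obtain ⟨x, y, hxy, rfl⟩ := Finset.card_eq_two.mp hcard
    simp only [Finset.mem_insert, Finset.mem_singleton] at hve
    rcases hve with rfl | rfl
    · exact ⟨y, mem_Nbr.mpr ⟨hxy.symm, hfe⟩, rfl⟩
    · exact ⟨x, mem_Nbr.mpr ⟨hxy, by rwa [Finset.pair_comm]⟩, Finset.pair_comm v x⟩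

lemma handshake (f : Finset (Fin n) → ℤ) (σ : ℤ) :
    ∑ v : Fin n, (Nbr f σ v).card =
      2 * ((Finset.powersetCard 2 (Finset.univ : Finset (Fin n))).filter
        (fun e => f e = σ)).card := by
  set E := (Finset.powersetCard 2 (Finset.univ : Finset (Fin n))).filter (fun e => f e = σ)
    with hE
  have h1 : ∑ v : Fin n, (Nbr f σ v).card = ∑ v : Fin n, ∑ e ∈ E, if v ∈ e then 1 else 0 := by
    refine Finset.sum_congr rfl fun v _ => ?_
    rw [deg_eq_incidence f σ v, Finset.card_filter]
  rw [h1, Finset.sum_comm]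
  have h2 : ∀ e ∈ E, (∑ v : Fin n, if v ∈ e then 1 else 0) = 2 := by
    intro e he
    have hcard : e.card = 2 := by
      simp only [hE, Finset.mem_filter, Finset.mem_powersetCard] at he
      exact he.1.2
    rw [Finset.sum_ite_mem, Finset.univ_inter, Finset.sum_const, hcard, smul_eq_mul, mul_one]
  rw [Finset.sum_congr rfl h2, Finset.sum_const, smul_eq_mul, mul_comm]

lemma endgame {f : Finset (Fin n) → ℤ} {σ : ℤ}
    (hf : ∀ e ∈ Finset.powersetCard 2 (Finset.univ : Finset (Fin n)), f e = -1 ∨ f e = 1)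
    (hσ : σ = 1 ∨ σ = -1)
    (H : ∀ S ∈ Finset.powersetCard 4 (Finset.univ : Finset (Fin n)),
        (∑ e ∈ Finset.powersetCard 2 S, f e) ≠ 0)
    (htf : ∀ p q r : Fin n, p ≠ q → p ≠ r → q ≠ r →
        f {p,q} = σ → f {p,r} = σ → f {q,r} = σ → False)
    (hge : (if n % 4 = 0 then n + 1 else n) ≤
        ((Finset.powersetCard 2 (Finset.univ : Finset (Fin n))).filter
          (fun e => f e = σ)).card) : False := by
  have hdeg := deg_le_two hf hσ H htf
  have hhs := handshake f σ
  set m := ((Finset.powersetCard 2 (Finset.univ : Finset (Fin n))).filter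
    (fun e => f e = σ)).card with hm
  have hle : ∑ v : Fin n, (Nbr f σ v).card ≤ 2 * n := by
    calc ∑ v : Fin n, (Nbr f σ v).card ≤ ∑ _v : Fin n, 2 :=
          Finset.sum_le_sum (fun v _ => hdeg v)
      _ = 2 * n := by rw [Finset.sum_const, Finset.card_univ, Fintype.card_fin, smul_eq_mul,
            mul_comm]
  by_cases h4 : n % 4 = 0
  · rw [if_pos h4] at hge
    omega
  · rw [if_neg h4] at hge
    have hreg : ∀ v : Fin n, (Nbr f σ v).card = 2 := by
      by_contra hex
      push_neg at hex
      obtain ⟨v, hv⟩ := hex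
      have hlt : ∑ v : Fin n, (Nbr f σ v).card < ∑ _v : Fin n, 2 :=
        Finset.sum_lt_sum (fun i _ => hdeg i)
          ⟨v, Finset.mem_univ v, lt_of_le_of_ne (hdeg v) hv⟩
      rw [Finset.sum_const, Finset.card_univ, Fintype.card_fin, smul_eq_mul] at hlt
      omega
    obtain ⟨k, hk⟩ := four_dvd_of_reg hf hσ H htf hreg
    omega

/-- For `n ≥ 5` and `g(n) = 2(n+1)` if `4 ∣ n`, `g(n) = 2n` otherwise: every weighting
`f : E(K_n) → {-1,1}` with `|∑ f| ≤ C(n,2) - g(n)` has a zero-sum copy of `K_4`. -/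
theorem zero_sum_K4_of_bounded_sum (n : ℕ) (hn : 5 ≤ n) (f : Finset (Fin n) → ℤ)
    (hf : ∀ e ∈ Finset.powersetCard 2 (Finset.univ : Finset (Fin n)), f e = -1 ∨ f e = 1)
    (hsum : |∑ e ∈ Finset.powersetCard 2 (Finset.univ : Finset (Fin n)), f e| ≤
      (n.choose 2 : ℤ) - (if n % 4 = 0 then 2 * ((n : ℤ) + 1) else 2 * (n : ℤ))) :
    ∃ S ∈ Finset.powersetCard 4 (Finset.univ : Finset (Fin n)),
      (∑ e ∈ Finset.powersetCard 2 S, f e) = 0 := by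
  by_contra hcon
  push_neg at hcon
  set Epos := (Finset.powersetCard 2 (Finset.univ : Finset (Fin n))).filter (fun e => f e = 1)
    with hEpos
  set Eneg := (Finset.powersetCard 2 (Finset.univ : Finset (Fin n))).filter (fun e => f e = -1)
    with hEneg
  have hEneg' : Eneg = (Finset.powersetCard 2 (Finset.univ : Finset (Fin n))).filter
      (fun e => ¬ f e = 1) := by
    apply Finset.filter_congr
    intro e he
    rcases hf e he with h | h <;> simp [h]
  have hcards : Epos.card + Eneg.card = n.choose 2 := by
    rw [hEpos, hEneg', Finset.card_filter_add_card_filter_not,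
      Finset.card_powersetCard, Finset.card_univ, Fintype.card_fin]
  have hsplit : ∑ e ∈ Finset.powersetCard 2 (Finset.univ : Finset (Fin n)), f e =
      (Epos.card : ℤ) - (Eneg.card : ℤ) := by
    rw [← Finset.sum_filter_add_sum_filter_not
      (Finset.powersetCard 2 (Finset.univ : Finset (Fin n))) (fun e => f e = 1) f]
    rw [← hEpos, ← hEneg']
    have hpos_sum : ∑ e ∈ Epos, f e = (Epos.card : ℤ) := by
      rw [hEpos, Finset.sum_congr rfl (fun e he => (Finset.mem_filter.mp he).2),
        Finset.sum_const]
      simp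
    have hneg_sum : ∑ e ∈ Eneg, f e = -(Eneg.card : ℤ) := by
      rw [hEneg, Finset.sum_congr rfl (fun e he => (Finset.mem_filter.mp he).2),
        Finset.sum_const]
      simp
    rw [hpos_sum, hneg_sum]
    ring
  -- both color classes are large
  have hboth : (if n % 4 = 0 then n + 1 else n : ℕ) ≤ Epos.card ∧
      (if n % 4 = 0 then n + 1 else n : ℕ) ≤ Eneg.card := by
    rw [hsplit] at hsum
    rw [abs_le] at hsum
    by_cases h4 : n % 4 = 0 <;> simp only [h4, if_true, if_false, if_pos, if_neg] at hsum ⊢ <;>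
      constructor <;>
      · have := hcards
        omega
  -- select a triangle-free side σ
  by_cases hT : ∃ a b c : Fin n, a ≠ b ∧ a ≠ c ∧ b ≠ c ∧
      f {a,b} = -1 ∧ f {a,c} = -1 ∧ f {b,c} = -1
  · -- negative triangle exists, so positive side is triangle-free
    obtain ⟨a, b, c, hab, hac, hbc, tab, tac, tbc⟩ := hT
    have htf : ∀ p q r : Fin n, p ≠ q → p ≠ r → q ≠ r →
        f {p,q} = 1 → f {p,r} = 1 → f {q,r} = 1 → False := by
      intro p q r h1 h2 h3 v1 v2 v3
      exact noTriTri hf (Or.inr rfl) hcon hab hac hbc h1 h2 h3 tab tac tbc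
        (by rw [v1]; ring) (by rw [v2]; ring) (by rw [v3]; ring)
    exact endgame hf (Or.inl rfl) hcon htf hboth.1
  · push_neg at hT
    have htf : ∀ p q r : Fin n, p ≠ q → p ≠ r → q ≠ r →
        f {p,q} = -1 → f {p,r} = -1 → f {q,r} = -1 → False := by
      intro p q r h1 h2 h3 v1 v2 v3
      exact hT p q r h1 h2 h3 v1 v2 v3
    exact endgame hf (Or.inr rfl) hcon htf hboth.2
end

section
/- There are infinitely many positive integers n for which there exists a weighting f: E(K_n) → {-2, -1, 0, 1, 2} with ∑_{e ∈ E(K_n)} f(e) = 0 such that no 4-element subset of the vertices has edge weights summing to 0 (i.e., f is zero-sum-K_4 free). -/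
/-- Count of "cross" 2-subsets of `S` (one vertex satisfying `p`, one not). -/
lemma cross_card {V : Type*} [DecidableEq V] (S : Finset V) (p : V → Prop) [DecidablePred p] :
    ((S.powersetCard 2).filter fun e => (e.filter p).card = 1).card
      = (S.filter p).card * (S.filter fun v => ¬ p v).card := by
  rw [← Finset.card_product]
  refine (Finset.card_bij (fun x _ => ({x.1, x.2} : Finset V)) ?_ ?_ ?_).symm
  · rintro ⟨u, v⟩ hx
    simp only [Finset.mem_product, Finset.mem_filter] at hx
    obtain ⟨⟨huS, hup⟩, hvS, hvp⟩ := hx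
    have huv : u ≠ v := fun h => hvp (h ▸ hup)
    simp only [Finset.mem_filter, Finset.mem_powersetCard]
    refine ⟨⟨?_, ?_⟩, ?_⟩
    · intro w hw
      simp only [Finset.mem_insert, Finset.mem_singleton] at hw
      rcases hw with rfl | rfl <;> assumption
    · rw [Finset.card_insert_of_notMem (by simpa using huv), Finset.card_singleton]
    · have : ({u, v} : Finset V).filter p = {u} := by
        ext w
        simp only [Finset.mem_filter, Finset.mem_insert, Finset.mem_singleton]
        constructor
        · rintro ⟨rfl | rfl, hw⟩
          · rfl
          · exact absurd hw hvp
        · rintro rfl; exact ⟨Or.inl rfl, hup⟩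
      rw [this, Finset.card_singleton]
  · rintro ⟨u, v⟩ hx ⟨u', v'⟩ hx' heq
    simp only [Finset.mem_product, Finset.mem_filter] at hx hx'
    have heq' : ({u, v} : Finset V) = {u', v'} := heq
    have hu : u ∈ ({u', v'} : Finset V) := heq' ▸ Finset.mem_insert_self u {v}
    have hv : v ∈ ({u', v'} : Finset V) := heq' ▸ (by simp : v ∈ ({u, v} : Finset V))
    simp only [Finset.mem_insert, Finset.mem_singleton] at hu hv
    have hu' : u = u' := by
      rcases hu with h | h
      · exact h
      · exact absurd (h ▸ hx.1.2) hx'.2.2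
    have hv' : v = v' := by
      rcases hv with h | h
      · exact absurd (h ▸ hx.2.2) (by simpa [h] using hx'.1.2)
      · exact h
    simp [hu', hv']
  · intro e he
    simp only [Finset.mem_filter, Finset.mem_powersetCard] at he
    obtain ⟨⟨heS, hcard⟩, hfil⟩ := he
    have hneg : (e.filter fun v => ¬ p v).card = 1 := by
      have := Finset.card_filter_add_card_filter_not (s := e) (p := p)
      omega
    obtain ⟨u, hu⟩ := Finset.card_eq_one.mp hfil
    obtain ⟨v, hv⟩ := Finset.card_eq_one.mp hneg
    have huE : u ∈ e ∧ p u := by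
      have : u ∈ e.filter p := hu ▸ Finset.mem_singleton_self u
      simpa using this
    have hvE : v ∈ e ∧ ¬ p v := by
      have : v ∈ e.filter (fun v => ¬ p v) := hv ▸ Finset.mem_singleton_self v
      simpa using this
    refine ⟨⟨u, v⟩, ?_, ?_⟩
    · simp only [Finset.mem_product, Finset.mem_filter]
      exact ⟨⟨heS huE.1, huE.2⟩, heS hvE.1, hvE.2⟩
    · have hsub : ({u, v} : Finset V) ⊆ e := by
        intro w hw
        simp only [Finset.mem_insert, Finset.mem_singleton] at hw
        rcases hw with rfl | rfl
        exacts [huE.1, hvE.1]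
      have huv : u ≠ v := fun h => hvE.2 (h ▸ huE.2)
      show ({u, v} : Finset V) = e
      refine Finset.eq_of_subset_of_card_le hsub ?_
      rw [Finset.card_insert_of_notMem (by simpa using huv), Finset.card_singleton, hcard]

/-- The edge-sum over 2-subsets of `S` for the weighting `1 - 3·(cross)`. -/
lemma edge_sum {V : Type*} [DecidableEq V] (S : Finset V) (p : V → Prop) [DecidablePred p] :
    (∑ e ∈ S.powersetCard 2,
        (1 - 3 * (if (e.filter p).card = 1 then 1 else 0) : ℤ))
      = S.card.choose 2 - 3 * ((S.filter p).card * (S.filter fun v => ¬ p v).card) := by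
  rw [Finset.sum_sub_distrib, Finset.sum_const, ← Finset.mul_sum, Finset.sum_boole,
    Finset.card_powersetCard, cross_card]
  push_cast
  ring

def abseq : ℕ → ℕ × ℕ
  | 0 => (1, 5)
  | k + 1 => ((abseq k).2, 4 * (abseq k).2 + 1 - (abseq k).1)

lemma abseq_inv (k : ℕ) :
    (abseq k).1 ^ 2 + (abseq k).2 ^ 2 = 4 * (abseq k).1 * (abseq k).2 + (abseq k).1 + (abseq k).2
      ∧ 0 < (abseq k).1 ∧ (abseq k).1 < (abseq k).2 := by
  induction k with
  | zero => decide
  | succ k ih =>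
    obtain ⟨heq, ha, hab⟩ := ih
    set a := (abseq k).1 with hadef
    set b := (abseq k).2 with hbdef
    have h1 : abseq (k + 1) = (b, 4 * b + 1 - a) := rfl
    rw [h1]
    have hc : a + (4 * b + 1 - a) = 4 * b + 1 := by omega
    set c := 4 * b + 1 - a with hcdef
    refine ⟨?_, by omega, by omega⟩
    have hz : (a : ℤ) ^ 2 + (b : ℤ) ^ 2 = 4 * a * b + a + b := by exact_mod_cast heq
    have hcz : (a : ℤ) + c = 4 * b + 1 := by exact_mod_cast hc
    have : (b : ℤ) ^ 2 + (c : ℤ) ^ 2 = 4 * b * c + b + c := by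
      linear_combination hz + ((c : ℤ) - a) * hcz
    exact_mod_cast this

lemma abseq_mono : StrictMono (fun k => (abseq k).1 + (abseq k).2) := by
  apply strictMono_nat_of_lt_succ
  intro k
  obtain ⟨-, ha, hab⟩ := abseq_inv k
  show (abseq k).1 + (abseq k).2 < (abseq (k+1)).1 + (abseq (k+1)).2
  have : abseq (k + 1) = ((abseq k).2, 4 * (abseq k).2 + 1 - (abseq k).1) := rfl
  rw [this]
  omega

lemma mem_of_invariant (a b : ℕ) (heq : a ^ 2 + b ^ 2 = 4 * a * b + a + b)
    (ha : 0 < a) (hab : a < b) :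
    (a + b) ∈ {n : ℕ | 0 < n ∧ ∃ f : Finset (Fin n) → ℤ,
      (∀ e ∈ Finset.powersetCard 2 (Finset.univ : Finset (Fin n)),
        f e ∈ ({-2, -1, 0, 1, 2} : Set ℤ)) ∧
      (∑ e ∈ Finset.powersetCard 2 (Finset.univ : Finset (Fin n)), f e) = 0 ∧
      (∀ S ∈ Finset.powersetCard 4 (Finset.univ : Finset (Fin n)),
        (∑ e ∈ Finset.powersetCard 2 S, f e) ≠ 0)} := by
  set n := a + b with hn
  have hposn : 0 < n := by omega
  set p : Fin n → Prop := fun v => (v : ℕ) < a with hp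
  refine ⟨hposn, fun e => 1 - 3 * (if (e.filter p).card = 1 then 1 else 0), ?_, ?_, ?_⟩
  · intro e _
    dsimp only
    split <;> simp
  · rw [edge_sum]
    have hA : ((Finset.univ : Finset (Fin n)).filter p).card = a := by
      have han : a < n := by omega
      have : (Finset.univ : Finset (Fin n)).filter p = Finset.Iio (⟨a, han⟩ : Fin n) := by
        ext v
        simp [hp, Finset.mem_Iio, Fin.lt_def]
      rw [this, Fin.card_Iio]
    have hB : ((Finset.univ : Finset (Fin n)).filter fun v => ¬ p v).card = b := by
      have := Finset.card_filter_add_card_filter_not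
        (s := (Finset.univ : Finset (Fin n))) (p := p)
      simp only [Finset.card_univ, Fintype.card_fin] at this
      omega
    rw [hA, hB, Finset.card_univ, Fintype.card_fin]
    have hchoose : n.choose 2 = 3 * (a * b) := by
      obtain ⟨m, hm⟩ : ∃ m, n = m + 1 := ⟨n - 1, by omega⟩
      have hm' : a + b = m + 1 := hm
      have h2 : n * (n - 1) = 6 * (a * b) := by
        rw [hm, Nat.add_sub_cancel]
        have hz : ((m : ℤ) + 1) * m = 6 * (a * b) := by
          have h1 : (a : ℤ) ^ 2 + b ^ 2 = 4 * a * b + a + b := by exact_mod_cast heq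
          have h2' : (a : ℤ) + b = m + 1 := by exact_mod_cast hm'
          linear_combination h1 - ((a : ℤ) + b + m) * h2'
        exact_mod_cast hz
      rw [Nat.choose_two_right, h2, show 6 * (a * b) = 3 * (a * b) * 2 by ring,
        Nat.mul_div_cancel _ two_pos]
    rw [hchoose]
    push_cast
    ring
  · intro S hS
    rw [Finset.mem_powersetCard] at hS
    rw [edge_sum, hS.2]
    set i := (S.filter p).card with hi
    set j := (S.filter fun v => ¬ p v).card with hj
    have hij : i + j = 4 := by
      have := Finset.card_filter_add_card_filter_not (s := S) (p := p)
      omega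
    have hne : i * j ≠ 2 ∧ i * j ≤ 4 := by
      have hi4 : i ≤ 4 := by omega
      constructor
      · interval_cases i <;> omega
      · interval_cases i <;> omega
    intro hcontra
    norm_num [Nat.choose] at hcontra
    have h2 : ((i * j : ℕ) : ℤ) = 2 := by push_cast; linarith [hcontra]
    exact hne.1 (by exact_mod_cast h2)

/-- There are infinitely many positive integers `n` admitting a weighting
`f : E(K_n) → {-2,-1,0,1,2}` with total sum `0` and no zero-sum copy of `K_4`. -/
theorem zero_sum_K4_free_wide_range_exists :
    {n : ℕ | 0 < n ∧ ∃ f : Finset (Fin n) → ℤ,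
      (∀ e ∈ Finset.powersetCard 2 (Finset.univ : Finset (Fin n)),
        f e ∈ ({-2, -1, 0, 1, 2} : Set ℤ)) ∧
      (∑ e ∈ Finset.powersetCard 2 (Finset.univ : Finset (Fin n)), f e) = 0 ∧
      (∀ S ∈ Finset.powersetCard 4 (Finset.univ : Finset (Fin n)),
        (∑ e ∈ Finset.powersetCard 2 S, f e) ≠ 0)}.Infinite := by
  apply Set.infinite_of_injective_forall_mem
    (f := fun k : ℕ => (abseq k).1 + (abseq k).2) abseq_mono.injective
  intro k
  obtain ⟨heq, ha, hab⟩ := abseq_inv k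
  exact mem_of_invariant _ _ heq ha hab
end

section
/- Let f: E(K_n) → {-1, 1} be a weighting and let G_{-1} be the graph on the vertex set of K_n whose edges are exactly the edges e with f(e) = -1. Then f is zero-sum-K_4 free (no 4-element vertex subset has edge weights summing to 0) if and only if G_{-1} contains no induced subgraph on 4 vertices isomorphic to the star K_{1,3}, the disjoint union K_3 ∪ K_1 of a triangle and an isolated vertex, or the path P_3 with 3 edges. -/
private def A13 : Fin 4 → Fin 4 → Bool := fun i j => ((i == 0) != (j == 0))
private def A31 : Fin 4 → Fin 4 → Bool := fun i j => (i != j) && (i != 3) && (j != 3)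
private def AP : Fin 4 → Fin 4 → Bool := fun i j => (i.val + 1 == j.val) || (j.val + 1 == i.val)
private def M (p q r s t u : Bool) : Fin 4 → Fin 4 → Bool :=
  fun i j => ![![false,p,q,r],![p,false,s,t],![q,s,false,u],![r,t,u,false]] i j

private theorem core (p q r s t u : Bool)
    (h : p.toNat + q.toNat + r.toNat + s.toNat + t.toNat + u.toNat = 3) :
    (∃ σ : Fin 4 → Fin 4, Function.Injective σ ∧ ∀ i j, A13 i j = M p q r s t u (σ i) (σ j)) ∨
    (∃ σ : Fin 4 → Fin 4, Function.Injective σ ∧ ∀ i j, A31 i j = M p q r s t u (σ i) (σ j)) ∨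
    (∃ σ : Fin 4 → Fin 4, Function.Injective σ ∧ ∀ i j, AP i j = M p q r s t u (σ i) (σ j)) := by
  cases p <;> cases q <;> cases r <;> cases s <;> cases t <;> cases u
  · exact absurd h (by decide)
  · exact absurd h (by decide)
  · exact absurd h (by decide)
  · exact absurd h (by decide)
  · exact absurd h (by decide)
  · exact absurd h (by decide)
  · exact absurd h (by decide)
  · exact Or.inr (Or.inl ⟨![1,2,3,0], by decide, by decide⟩)
  · exact absurd h (by decide)
  · exact absurd h (by decide)
  · exact absurd h (by decide)
  · exact Or.inl ⟨![3,0,1,2], by decide, by decide⟩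
  · exact absurd h (by decide)
  · exact Or.inr (Or.inr ⟨![0,3,2,1], by decide, by decide⟩)
  · exact Or.inr (Or.inr ⟨![0,3,1,2], by decide, by decide⟩)
  · exact absurd h (by decide)
  · exact absurd h (by decide)
  · exact absurd h (by decide)
  · exact absurd h (by decide)
  · exact Or.inr (Or.inr ⟨![0,2,3,1], by decide, by decide⟩)
  · exact absurd h (by decide)
  · exact Or.inl ⟨![2,0,1,3], by decide, by decide⟩
  · exact Or.inr (Or.inr ⟨![0,2,1,3], by decide, by decide⟩)
  · exact absurd h (by decide)
  · exact absurd h (by decide)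
  · exact Or.inr (Or.inl ⟨![0,2,3,1], by decide, by decide⟩)
  · exact Or.inr (Or.inr ⟨![1,3,0,2], by decide, by decide⟩)
  · exact absurd h (by decide)
  · exact Or.inr (Or.inr ⟨![1,2,0,3], by decide, by decide⟩)
  · exact absurd h (by decide)
  · exact absurd h (by decide)
  · exact absurd h (by decide)
  · exact absurd h (by decide)
  · exact absurd h (by decide)
  · exact absurd h (by decide)
  · exact Or.inr (Or.inr ⟨![0,1,3,2], by decide, by decide⟩)
  · exact absurd h (by decide)
  · exact Or.inr (Or.inr ⟨![0,1,2,3], by decide, by decide⟩)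
  · exact Or.inl ⟨![1,0,2,3], by decide, by decide⟩
  · exact absurd h (by decide)
  · exact absurd h (by decide)
  · exact Or.inr (Or.inr ⟨![1,0,3,2], by decide, by decide⟩)
  · exact Or.inr (Or.inl ⟨![0,1,3,2], by decide, by decide⟩)
  · exact absurd h (by decide)
  · exact Or.inr (Or.inr ⟨![2,1,0,3], by decide, by decide⟩)
  · exact absurd h (by decide)
  · exact absurd h (by decide)
  · exact absurd h (by decide)
  · exact absurd h (by decide)
  · exact Or.inr (Or.inr ⟨![1,0,2,3], by decide, by decide⟩)
  · exact Or.inr (Or.inr ⟨![2,0,1,3], by decide, by decide⟩)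
  · exact absurd h (by decide)
  · exact Or.inr (Or.inl ⟨![0,1,2,3], by decide, by decide⟩)
  · exact absurd h (by decide)
  · exact absurd h (by decide)
  · exact absurd h (by decide)
  · exact Or.inl ⟨![0,1,2,3], by decide, by decide⟩
  · exact absurd h (by decide)
  · exact absurd h (by decide)
  · exact absurd h (by decide)
  · exact absurd h (by decide)
  · exact absurd h (by decide)
  · exact absurd h (by decide)
  · exact absurd h (by decide)

private lemma Mspec_aux (p q r s t u : Bool) (P : Fin 4 → Fin 4 → Prop)
    (h01 : P 0 1 ↔ p = true) (h02 : P 0 2 ↔ q = true) (h03 : P 0 3 ↔ r = true)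
    (h12 : P 1 2 ↔ s = true) (h13 : P 1 3 ↔ t = true) (h23 : P 2 3 ↔ u = true)
    (hsymm : ∀ k l, P k l ↔ P l k) (hirr : ∀ k, ¬ P k k) :
    ∀ k l, (M p q r s t u k l = true) ↔ P k l := by
  intro k l
  fin_cases k <;> fin_cases l <;>
    first
      | exact iff_of_false (by simp [M]) (hirr _)
      | exact h01.symm
      | exact h02.symm
      | exact h03.symm
      | exact h12.symm
      | exact h13.symm
      | exact h23.symm
      | exact h01.symm.trans (hsymm 0 1)
      | exact h02.symm.trans (hsymm 0 2)
      | exact h03.symm.trans (hsymm 0 3)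
      | exact h12.symm.trans (hsymm 1 2)
      | exact h13.symm.trans (hsymm 1 3)
      | exact h23.symm.trans (hsymm 2 3)

private lemma fpair_eq {α : Type*} [DecidableEq α] {x y z w : α} :
    ({x, y} : Finset α) = {z, w} ↔ x = z ∧ y = w ∨ x = w ∧ y = z := by
  rw [← Finset.coe_inj]
  push_cast
  exact Set.pair_eq_pair_iff

private lemma sum6 {α : Type*} [DecidableEq α] (g : Finset α → ℤ) (a b c d : α)
    (hab : a ≠ b) (hac : a ≠ c) (had : a ≠ d) (hbc : b ≠ c) (hbd : b ≠ d) (hcd : c ≠ d) :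
    ∑ e ∈ Finset.powersetCard 2 ({a,b,c,d} : Finset α), g e
      = g {a,b} + g {a,c} + g {a,d} + g {b,c} + g {b,d} + g {c,d} := by
  have h1 : Finset.powersetCard 2 ({a,b,c,d} : Finset α)
      = {{a,b},{a,c},{a,d},{b,c},{b,d},{c,d}} := by
    ext e
    simp only [Finset.mem_powersetCard, Finset.mem_insert, Finset.mem_singleton]
    constructor
    · rintro ⟨hsub, hcard⟩
      obtain ⟨x, y, hxy, rfl⟩ := Finset.card_eq_two.1 hcard
      have hx : x ∈ ({a,b,c,d} : Finset α) := hsub (by simp)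
      have hy : y ∈ ({a,b,c,d} : Finset α) := hsub (by simp)
      simp only [Finset.mem_insert, Finset.mem_singleton] at hx hy
      rcases hx with rfl|rfl|rfl|rfl <;> rcases hy with rfl|rfl|rfl|rfl <;>
        simp_all [fpair_eq]
    · rintro (rfl|rfl|rfl|rfl|rfl|rfl) <;>
        exact ⟨by simp [Finset.insert_subset_iff], Finset.card_pair ‹_›⟩
  rw [h1]
  have n1 : ({a,b} : Finset α) ∉ ({{a,c},{a,d},{b,c},{b,d},{c,d}} : Finset (Finset α)) := by
    simp [fpair_eq, hab, hac, had, hbc, hbd, hcd, hab.symm, hac.symm, had.symm, hbc.symm, hbd.symm, hcd.symm]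
  have n2 : ({a,c} : Finset α) ∉ ({{a,d},{b,c},{b,d},{c,d}} : Finset (Finset α)) := by
    simp [fpair_eq, hab, hac, had, hbc, hbd, hcd, hab.symm, hac.symm, had.symm, hbc.symm, hbd.symm, hcd.symm]
  have n3 : ({a,d} : Finset α) ∉ ({{b,c},{b,d},{c,d}} : Finset (Finset α)) := by
    simp [fpair_eq, hab, hac, had, hbc, hbd, hcd, hab.symm, hac.symm, had.symm, hbc.symm, hbd.symm, hcd.symm]
  have n4 : ({b,c} : Finset α) ∉ ({{b,d},{c,d}} : Finset (Finset α)) := by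
    simp [fpair_eq, hab, hac, had, hbc, hbd, hcd, hab.symm, hac.symm, had.symm, hbc.symm, hbd.symm, hcd.symm]
  have n5 : ({b,d} : Finset α) ∉ ({{c,d}} : Finset (Finset α)) := by
    simp [fpair_eq, hab, hac, had, hbc, hbd, hcd, hab.symm, hac.symm, had.symm, hbc.symm, hbd.symm, hcd.symm]
  rw [Finset.sum_insert n1, Finset.sum_insert n2, Finset.sum_insert n3,
    Finset.sum_insert n4, Finset.sum_insert n5, Finset.sum_singleton]
  ring

private lemma card4' {α : Type*} [DecidableEq α] {a b c d : α}
    (hab : a ≠ b) (hac : a ≠ c) (had : a ≠ d) (hbc : b ≠ c) (hbd : b ≠ d) (hcd : c ≠ d) :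
    ({a,b,c,d} : Finset α).card = 4 := by
  rw [Finset.card_insert_of_notMem (by simp [hab, hac, had]),
    Finset.card_insert_of_notMem (by simp [hbc, hbd]),
    Finset.card_insert_of_notMem (by simp [hcd]), Finset.card_singleton]

private lemma card_eq_four' {α : Type*} [DecidableEq α] {s : Finset α} (h : s.card = 4) :
    ∃ a b c d : α, a ≠ b ∧ a ≠ c ∧ a ≠ d ∧ b ≠ c ∧ b ≠ d ∧ c ≠ d ∧ s = {a,b,c,d} := by
  obtain ⟨a, t, hat, rfl, ht⟩ := Finset.card_eq_succ.1 h
  obtain ⟨b, c, d, hbc, hbd, hcd, rfl⟩ := Finset.card_eq_three.1 ht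
  simp only [Finset.mem_insert, Finset.mem_singleton, not_or] at hat
  exact ⟨a, b, c, d, hat.1, hat.2.1, hat.2.2, hbc, hbd, hcd, rfl⟩

private def e13 : Fin 1 ⊕ Fin 3 → Fin 4 := Sum.elim (fun _ => 0) Fin.succ
private def e31 : Fin 3 ⊕ Fin 1 → Fin 4 := Sum.elim Fin.castSucc (fun _ => 3)

private lemma e13_inj : Function.Injective e13 := by decide
private lemma e31_inj : Function.Injective e31 := by decide

private lemma starAdj (x y : Fin 1 ⊕ Fin 3) :
    (completeBipartiteGraph (Fin 1) (Fin 3)).Adj x y ↔ A13 (e13 x) (e13 y) = true := by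
  rcases x with x | x <;> rcases y with y | y <;>
    fin_cases x <;> fin_cases y <;> simp [completeBipartiteGraph_adj, A13, e13] <;> decide

private lemma triAdj (x y : Fin 3 ⊕ Fin 1) :
    (((⊤ : SimpleGraph (Fin 3)) ⊕g (⊥ : SimpleGraph (Fin 1)))).Adj x y ↔
      A31 (e31 x) (e31 y) = true := by
  rcases x with x | x <;> rcases y with y | y <;>
    fin_cases x <;> fin_cases y <;>
      simp [SimpleGraph.sum_adj, A31, e31] <;> decide

private lemma pathAdj (x y : Fin 4) :
    (SimpleGraph.pathGraph 4).Adj x y ↔ AP x y = true := by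
  rw [SimpleGraph.pathGraph_adj]
  simp [AP]

/-- A weighting `f : E(K_n) → {-1,1}` is zero-sum-`K₄` free if and only if the graph `G₋₁`
of `(-1)`-edges has no induced subgraph isomorphic to `K_{1,3}`, `K₃ ∪ K₁` or `P₃`. -/
theorem zero_sum_K4_free_iff_induced_free (n : ℕ) (f : Finset (Fin n) → ℤ)
    (hf : ∀ e ∈ Finset.powersetCard 2 (Finset.univ : Finset (Fin n)), f e = -1 ∨ f e = 1)
    (G : SimpleGraph (Fin n))
    (hG : ∀ u v : Fin n, G.Adj u v ↔ u ≠ v ∧ f ({u, v} : Finset (Fin n)) = -1) :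
    (∀ S ∈ Finset.powersetCard 4 (Finset.univ : Finset (Fin n)),
        (∑ e ∈ Finset.powersetCard 2 S, f e) ≠ 0) ↔
    (¬ Nonempty (completeBipartiteGraph (Fin 1) (Fin 3) ↪g G) ∧
     ¬ Nonempty (((⊤ : SimpleGraph (Fin 3)) ⊕g (⊥ : SimpleGraph (Fin 1))) ↪g G) ∧
     ¬ Nonempty (SimpleGraph.pathGraph 4 ↪g G)) := by
  have hmem : ∀ u v : Fin n, u ≠ v → f {u,v} = -1 ∨ f {u,v} = 1 := fun u v huv =>
    hf _ (Finset.mem_powersetCard.2 ⟨Finset.subset_univ _, Finset.card_pair huv⟩)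
  have hadj : ∀ u v : Fin n, u ≠ v → (G.Adj u v ↔ f {u,v} = -1) := by
    intro u v huv; rw [hG]; simp [huv]
  have hfval : ∀ u v : Fin n, u ≠ v →
      f {u,v} = 1 - 2 * (if f {u,v} = -1 then (1:ℤ) else 0) := by
    intro u v huv; rcases hmem u v huv with h | h <;> rw [h] <;> norm_num
  have hsum : ∀ a b c d : Fin n, a ≠ b → a ≠ c → a ≠ d → b ≠ c → b ≠ d → c ≠ d →
      ∑ e ∈ Finset.powersetCard 2 ({a,b,c,d} : Finset (Fin n)), f e
        = 6 - 2 * ((if f {a,b} = -1 then (1:ℤ) else 0) + (if f {a,c} = -1 then (1:ℤ) else 0)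
          + (if f {a,d} = -1 then (1:ℤ) else 0) + (if f {b,c} = -1 then (1:ℤ) else 0)
          + (if f {b,d} = -1 then (1:ℤ) else 0) + (if f {c,d} = -1 then (1:ℤ) else 0)) := by
    intro a b c d hab hac had hbc hbd hcd
    rw [sum6 f a b c d hab hac had hbc hbd hcd]
    nth_rewrite 1 [hfval a b hab, hfval a c hac, hfval a d had, hfval b c hbc,
      hfval b d hbd, hfval c d hcd]
    ring
  have hmem4 : ∀ a b c d : Fin n, a ≠ b → a ≠ c → a ≠ d → b ≠ c → b ≠ d → c ≠ d →
      ({a,b,c,d} : Finset (Fin n)) ∈ Finset.powersetCard 4 (Finset.univ : Finset (Fin n)) :=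
    fun a b c d hab hac had hbc hbd hcd =>
      Finset.mem_powersetCard.2 ⟨Finset.subset_univ _, card4' hab hac had hbc hbd hcd⟩
  constructor
  · intro hL
    refine ⟨?_, ?_, ?_⟩
    · rintro ⟨e⟩
      set a := e (Sum.inl 0) with ha
      set b := e (Sum.inr 0) with hb
      set c := e (Sum.inr 1) with hc
      set d := e (Sum.inr 2) with hd
      have hab : a ≠ b := fun h => by simpa using e.injective h
      have hac : a ≠ c := fun h => by simpa using e.injective h
      have had : a ≠ d := fun h => by simpa using e.injective h
      have hbc : b ≠ c := fun h => by simpa using e.injective h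
      have hbd : b ≠ d := fun h => by simpa using e.injective h
      have hcd : c ≠ d := fun h => by simpa using e.injective h
      have fab : f {a,b} = -1 := (hadj a b hab).1 (e.map_rel_iff.2 (by simp))
      have fac : f {a,c} = -1 := (hadj a c hac).1 (e.map_rel_iff.2 (by simp))
      have fad : f {a,d} = -1 := (hadj a d had).1 (e.map_rel_iff.2 (by simp))
      have fbc : f {b,c} = 1 := (hmem b c hbc).resolve_left
        (fun h => by simpa using e.map_rel_iff.1 ((hadj b c hbc).2 h))
      have fbd : f {b,d} = 1 := (hmem b d hbd).resolve_left
        (fun h => by simpa using e.map_rel_iff.1 ((hadj b d hbd).2 h))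
      have fcd : f {c,d} = 1 := (hmem c d hcd).resolve_left
        (fun h => by simpa using e.map_rel_iff.1 ((hadj c d hcd).2 h))
      have := hL _ (hmem4 a b c d hab hac had hbc hbd hcd)
      rw [hsum a b c d hab hac had hbc hbd hcd] at this
      norm_num [fab, fac, fad, fbc, fbd, fcd] at this
    · rintro ⟨e⟩
      set a := e (Sum.inl 0) with ha
      set b := e (Sum.inl 1) with hb
      set c := e (Sum.inl 2) with hc
      set d := e (Sum.inr 0) with hd
      have hab : a ≠ b := fun h => by simpa using e.injective h
      have hac : a ≠ c := fun h => by simpa using e.injective h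
      have had : a ≠ d := fun h => by simpa using e.injective h
      have hbc : b ≠ c := fun h => by simpa using e.injective h
      have hbd : b ≠ d := fun h => by simpa using e.injective h
      have hcd : c ≠ d := fun h => by simpa using e.injective h
      have fab : f {a,b} = -1 := (hadj a b hab).1 (e.map_rel_iff.2 (by simp))
      have fac : f {a,c} = -1 := (hadj a c hac).1 (e.map_rel_iff.2 (by simp))
      have fbc : f {b,c} = -1 := (hadj b c hbc).1 (e.map_rel_iff.2 (by simp))
      have fad : f {a,d} = 1 := (hmem a d had).resolve_left
        (fun h => by simpa using e.map_rel_iff.1 ((hadj a d had).2 h))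
      have fbd : f {b,d} = 1 := (hmem b d hbd).resolve_left
        (fun h => by simpa using e.map_rel_iff.1 ((hadj b d hbd).2 h))
      have fcd : f {c,d} = 1 := (hmem c d hcd).resolve_left
        (fun h => by simpa using e.map_rel_iff.1 ((hadj c d hcd).2 h))
      have := hL _ (hmem4 a b c d hab hac had hbc hbd hcd)
      rw [hsum a b c d hab hac had hbc hbd hcd] at this
      norm_num [fab, fac, fad, fbc, fbd, fcd] at this
    · rintro ⟨e⟩
      set a := e 0 with ha
      set b := e 1 with hb
      set c := e 2 with hc
      set d := e 3 with hd
      have hab : a ≠ b := fun h => by simpa using e.injective h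
      have hac : a ≠ c := fun h => by simpa using e.injective h
      have had : a ≠ d := fun h => by simpa using e.injective h
      have hbc : b ≠ c := fun h => by simpa using e.injective h
      have hbd : b ≠ d := fun h => by simpa using e.injective h
      have hcd : c ≠ d := fun h => by simpa using e.injective h
      have fab : f {a,b} = -1 := (hadj a b hab).1 (e.map_rel_iff.2 (by
        rw [SimpleGraph.pathGraph_adj]; decide))
      have fbc : f {b,c} = -1 := (hadj b c hbc).1 (e.map_rel_iff.2 (by
        rw [SimpleGraph.pathGraph_adj]; decide))
      have fcd : f {c,d} = -1 := (hadj c d hcd).1 (e.map_rel_iff.2 (by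
        rw [SimpleGraph.pathGraph_adj]; decide))
      have fac : f {a,c} = 1 := (hmem a c hac).resolve_left
        (fun h => by have := e.map_rel_iff.1 ((hadj a c hac).2 h);
                     rw [SimpleGraph.pathGraph_adj] at this; exact absurd this (by decide))
      have fad : f {a,d} = 1 := (hmem a d had).resolve_left
        (fun h => by have := e.map_rel_iff.1 ((hadj a d had).2 h);
                     rw [SimpleGraph.pathGraph_adj] at this; exact absurd this (by decide))
      have fbd : f {b,d} = 1 := (hmem b d hbd).resolve_left
        (fun h => by have := e.map_rel_iff.1 ((hadj b d hbd).2 h);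
                     rw [SimpleGraph.pathGraph_adj] at this; exact absurd this (by decide))
      have := hL _ (hmem4 a b c d hab hac had hbc hbd hcd)
      rw [hsum a b c d hab hac had hbc hbd hcd] at this
      norm_num [fab, fac, fad, fbc, fbd, fcd] at this
  · rintro ⟨h1, h2, h3⟩ S hS h0
    rw [Finset.mem_powersetCard] at hS
    obtain ⟨a, b, c, d, hab, hac, had, hbc, hbd, hcd, rfl⟩ := card_eq_four' hS.2
    rw [hsum a b c d hab hac had hbc hbd hcd] at h0
    set p : Bool := decide (f {a,b} = -1) with hp
    set q : Bool := decide (f {a,c} = -1) with hq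
    set r : Bool := decide (f {a,d} = -1) with hr
    set s : Bool := decide (f {b,c} = -1) with hs
    set t : Bool := decide (f {b,d} = -1) with ht
    set u : Bool := decide (f {c,d} = -1) with hu
    have hip : (if f {a,b} = -1 then (1:ℤ) else 0) = p.toNat := by
      rw [hp]; by_cases h : f {a,b} = -1 <;> simp [h]
    have hiq : (if f {a,c} = -1 then (1:ℤ) else 0) = q.toNat := by
      rw [hq]; by_cases h : f {a,c} = -1 <;> simp [h]
    have hir : (if f {a,d} = -1 then (1:ℤ) else 0) = r.toNat := by
      rw [hr]; by_cases h : f {a,d} = -1 <;> simp [h]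
    have his : (if f {b,c} = -1 then (1:ℤ) else 0) = s.toNat := by
      rw [hs]; by_cases h : f {b,c} = -1 <;> simp [h]
    have hit : (if f {b,d} = -1 then (1:ℤ) else 0) = t.toNat := by
      rw [ht]; by_cases h : f {b,d} = -1 <;> simp [h]
    have hiu : (if f {c,d} = -1 then (1:ℤ) else 0) = u.toNat := by
      rw [hu]; by_cases h : f {c,d} = -1 <;> simp [h]
    rw [hip, hiq, hir, his, hit, hiu] at h0
    have hcount : p.toNat + q.toNat + r.toNat + s.toNat + t.toNat + u.toNat = 3 := by
      have := h0
      push_cast at this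
      omega
    -- the map Fin 4 → Fin n and the key adjacency description
    set v : Fin 4 → Fin n := ![a,b,c,d] with hv
    have hvinj : Function.Injective v := by
      intro i j
      fin_cases i <;> fin_cases j <;> intro hij <;>
        first
          | rfl
          | exact absurd hij hab | exact absurd hij hac | exact absurd hij had
          | exact absurd hij hbc | exact absurd hij hbd | exact absurd hij hcd
          | exact absurd hij hab.symm | exact absurd hij hac.symm
          | exact absurd hij had.symm | exact absurd hij hbc.symm
          | exact absurd hij hbd.symm | exact absurd hij hcd.symm
    have Mspec : ∀ k l : Fin 4, (M p q r s t u k l = true) ↔ G.Adj (v k) (v l) := by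
      refine Mspec_aux p q r s t u (fun k l => G.Adj (v k) (v l)) ?_ ?_ ?_ ?_ ?_ ?_
        (fun k l => G.adj_comm _ _) (fun k => G.irrefl)
      · rw [hp]; exact (hadj a b hab).trans decide_eq_true_iff.symm
      · rw [hq]; exact (hadj a c hac).trans decide_eq_true_iff.symm
      · rw [hr]; exact (hadj a d had).trans decide_eq_true_iff.symm
      · rw [hs]; exact (hadj b c hbc).trans decide_eq_true_iff.symm
      · rw [ht]; exact (hadj b d hbd).trans decide_eq_true_iff.symm
      · rw [hu]; exact (hadj c d hcd).trans decide_eq_true_iff.symm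
    rcases core p q r s t u hcount with ⟨σ, hσ, hpat⟩ | ⟨σ, hσ, hpat⟩ | ⟨σ, hσ, hpat⟩
    · exact h1 ⟨⟨⟨fun x => v (σ (e13 x)), hvinj.comp (hσ.comp e13_inj)⟩,
        fun {x y} => by
          rw [Function.Embedding.coeFn_mk, ← Mspec, ← hpat, ← starAdj]⟩⟩
    · exact h2 ⟨⟨⟨fun x => v (σ (e31 x)), hvinj.comp (hσ.comp e31_inj)⟩,
        fun {x y} => by
          rw [Function.Embedding.coeFn_mk, ← Mspec, ← hpat, ← triAdj]⟩⟩
    · exact h3 ⟨⟨⟨fun x => v (σ x), hvinj.comp hσ⟩,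
        fun {x y} => by
          rw [Function.Embedding.coeFn_mk, ← Mspec, ← hpat, ← pathAdj]⟩⟩
end

section
/- Let h(n) = n+1 if n ≡ 0 (mod 4) and h(n) = n otherwise. If G is a graph on n vertices that is triangle-free, contains no induced subgraph isomorphic to the star K_{1,3}, and contains no induced subgraph isomorphic to the path P_3 with 3 edges, then G has at most h(n) − 1 edges. -/
section Aux

open Finset SimpleGraph

variable {n : ℕ} (G : SimpleGraph (Fin n)) [DecidableRel G.Adj]

/-- no common neighbor of adjacent pair (triangle-free reformulation) -/
lemma aux_nadj (ht : G.CliqueFree 3) {x y z : Fin n} (hxy : G.Adj x y) (hxz : G.Adj x z) :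
    ¬ G.Adj y z := fun h => ht {x, y, z} (is3Clique_triple_iff.2 ⟨hxy, hxz, h⟩)

lemma aux_deg_le_two (ht : G.CliqueFree 3)
    (hstar : ¬ Nonempty (completeBipartiteGraph (Fin 1) (Fin 3) ↪g G)) (v : Fin n) :
    G.degree v ≤ 2 := by
  by_contra h
  push_neg at h
  obtain ⟨t, hts, htc⟩ := Finset.exists_subset_card_eq (s := G.neighborFinset v) (n := 3) h
  obtain ⟨a, b, c, hab, hac, hbc, rfl⟩ := Finset.card_eq_three.mp htc
  have ha : G.Adj v a := (mem_neighborFinset ..).1 (hts (by simp))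
  have hb : G.Adj v b := (mem_neighborFinset ..).1 (hts (by simp))
  have hc : G.Adj v c := (mem_neighborFinset ..).1 (hts (by simp))
  refine hstar ⟨⟨⟨Sum.elim (fun _ => v) ![a, b, c], ?_⟩, ?_⟩⟩
  · rintro (x | x) (y | y) h
    · simp [Fin.eq_zero x, Fin.eq_zero y]
    · simp only [Sum.elim_inl, Sum.elim_inr] at h
      exact absurd h (by fin_cases y <;> simp [ha.ne, hb.ne, hc.ne])
    · simp only [Sum.elim_inl, Sum.elim_inr] at h
      exact absurd h.symm (by fin_cases x <;> simp [ha.ne, hb.ne, hc.ne])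
    · simp only [Sum.elim_inr] at h
      congr
      fin_cases x <;> fin_cases y <;> simp_all
  · rintro (x | x) (y | y)
    · simp; exact G.loopless.irrefl v
    · simp only [RelEmbedding.coe_mk, Function.Embedding.coeFn_mk, Sum.elim_inl, Sum.elim_inr,
        completeBipartiteGraph_adj]
      constructor
      · intro; simp
      · intro; fin_cases y <;> [exact ha; exact hb; exact hc]
    · simp only [RelEmbedding.coe_mk, Function.Embedding.coeFn_mk, Sum.elim_inl, Sum.elim_inr,
        completeBipartiteGraph_adj]
      constructor
      · intro; simp
      · intro; fin_cases x <;> [exact ha.symm; exact hb.symm; exact hc.symm]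
    · simp only [RelEmbedding.coe_mk, Function.Embedding.coeFn_mk, Sum.elim_inr,
        completeBipartiteGraph_adj]
      change G.Adj (![a, b, c] x) (![a, b, c] y) ↔ _
      constructor
      · intro h
        exact absurd h (by fin_cases x <;> fin_cases y <;>
          simp [aux_nadj G ht ha hb, aux_nadj G ht ha hc, aux_nadj G ht hb hc,
            aux_nadj G ht hb ha, aux_nadj G ht hc ha, aux_nadj G ht hc hb])
      · simp

/-- build a P3 (path on 4 vertices) embedding from an induced path c-a-v-b -/
lemma aux_path (hpath : ¬ Nonempty (SimpleGraph.pathGraph 4 ↪g G))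
    {v a b c : Fin n} (hca : G.Adj c a) (hav : G.Adj a v) (hvb : G.Adj v b)
    (hcv : ¬ G.Adj c v) (hcb : ¬ G.Adj c b) (hab : ¬ G.Adj a b)
    (hcv' : c ≠ v) (hcb' : c ≠ b) (hab' : a ≠ b) : False := by
  have hvc : ¬ G.Adj v c := fun h => hcv h.symm
  have hbc : ¬ G.Adj b c := fun h => hcb h.symm
  have hba : ¬ G.Adj b a := fun h => hab h.symm
  refine hpath ⟨⟨⟨![c, a, v, b], ?_⟩, ?_⟩⟩
  · intro x y h
    fin_cases x <;> fin_cases y <;>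
      simp_all [hca.ne, hav.ne, hvb.ne, hca.ne', hav.ne', hvb.ne', hcv', hcb', hab',
        hcv'.symm, hcb'.symm, hab'.symm]
  · intro x y
    change G.Adj (![c, a, v, b] x) (![c, a, v, b] y) ↔ _
    fin_cases x <;> fin_cases y <;>
      simp [pathGraph_adj, hca, hav, hvb, hca.symm, hav.symm, hvb.symm,
        hcv, hcb, hab, hvc, hbc, hba] <;> decide

lemma aux_struct (ht : G.CliqueFree 3)
    (hpath : ¬ Nonempty (SimpleGraph.pathGraph 4 ↪g G))
    (hreg : ∀ v, G.degree v = 2) (v : Fin n) :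
    ∃ a b c : Fin n, a ≠ b ∧ v ≠ c ∧
      G.neighborFinset v = {a, b} ∧ G.neighborFinset a = {v, c} ∧
      G.neighborFinset b = {v, c} ∧ G.neighborFinset c = {a, b} := by
  obtain ⟨a, b, hab, hN⟩ := Finset.card_eq_two.mp (hreg v)
  have hva : G.Adj v a := (mem_neighborFinset ..).1 (hN ▸ by simp)
  have hvb : G.Adj v b := (mem_neighborFinset ..).1 (hN ▸ by simp)
  have hnab : ¬ G.Adj a b := aux_nadj G ht hva hvb
  have hvmem : v ∈ G.neighborFinset a := (mem_neighborFinset ..).2 hva.symm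
  have h1 : ((G.neighborFinset a).erase v).card = 1 := by
    rw [Finset.card_erase_of_mem hvmem, G.card_neighborFinset_eq_degree, hreg]
  obtain ⟨c, hc⟩ := Finset.card_eq_one.mp h1
  have hcv : c ≠ v := Finset.ne_of_mem_erase (hc ▸ Finset.mem_singleton_self c)
  have hNa : G.neighborFinset a = {v, c} := by
    rw [← Finset.insert_erase hvmem, hc]
  have hac : G.Adj a c := (mem_neighborFinset ..).1 (hNa ▸ by simp)
  have hcb' : c ≠ b := fun h => hnab (h ▸ hac)
  have hca' : c ≠ a := fun h => (G.loopless.irrefl a (h ▸ hac)).elim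
  have hnvc : ¬ G.Adj v c := fun h => by
    have := (mem_neighborFinset ..).2 h
    rw [hN] at this
    simp only [Finset.mem_insert, Finset.mem_singleton] at this
    rcases this with h' | h'
    · exact hca' h'
    · exact hcb' h' 
  have hbc : G.Adj b c := by
    by_contra hnbc
    exact aux_path G hpath hac.symm hva.symm hvb (fun h => hnvc h.symm)
      (fun h => hnbc h.symm) hnab hcv hcb' hab
  have hNb : G.neighborFinset b = {v, c} := by
    apply (Finset.eq_of_subset_of_card_le _ _).symm
    · intro x hx
      simp only [Finset.mem_insert, Finset.mem_singleton] at hx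
      rcases hx with rfl | rfl
      · exact (mem_neighborFinset ..).2 hvb.symm
      · exact (mem_neighborFinset ..).2 hbc
    · rw [G.card_neighborFinset_eq_degree, hreg,
        Finset.card_insert_of_notMem (by simp [Ne.symm hcv]), Finset.card_singleton]
  have hNc : G.neighborFinset c = {a, b} := by
    apply (Finset.eq_of_subset_of_card_le _ _).symm
    · intro x hx
      simp only [Finset.mem_insert, Finset.mem_singleton] at hx
      rcases hx with rfl | rfl
      · exact (mem_neighborFinset ..).2 hac.symm
      · exact (mem_neighborFinset ..).2 hbc.symm
    · rw [G.card_neighborFinset_eq_degree, hreg,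
        Finset.card_insert_of_notMem (by simp [hab]), Finset.card_singleton]
  exact ⟨a, b, c, hab, Ne.symm hcv, hN, hNa, hNb, hNc⟩

/-- the closed 2-ball around a vertex -/
def tball (v : Fin n) : Finset (Fin n) :=
  Finset.univ.filter (fun u => u = v ∨ G.Adj v u ∨ ∃ w, G.Adj v w ∧ G.Adj w u)

lemma mem_tball {v u : Fin n} :
    u ∈ tball G v ↔ u = v ∨ G.Adj v u ∨ ∃ w, G.Adj v w ∧ G.Adj w u := by
  simp [tball]

lemma tball_eq {x p q r : Fin n} (h1 : G.neighborFinset x = {p, q})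
    (h2 : G.neighborFinset p = {x, r}) (h3 : G.neighborFinset q = {x, r}) :
    tball G x = {x, p, q, r} := by
  have e1 : ∀ w, G.Adj x w ↔ (w = p ∨ w = q) := fun w => by
    rw [← mem_neighborFinset, h1]; simp
  have e2 : ∀ w, G.Adj p w ↔ (w = x ∨ w = r) := fun w => by
    rw [← mem_neighborFinset, h2]; simp
  have e3 : ∀ w, G.Adj q w ↔ (w = x ∨ w = r) := fun w => by
    rw [← mem_neighborFinset, h3]; simp
  ext u
  simp only [mem_tball, Finset.mem_insert, Finset.mem_singleton, e1]
  constructor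
  · rintro (rfl | h | ⟨w, (rfl | rfl), hw⟩)
    · exact Or.inl rfl
    · tauto
    · rcases (e2 u).1 hw with rfl | rfl <;> tauto
    · rcases (e3 u).1 hw with rfl | rfl <;> tauto
  · have hxp : G.Adj x p := (e1 p).2 (Or.inl rfl)
    have hxq : G.Adj x q := (e1 q).2 (Or.inr rfl)
    have hpr : G.Adj p r := (e2 r).2 (Or.inr rfl)
    rintro (rfl | rfl | rfl | rfl)
    · exact Or.inl rfl
    · tauto
    · tauto
    · exact Or.inr (Or.inr ⟨p, Or.inl rfl, hpr⟩)

lemma aux_key (ht : G.CliqueFree 3)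
    (hpath : ¬ Nonempty (SimpleGraph.pathGraph 4 ↪g G))
    (hreg : ∀ v, G.degree v = 2) (v : Fin n) :
    (tball G v).card = 4 ∧ ∀ u ∈ tball G v, tball G u = tball G v := by
  obtain ⟨a, b, c, hab, hvc, hNv, hNa, hNb, hNc⟩ := aux_struct G ht hpath hreg v
  have hva : G.Adj v a := (mem_neighborFinset ..).1 (hNv ▸ by simp)
  have hvb : G.Adj v b := (mem_neighborFinset ..).1 (hNv ▸ by simp)
  have hac : G.Adj a c := (mem_neighborFinset ..).1 (hNa ▸ by simp)
  have hbc : G.Adj b c := (mem_neighborFinset ..).1 (hNb ▸ by simp)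
  have hv : tball G v = {v, a, b, c} := tball_eq G hNv hNa hNb
  have ha : tball G a = {a, v, c, b} := tball_eq G hNa hNv hNc
  have hb : tball G b = {b, v, c, a} :=
    tball_eq G hNb (by rw [hNv, Finset.pair_comm]) (by rw [hNc, Finset.pair_comm])
  have hc : tball G c = {c, a, b, v} :=
    tball_eq G hNc (by rw [hNa, Finset.pair_comm]) (by rw [hNb, Finset.pair_comm])
  have hset : ∀ u : Fin n, u ∈ ({a, v, c, b} : Finset (Fin n)) ↔ u ∈ ({v, a, b, c} : Finset (Fin n)) := by
    intro u; simp only [Finset.mem_insert, Finset.mem_singleton]; tauto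
  have hset2 : ∀ u : Fin n, u ∈ ({b, v, c, a} : Finset (Fin n)) ↔ u ∈ ({v, a, b, c} : Finset (Fin n)) := by
    intro u; simp only [Finset.mem_insert, Finset.mem_singleton]; tauto
  have hset3 : ∀ u : Fin n, u ∈ ({c, a, b, v} : Finset (Fin n)) ↔ u ∈ ({v, a, b, c} : Finset (Fin n)) := by
    intro u; simp only [Finset.mem_insert, Finset.mem_singleton]; tauto
  constructor
  · rw [hv, Finset.card_insert_of_notMem (by simp [hva.ne, hvb.ne, hvc]),
      Finset.card_insert_of_notMem (by simp [hab, hac.ne]),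
      Finset.card_insert_of_notMem (by simp [hbc.ne]), Finset.card_singleton]
  · intro u hu
    rw [hv] at hu ⊢
    simp only [Finset.mem_insert, Finset.mem_singleton] at hu
    rcases hu with rfl | rfl | rfl | rfl
    · rw [hv]
    · rw [ha]; exact Finset.ext hset
    · rw [hb]; exact Finset.ext hset2
    · rw [hc]; exact Finset.ext hset3

lemma aux_dvd (ht : G.CliqueFree 3)
    (hpath : ¬ Nonempty (SimpleGraph.pathGraph 4 ↪g G))
    (hreg : ∀ v, G.degree v = 2) : 4 ∣ n := by
  have key := aux_key G ht hpath hreg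
  have hn : (Finset.univ : Finset (Fin n)).card =
      ∑ B ∈ Finset.univ.image (tball G), (Finset.univ.filter (fun v => tball G v = B)).card :=
    Finset.card_eq_sum_card_fiberwise (fun x _ => Finset.mem_image_of_mem _ (Finset.mem_univ x))
  have hfib : ∀ B ∈ Finset.univ.image (tball G),
      (Finset.univ.filter (fun v => tball G v = B)).card = 4 := by
    intro B hB
    obtain ⟨v, -, rfl⟩ := Finset.mem_image.mp hB
    have hfe : Finset.univ.filter (fun u => tball G u = tball G v) = tball G v := by
      ext u
      simp only [Finset.mem_filter, Finset.mem_univ, true_and]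
      constructor
      · intro h; rw [← h]; exact (mem_tball G).2 (Or.inl rfl)
      · exact (key v).2 u
    rw [hfe]
    exact (key v).1
  rw [Finset.sum_congr rfl hfib, Finset.sum_const, smul_eq_mul, Finset.card_univ,
    Fintype.card_fin] at hn
  exact ⟨(Finset.univ.image (tball G)).card, by omega⟩

end Aux

/-- If `G` is a triangle-free graph on `n` vertices with no induced `K_{1,3}` and no
induced `P₃`, then `G` has at most `h(n) - 1` edges, where `h(n) = n+1` if `4 ∣ n` and
`h(n) = n` otherwise. -/
theorem edge_bound_of_K13_K3_P3_free (n : ℕ) (G : SimpleGraph (Fin n))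
    [Fintype G.edgeSet]
    (htriangle : G.CliqueFree 3)
    (hstar : ¬ Nonempty (completeBipartiteGraph (Fin 1) (Fin 3) ↪g G))
    (hpath : ¬ Nonempty (SimpleGraph.pathGraph 4 ↪g G)) :
    G.edgeFinset.card ≤ (if n % 4 = 0 then n + 1 else n) - 1 := by
  classical
  have hdeg : ∀ v, G.degree v ≤ 2 := aux_deg_le_two G htriangle hstar
  have hinst : (@SimpleGraph.edgeFinset _ G G.fintypeEdgeSet) = G.edgeFinset := by
    congr 1
    exact Subsingleton.elim _ _
  have hsum : ∑ v, G.degree v = 2 * G.edgeFinset.card := by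
    rw [← hinst]
    exact G.sum_degrees_eq_twice_card_edges
  have hle : ∑ v, G.degree v ≤ 2 * n := by
    calc ∑ v, G.degree v ≤ ∑ _v : Fin n, 2 := Finset.sum_le_sum (fun i _ => hdeg i)
    _ = 2 * n := by simp [mul_comm]
  have hEn : G.edgeFinset.card ≤ n := by omega
  by_cases h4 : n % 4 = 0
  · rw [if_pos h4]
    omega
  · rw [if_neg h4]
    by_contra hcon
    push_neg at hcon
    have hE : G.edgeFinset.card = n := by omega
    have hreg : ∀ v, G.degree v = 2 := by
      by_contra hh
      push_neg at hh
      obtain ⟨v, hv⟩ := hh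
      have hlt : ∑ w, G.degree w < ∑ _w : Fin n, 2 :=
        Finset.sum_lt_sum (fun i _ => hdeg i) ⟨v, Finset.mem_univ v, lt_of_le_of_ne (hdeg v) hv⟩
      have : ∑ _w : Fin n, 2 = 2 * n := by simp [mul_comm]
      omega
    obtain ⟨k, hk⟩ := aux_dvd G htriangle hpath hreg
    omega
end

section
/- Let h(n) = n+1 if n ≡ 0 (mod 4) and h(n) = n otherwise, and let G be a graph on n vertices that is triangle-free, contains no induced subgraph isomorphic to the star K_{1,3}, and contains no induced subgraph isomorphic to the path P_3 with 3 edges. Then G has exactly h(n) − 1 edges if and only if G is isomorphic to the disjoint union J ∪ C_4 ∪ … ∪ C_4 of ⌊n/4⌋ copies of the 4-cycle C_4 together with a graph J that is empty, a single vertex K_1, a single edge K_2, or a path P_2 with 2 edges. -/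
open SimpleGraph

namespace C4P
variable {V : Type} {G : SimpleGraph V}

lemma tri_free (ht : G.CliqueFree 3) {a b c : V} (h1 : G.Adj a b) (h2 : G.Adj b c)
    (h3 : G.Adj a c) : False := by
  classical
  exact (ht {a,b,c}) (SimpleGraph.is3Clique_triple_iff.mpr ⟨h1, h3, h2⟩)

lemma two_nbrs (ht : G.CliqueFree 3)
    (hstar : ¬ Nonempty (completeBipartiteGraph (Fin 1) (Fin 3) ↪g G))
    {v a b c : V} (ha : G.Adj v a) (hb : G.Adj v b) (hc : G.Adj v c) :
    a = b ∨ b = c ∨ a = c := by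
  by_contra h
  push_neg at h
  obtain ⟨hab, hbc, hac⟩ := h
  have nab : ¬ G.Adj a b := fun h' => tri_free ht ha h' hb
  have nbc : ¬ G.Adj b c := fun h' => tri_free ht hb h' hc
  have nac : ¬ G.Adj a c := fun h' => tri_free ht ha h' hc
  have nba : ¬ G.Adj b a := fun h' => nab h'.symm
  have ncb : ¬ G.Adj c b := fun h' => nbc h'.symm
  have nca : ¬ G.Adj c a := fun h' => nac h'.symm
  have hva := ha.ne
  have hvb := hb.ne
  have hvc := hc.ne
  refine hstar ⟨⟨⟨Sum.elim (fun _ => v) ![a,b,c], ?_⟩, ?_⟩⟩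
  · rintro (x|x) (y|y) hxy
    · simp [Subsingleton.elim x y]
    · exfalso; fin_cases x <;> fin_cases y <;> simp_all
    · exfalso; fin_cases x <;> fin_cases y <;> simp_all
    · fin_cases x <;> fin_cases y <;> simp_all
  · rintro (x|x) (y|y) <;> fin_cases x <;> fin_cases y <;>
      erw [Function.Embedding.coeFn_mk] <;>
      simp [completeBipartiteGraph, ha, hb, hc, ha.symm, hb.symm, hc.symm,
        nab, nbc, nac, nba, ncb, nca]

lemma no_P4 (hpath : ¬ Nonempty (SimpleGraph.pathGraph 4 ↪g G))
    {a b c d : V} (hab : G.Adj a b) (hbc : G.Adj b c) (hcd : G.Adj c d)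
    (nac : ¬ G.Adj a c) (nad : ¬ G.Adj a d) (nbd : ¬ G.Adj b d)
    (hac : a ≠ c) (had : a ≠ d) (hbd : b ≠ d) : False := by
  have nca : ¬ G.Adj c a := fun h => nac h.symm
  have nda : ¬ G.Adj d a := fun h => nad h.symm
  have ndb : ¬ G.Adj d b := fun h => nbd h.symm
  have h1 := hab.ne
  have h2 := hbc.ne
  have h3 := hcd.ne
  refine hpath ⟨⟨⟨![a,b,c,d], ?_⟩, ?_⟩⟩
  · intro x y hxy
    fin_cases x <;> fin_cases y <;> simp_all
  · intro x y
    fin_cases x <;> fin_cases y <;>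
      erw [Function.Embedding.coeFn_mk] <;>
      simp [pathGraph_adj, hab, hbc, hcd, hab.symm, hbc.symm, hcd.symm,
        nac, nad, nbd, nca, nda, ndb] <;> decide

lemma peel [Fintype V] {c : ℕ} (f : Fin c ↪ V) (H : SimpleGraph (Fin c))
    (hadj : ∀ i j, H.Adj i j ↔ G.Adj (f i) (f j))
    (hcl : ∀ (i : Fin c) (y : V), y ∉ Set.range ⇑f → ¬ G.Adj (f i) y) :
    Nonempty ((H ⊕g G.induce (Set.range ⇑f)ᶜ) ≃g G) := by
  classical
  have inj : Function.Injective
      (Sum.elim (⇑f) (Subtype.val : ((Set.range ⇑f)ᶜ : Set V) → V)) := by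
    rintro (i|x) (j|y) hxy
    · simpa using f.injective (by simpa using hxy)
    · exact absurd ⟨i, hxy⟩ y.2
    · exact absurd ⟨j, hxy.symm⟩ x.2
    · simpa using Subtype.ext (by simpa using hxy)
  have surj : Function.Surjective
      (Sum.elim (⇑f) (Subtype.val : ((Set.range ⇑f)ᶜ : Set V) → V)) := by
    intro x
    by_cases hx : x ∈ Set.range ⇑f
    · obtain ⟨i, hi⟩ := hx; exact ⟨Sum.inl i, hi⟩
    · exact ⟨Sum.inr ⟨x, hx⟩, rfl⟩
  refine ⟨{ toEquiv := Equiv.ofBijective _ ⟨inj, surj⟩, map_rel_iff' := ?_ }⟩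
  rintro (i|x) (j|y)
  · erw [Equiv.coe_ofBijective]; simpa using (hadj i j).symm
  · erw [Equiv.coe_ofBijective]; simpa using fun h => (hcl i y y.2 h).elim
  · erw [Equiv.coe_ofBijective]; simpa using fun h => (hcl j x x.2 h.symm).elim
  · simp [Equiv.ofBijective, SimpleGraph.comap]

abbrev Bgr (k : ℕ) : SimpleGraph (Fin k × Fin 4) :=
  (⊥ : SimpleGraph (Fin k)) □ SimpleGraph.cycleGraph 4

def isoSumCongr {α β γ δ : Type} {G1 : SimpleGraph α} {H1 : SimpleGraph β}
    {G2 : SimpleGraph γ} {H2 : SimpleGraph δ} (e1 : G1 ≃g H1) (e2 : G2 ≃g H2) :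
    (G1 ⊕g G2) ≃g (H1 ⊕g H2) :=
  ⟨Equiv.sumCongr e1.toEquiv e2.toEquiv, by
    rintro (u|u) (v|v) <;> simp [e1.map_rel_iff, e2.map_rel_iff]⟩

def isoSumEmpty {α β : Type} [IsEmpty β] {G : SimpleGraph α} (H : SimpleGraph β) :
    (G ⊕g H) ≃g G :=
  ⟨Equiv.sumEmpty α β, by rintro (u|u) (v|v) <;> first | exact isEmptyElim u | skip
    <;> first | exact isEmptyElim v | simp⟩

def c4cons (k : ℕ) : (SimpleGraph.cycleGraph 4 ⊕g Bgr k) ≃g Bgr (k+1) := by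
  refine ⟨⟨Sum.elim (fun j => ((0 : Fin (k+1)), j)) (fun p => (p.1.succ, p.2)),
    fun p => Fin.cases (Sum.inl p.2) (fun i' => Sum.inr (i', p.2)) p.1, ?_, ?_⟩, ?_⟩
  · rintro (j|⟨i,j⟩) <;> simp
  · rintro ⟨i, j⟩
    induction i using Fin.cases <;> simp
  · rintro (u|⟨iu,u⟩) (v|⟨iv,v⟩) <;>
      simp [SimpleGraph.boxProd_adj, Fin.succ_ne_zero, (Fin.succ_ne_zero _).symm,
        Fin.succ_inj, and_comm]

lemma card_edgeSet_congr {α : Type} (G : SimpleGraph α) (i1 i2 : Fintype G.edgeSet) :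
    @Fintype.card _ i1 = @Fintype.card _ i2 := by congr!

lemma edgeFinset_card (G : SimpleGraph V) [Fintype G.edgeSet] :
    G.edgeFinset.card = Fintype.card G.edgeSet := Set.toFinset_card _

lemma edge_card_iso {α β : Type} {G : SimpleGraph α} {H : SimpleGraph β}
    [Fintype G.edgeSet] [Fintype H.edgeSet] (e : G ≃g H) :
    G.edgeFinset.card = H.edgeFinset.card := by
  rw [edgeFinset_card, edgeFinset_card]
  exact Fintype.card_congr e.mapEdgeSet

lemma edge_card_sum {α β : Type} [Fintype α] [Fintype β] (G : SimpleGraph α) (H : SimpleGraph β)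
    [Fintype G.edgeSet] [Fintype H.edgeSet] [Fintype (G ⊕g H).edgeSet] :
    (G ⊕g H).edgeFinset.card = G.edgeFinset.card + H.edgeFinset.card := by
  classical
  letI : DecidableRel G.Adj := Classical.decRel _
  letI : DecidableRel H.Adj := Classical.decRel _
  letI : DecidableRel (G ⊕g H).Adj := Classical.decRel _
  rw [edgeFinset_card, edgeFinset_card, edgeFinset_card,
    card_edgeSet_congr (G ⊕g H) _ (SimpleGraph.fintypeEdgeSet _),
    card_edgeSet_congr G _ (SimpleGraph.fintypeEdgeSet _),
    card_edgeSet_congr H _ (SimpleGraph.fintypeEdgeSet _)]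
  have hdl : ∀ a : α, (G ⊕g H).degree (Sum.inl a) = G.degree a := by
    intro a
    have hn : (G ⊕g H).neighborFinset (Sum.inl a)
        = (G.neighborFinset a).map ⟨Sum.inl, Sum.inl_injective⟩ := by
      ext (x|x) <;> simp
    show ((G ⊕g H).neighborFinset _).card = (G.neighborFinset a).card
    rw [hn, Finset.card_map]
  have hdr : ∀ b : β, (G ⊕g H).degree (Sum.inr b) = H.degree b := by
    intro b
    have hn : (G ⊕g H).neighborFinset (Sum.inr b)
        = (H.neighborFinset b).map ⟨Sum.inr, Sum.inr_injective⟩ := by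
      ext (x|x) <;> simp
    show ((G ⊕g H).neighborFinset _).card = (H.neighborFinset b).card
    rw [hn, Finset.card_map]
  have h1 := SimpleGraph.sum_degrees_eq_twice_card_edges (G ⊕g H)
  have h2 := SimpleGraph.sum_degrees_eq_twice_card_edges G
  have h3 := SimpleGraph.sum_degrees_eq_twice_card_edges H
  rw [Fintype.sum_sum_type] at h1
  replace h1 : ∑ a, G.degree a + ∑ b, H.degree b = 2 * (@SimpleGraph.edgeFinset _ (G ⊕g H) (SimpleGraph.fintypeEdgeSet _)).card := by
    convert h1 using 3 with x _ x _
    · convert (hdl x).symm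
    · convert (hdr x).symm
  rw [edgeFinset_card] at h1 h2 h3
  omega

lemma e_bot (m : ℕ) [Fintype (⊥ : SimpleGraph (Fin m)).edgeSet] :
    (⊥ : SimpleGraph (Fin m)).edgeFinset.card = 0 := by
  simp

lemma e_top2 [Fintype (⊤ : SimpleGraph (Fin 2)).edgeSet] :
    (⊤ : SimpleGraph (Fin 2)).edgeFinset.card = 1 := by
  rw [edgeFinset_card, card_edgeSet_congr _ _ (SimpleGraph.fintypeEdgeSet _)]
  decide

lemma e_path3 [Fintype (SimpleGraph.pathGraph 3).edgeSet] :
    (SimpleGraph.pathGraph 3).edgeFinset.card = 2 := by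
  letI : DecidableRel (SimpleGraph.pathGraph 3).Adj :=
    fun a b => decidable_of_iff _ SimpleGraph.pathGraph_adj.symm
  rw [edgeFinset_card, card_edgeSet_congr _ _ (SimpleGraph.fintypeEdgeSet _)]
  decide

lemma e_cyc4 [Fintype (SimpleGraph.cycleGraph 4).edgeSet] :
    (SimpleGraph.cycleGraph 4).edgeFinset.card = 4 := by
  rw [edgeFinset_card, card_edgeSet_congr _ _ (SimpleGraph.fintypeEdgeSet _)]
  decide

lemma degree_congr {α : Type} (G : SimpleGraph α) (v : α) (i1 i2 : Fintype (G.neighborSet v)) :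
    @SimpleGraph.degree _ G v i1 = @SimpleGraph.degree _ G v i2 := by congr!

lemma e_Bgr (k : ℕ) [iE : Fintype (Bgr k).edgeSet] :
    (Bgr k).edgeFinset.card = 4 * k := by
  classical
  letI : DecidableRel (Bgr k).Adj := Classical.decRel _
  have h1 := SimpleGraph.sum_degrees_eq_twice_card_edges (Bgr k)
  have hd : ∀ x : Fin k × Fin 4, (Bgr k).degree x = 2 := by
    intro x
    have hn : (Bgr k).neighborFinset x
        = {x.1} ×ˢ (SimpleGraph.cycleGraph 4).neighborFinset x.2 := by
      ext ⟨a, b⟩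
      simp only [SimpleGraph.mem_neighborFinset, SimpleGraph.boxProd_adj, Finset.mem_product,
        Finset.mem_singleton, SimpleGraph.bot_adj, false_and, or_false]
      aesop
    show ((Bgr k).neighborFinset x).card = 2
    rw [hn, Finset.card_product, Finset.card_singleton, one_mul]
    exact SimpleGraph.cycleGraph_degree_three_le (n := 1) (v := x.2)
  have hd' : ∀ (x : Fin k × Fin 4) (i : Fintype ((Bgr k).neighborSet x)),
      @SimpleGraph.degree _ _ x i = 2 := fun x i => (degree_congr (Bgr k) x i _).trans (hd x)
  simp only [hd'] at h1
  simp only [Finset.sum_const, smul_eq_mul, Finset.card_univ, Fintype.card_prod,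
    Fintype.card_fin] at h1
  rw [edgeFinset_card] at h1 ⊢
  have hglue := card_edgeSet_congr (Bgr k) (SimpleGraph.fintypeEdgeSet _) iE
  omega

lemma ncard_edge (G : SimpleGraph V) [Fintype G.edgeSet] :
    Nat.card G.edgeSet = G.edgeFinset.card := by
  rw [edgeFinset_card, Nat.card_eq_fintype_card]

lemma step [Fintype V] (G : SimpleGraph V)
    (ht : G.CliqueFree 3)
    (hstar : ¬ Nonempty (completeBipartiteGraph (Fin 1) (Fin 3) ↪g G))
    (hpath : ¬ Nonempty (SimpleGraph.pathGraph 4 ↪g G))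
    {c : ℕ} (f : Fin c ↪ V) (H : SimpleGraph (Fin c))
    (hadj : ∀ i j, H.Adj i j ↔ G.Adj (f i) (f j))
    (hcl : ∀ (i : Fin c) (y : V), y ∉ Set.range ⇑f → ¬ G.Adj (f i) y) :
    ∃ (W : Type) (G' : SimpleGraph W), Finite W ∧
      Nat.card W = Fintype.card V - c ∧ c ≤ Fintype.card V ∧
      Nonempty ((H ⊕g G') ≃g G) ∧
      Nat.card G.edgeSet = Nat.card H.edgeSet + Nat.card G'.edgeSet ∧
      G'.CliqueFree 3 ∧
      (¬ Nonempty (completeBipartiteGraph (Fin 1) (Fin 3) ↪g G')) ∧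
      (¬ Nonempty (SimpleGraph.pathGraph 4 ↪g G')) := by
  classical
  obtain ⟨iso⟩ := peel f H hadj hcl
  set s : Set V := (Set.range ⇑f)ᶜ
  refine ⟨↥s, G.induce s, inferInstance, ?_, ?_, ⟨iso⟩, ?_, ?_, ?_, ?_⟩
  · rw [Nat.card_eq_fintype_card]
    show Fintype.card ↥((Set.range ⇑f)ᶜ) = Fintype.card V - c
    rw [Fintype.card_compl_set]
    congr 1
    rw [Set.card_range_of_injective f.injective, Fintype.card_fin]
  · calc c = Fintype.card (Fin c) := (Fintype.card_fin c).symm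
    _ ≤ Fintype.card V := Fintype.card_le_of_injective _ f.injective
  · have h1 : Nat.card G.edgeSet = Nat.card (H ⊕g G.induce s).edgeSet :=
      Nat.card_congr (SimpleGraph.Iso.mapEdgeSet iso).symm
    rw [h1, ncard_edge, ncard_edge, ncard_edge, edge_card_sum]
  · exact ht.comap (SimpleGraph.Embedding.induce s).isContained
  · exact fun ⟨e⟩ => hstar ⟨(SimpleGraph.Embedding.induce s).comp e⟩
  · exact fun ⟨e⟩ => hpath ⟨(SimpleGraph.Embedding.induce s).comp e⟩

def Good (n : ℕ) {W : Type} (G : SimpleGraph W) : Prop :=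
  Nonempty (G ≃g (Bgr (n/4) ⊕g (⊥ : SimpleGraph (Fin 0)))) ∨
  Nonempty (G ≃g (Bgr (n/4) ⊕g (⊥ : SimpleGraph (Fin 1)))) ∨
  Nonempty (G ≃g (Bgr (n/4) ⊕g (⊤ : SimpleGraph (Fin 2)))) ∨
  Nonempty (G ≃g (Bgr (n/4) ⊕g SimpleGraph.pathGraph 3))

lemma good_zero {W : Type} [IsEmpty W] (G : SimpleGraph W) : Good 0 G := by
  left
  haveI : IsEmpty (Fin (0/4)) := ⟨fun x => absurd x.isLt (by norm_num)⟩
  exact ⟨⟨Equiv.equivOfIsEmpty _ _, fun {a b} => isEmptyElim a⟩⟩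

lemma card_of_iso {W : Type} [Fintype W] {G : SimpleGraph W} {k m : ℕ} {J : SimpleGraph (Fin m)}
    (e : G ≃g (Bgr k ⊕g J)) : Fintype.card W = 4 * k + m := by
  have := Fintype.card_congr e.toEquiv
  simpa [Fintype.card_sum, mul_comm] using this

lemma good_c4 {n : ℕ} {W W' : Type} {G : SimpleGraph W} {G' : SimpleGraph W'}
    (h4 : 4 ≤ n) (hiso : Nonempty ((SimpleGraph.cycleGraph 4 ⊕g G') ≃g G))
    (hg : Good (n-4) G') : Good n G := by
  obtain ⟨iso⟩ := hiso
  have hm : (n-4)/4 + 1 = n/4 := by omega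
  have compose : ∀ {m : ℕ} {J : SimpleGraph (Fin m)},
      Nonempty (G' ≃g (Bgr ((n-4)/4) ⊕g J)) → Nonempty (G ≃g (Bgr (n/4) ⊕g J)) := by
    rintro m J ⟨e⟩
    have e2 : G ≃g (Bgr ((n-4)/4 + 1) ⊕g J) :=
      iso.symm.trans ((isoSumCongr (RelIso.refl _) e).trans
        ((SimpleGraph.Iso.sumAssoc).symm.trans
          (isoSumCongr (c4cons _) (RelIso.refl _))))
    exact ⟨hm ▸ e2⟩
  unfold Good at hg ⊢
  rcases hg with e|e|e|e
  · exact Or.inl (compose e)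
  · exact Or.inr (Or.inl (compose e))
  · exact Or.inr (Or.inr (Or.inl (compose e)))
  · exact Or.inr (Or.inr (Or.inr (compose e)))

lemma good_j {n k m : ℕ} {W W' : Type} {G : SimpleGraph W} {G' : SimpleGraph W'}
    {J : SimpleGraph (Fin m)}
    (hiso : Nonempty ((J ⊕g G') ≃g G))
    (e : G' ≃g (Bgr k ⊕g (⊥ : SimpleGraph (Fin 0)))) (hk : k = n/4) :
    Nonempty (G ≃g (Bgr (n/4) ⊕g J)) := by
  obtain ⟨iso⟩ := hiso
  subst hk
  exact ⟨iso.symm.trans ((isoSumCongr (RelIso.refl _)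
    (e.trans (isoSumEmpty _))).trans SimpleGraph.Iso.sumComm)⟩

def emb2 {V : Type} (v u : V) (h1 : v ≠ u) : Fin 2 ↪ V :=
  ⟨![v,u], by intro a b hab; fin_cases a <;> fin_cases b <;> simp_all⟩

@[simp] lemma emb2_apply {V : Type} (v u : V) (h1 : v ≠ u) (i : Fin 2) :
    emb2 v u h1 i = ![v,u] i := rfl

def emb3 {V : Type} (v u w : V) (h1 : v ≠ u) (h2 : v ≠ w) (h3 : u ≠ w) : Fin 3 ↪ V :=
  ⟨![v,u,w], by intro a b hab; fin_cases a <;> fin_cases b <;> simp_all⟩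

@[simp] lemma emb3_apply {V : Type} (v u w : V) (h1 : v ≠ u) (h2 : v ≠ w) (h3 : u ≠ w)
    (i : Fin 3) : emb3 v u w h1 h2 h3 i = ![v,u,w] i := rfl

def emb4 {V : Type} (v u w x : V) (h1 : v ≠ u) (h2 : v ≠ w) (h3 : v ≠ x) (h4 : u ≠ w)
    (h5 : u ≠ x) (h6 : w ≠ x) : Fin 4 ↪ V :=
  ⟨![v,u,w,x], by intro a b hab; fin_cases a <;> fin_cases b <;> simp_all⟩

@[simp] lemma emb4_apply {V : Type} (v u w x : V) (h1 : v ≠ u) (h2 : v ≠ w) (h3 : v ≠ x)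
    (h4 : u ≠ w) (h5 : u ≠ x) (h6 : w ≠ x) (i : Fin 4) :
    emb4 v u w x h1 h2 h3 h4 h5 h6 i = ![v,u,w,x] i := rfl

def hf (n : ℕ) : ℕ := (if n % 4 = 0 then n + 1 else n) - 1

theorem main (n : ℕ) : ∀ (V : Type) [Fintype V] (G : SimpleGraph V),
    Fintype.card V = n → G.CliqueFree 3 →
    (¬ Nonempty (completeBipartiteGraph (Fin 1) (Fin 3) ↪g G)) →
    (¬ Nonempty (SimpleGraph.pathGraph 4 ↪g G)) →
    Nat.card G.edgeSet ≤ hf n ∧ (Nat.card G.edgeSet = hf n → Good n G) := by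
  induction n using Nat.strong_induction_on with
  | _ n ih =>
  intro V _ G hcard ht hstar hpath
  classical
  rcases Nat.eq_zero_or_pos n with h0 | hpos
  · subst h0
    haveI : IsEmpty V := Fintype.card_eq_zero_iff.mp hcard
    have hE : Nat.card G.edgeSet = 0 := by
      haveI : IsEmpty G.edgeSet := by
        constructor
        rintro ⟨e, he⟩
        induction e using Sym2.ind with
        | _ a b => exact isEmptyElim a
      exact Nat.card_of_isEmpty
    exact ⟨by simp [hE, hf], fun _ => good_zero G⟩
  haveI : Nonempty V := Fintype.card_pos_iff.mp (by omega)
  by_cases hdeg0 : ∃ v, ∀ w, ¬ G.Adj v w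
  · -- isolated vertex: peel K1
    obtain ⟨v, hv⟩ := hdeg0
    let f : Fin 1 ↪ V := ⟨fun _ => v, fun a b _ => Subsingleton.elim a b⟩
    obtain ⟨W, G', hfin, hcW, hcle, ⟨iso⟩, hE, ht', hs', hp'⟩ :=
      step G ht hstar hpath f (⊥ : SimpleGraph (Fin 1))
        (by intro i j; simp only [SimpleGraph.bot_adj, false_iff]; exact hv v)
        (by intro i y _; exact hv y)
    haveI := Fintype.ofFinite W
    have hcard' : Fintype.card W = n - 1 := by
      rw [← Nat.card_eq_fintype_card]; omega
    have ihres := ih (n-1) (by omega) W G' hcard' ht' hs' hp'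
    have hH : Nat.card (⊥ : SimpleGraph (Fin 1)).edgeSet = 0 := by
      rw [ncard_edge]; simp
    have harith : hf (n-1) ≤ hf n := by unfold hf; split_ifs <;> omega
    refine ⟨by omega, fun hEq => ?_⟩
    have hmod : n % 4 = 1 := by
      have h1 := ihres.1
      unfold hf at h1 hEq
      split_ifs at h1 hEq <;> omega
    have hx : Nat.card G'.edgeSet = hf (n-1) := by
      have h1 := ihres.1
      unfold hf at h1 hEq ⊢
      split_ifs at h1 hEq ⊢ <;> omega
    have hg := ihres.2 hx
    have hcW' : Fintype.card W = n - 1 := hcard'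
    unfold Good at hg
    rcases hg with e|e|e|e
    · exact Or.inr (Or.inl (good_j ⟨iso⟩ e.some (by omega)))
    · exact absurd (card_of_iso e.some) (by rw [hcW']; omega)
    · exact absurd (card_of_iso e.some) (by rw [hcW']; omega)
    · exact absurd (card_of_iso e.some) (by rw [hcW']; omega)
  push_neg at hdeg0
  by_cases hdeg1 : ∃ v u, G.Adj v u ∧ ∀ w, G.Adj v w → w = u
  · obtain ⟨v, u, hvu, hv⟩ := hdeg1
    by_cases hu2 : ∃ w, G.Adj u w ∧ w ≠ v
    · -- P2 component: v - u - w
      obtain ⟨w, huw, hwv⟩ := hu2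
      have hwu : w ≠ u := fun h => G.irrefl (h ▸ huw)
      have nvw : ¬ G.Adj v w := fun h => hwu (hv w h)
      have nwv : ¬ G.Adj w v := fun h => nvw h.symm
      have hvw : v ≠ w := fun h => hwv h.symm
      have hvune : v ≠ u := hvu.ne
      have huwne : u ≠ w := huw.ne
      have hw : ∀ y, G.Adj w y → y = u := by
        intro y hwy
        by_contra hyu
        have hyv : y ≠ v := fun h => nwv (h ▸ hwy)
        have nvy : ¬ G.Adj v y := fun h => hyu (hv y h)
        have nuy : ¬ G.Adj u y := by
          intro h
          rcases two_nbrs ht hstar hvu.symm huw h with h' | h' | h'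
          · exact hvw h'
          · exact G.irrefl (h' ▸ hwy)
          · exact hyv h'.symm
        exact no_P4 hpath hvu huw hwy nvw nvy nuy hvw (Ne.symm hyv) (fun h => hyu h.symm)
      obtain ⟨W, G', hfin, hcW, hcle, ⟨iso⟩, hE, ht', hs', hp'⟩ :=
        step G ht hstar hpath (emb3 v u w hvune hvw huwne) (SimpleGraph.pathGraph 3)
          (by
            intro i j
            fin_cases i <;> fin_cases j <;>
              simp [SimpleGraph.pathGraph_adj, hvu, huw, hvu.symm, huw.symm, nvw, nwv])
          (by
            rintro i y hy
            fin_cases i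
            · exact fun h => hy ⟨1, (hv y h).symm⟩
            · intro h
              rcases two_nbrs ht hstar hvu.symm huw h with h' | h' | h'
              · exact hvw h'
              · exact hy ⟨2, h'⟩
              · exact hy ⟨0, h'⟩
            · exact fun h => hy ⟨1, (hw y h).symm⟩)
      haveI := Fintype.ofFinite W
      have hcard' : Fintype.card W = n - 3 := by
        rw [← Nat.card_eq_fintype_card]; omega
      have ihres := ih (n-3) (by omega) W G' hcard' ht' hs' hp'
      have hH : Nat.card (SimpleGraph.pathGraph 3).edgeSet = 2 := by
        rw [ncard_edge, e_path3]
      have harith : hf (n-3) + 2 ≤ hf n := by unfold hf; split_ifs <;> omega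
      refine ⟨by omega, fun hEq => ?_⟩
      have hn3 : 3 ≤ n := by omega
      have hmod : n % 4 = 3 := by
        have h1 := ihres.1
        unfold hf at h1 hEq
        split_ifs at h1 hEq <;> omega
      have hx : Nat.card G'.edgeSet = hf (n-3) := by
        have h1 := ihres.1
        unfold hf at h1 hEq ⊢
        split_ifs at h1 hEq ⊢ <;> omega
      have hg := ihres.2 hx
      unfold Good at hg
      rcases hg with e|e|e|e
      · exact Or.inr (Or.inr (Or.inr (good_j ⟨iso⟩ e.some (by omega))))
      · exact absurd (card_of_iso e.some) (by rw [hcard']; omega)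
      · exact absurd (card_of_iso e.some) (by rw [hcard']; omega)
      · exact absurd (card_of_iso e.some) (by rw [hcard']; omega)
    · -- K2 component: v - u
      push_neg at hu2
      have hvune : v ≠ u := hvu.ne
      obtain ⟨W, G', hfin, hcW, hcle, ⟨iso⟩, hE, ht', hs', hp'⟩ :=
        step G ht hstar hpath (emb2 v u hvune) (⊤ : SimpleGraph (Fin 2))
          (by
            intro i j
            fin_cases i <;> fin_cases j <;>
              simp [SimpleGraph.top_adj, hvu, hvu.symm, hvune, hvune.symm])
          (by
            rintro i y hy
            fin_cases i
            · exact fun h => hy ⟨1, (hv y h).symm⟩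
            · exact fun h => hy ⟨0, (hu2 y h).symm⟩)
      haveI := Fintype.ofFinite W
      have hcard' : Fintype.card W = n - 2 := by
        rw [← Nat.card_eq_fintype_card]; omega
      have ihres := ih (n-2) (by omega) W G' hcard' ht' hs' hp'
      have hH : Nat.card (⊤ : SimpleGraph (Fin 2)).edgeSet = 1 := by
        rw [ncard_edge, e_top2]
      have harith : hf (n-2) + 1 ≤ hf n := by unfold hf; split_ifs <;> omega
      refine ⟨by omega, fun hEq => ?_⟩
      have hmod : n % 4 = 2 := by
        have h1 := ihres.1
        unfold hf at h1 hEq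
        split_ifs at h1 hEq <;> omega
      have hx : Nat.card G'.edgeSet = hf (n-2) := by
        have h1 := ihres.1
        unfold hf at h1 hEq ⊢
        split_ifs at h1 hEq ⊢ <;> omega
      have hg := ihres.2 hx
      unfold Good at hg
      rcases hg with e|e|e|e
      · exact Or.inr (Or.inr (Or.inl (good_j ⟨iso⟩ e.some (by omega))))
      · exact absurd (card_of_iso e.some) (by rw [hcard']; omega)
      · exact absurd (card_of_iso e.some) (by rw [hcard']; omega)
      · exact absurd (card_of_iso e.some) (by rw [hcard']; omega)
  · -- all degrees ≥ 2: C4 component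
    push_neg at hdeg1
    obtain ⟨v⟩ := ‹Nonempty V›
    obtain ⟨a, ha⟩ := hdeg0 v
    obtain ⟨b, hb, hba⟩ := hdeg1 v a ha
    have nab : ¬ G.Adj a b := fun h => tri_free ht ha h hb
    have nba : ¬ G.Adj b a := fun h => nab h.symm
    obtain ⟨c, hac, hcv⟩ := hdeg1 a v ha.symm
    have hca : c ≠ a := fun h => G.irrefl (h ▸ hac)
    have hcb : c ≠ b := fun h => nab (h ▸ hac)
    have nvc : ¬ G.Adj v c := by
      intro h
      rcases two_nbrs ht hstar ha hb h with h' | h' | h'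
      · exact hba h'.symm
      · exact hcb h'.symm
      · exact hca h'.symm
    have ncv : ¬ G.Adj c v := fun h => nvc h.symm
    have hbc : G.Adj b c := by
      by_contra nbc
      exact no_P4 hpath hb.symm ha hac nba nbc nvc hba (fun h => hcb h.symm)
        (fun h => hcv h.symm)
    have hva : v ≠ a := ha.ne
    have hvb : v ≠ b := hb.ne
    have hvc : v ≠ c := Ne.symm hcv
    have hv' : ∀ y, G.Adj v y → y = a ∨ y = b := by
      intro y hy
      rcases two_nbrs ht hstar ha hb hy with h|h|h
      · exact (hba h.symm).elim
      · exact Or.inr h.symm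
      · exact Or.inl h.symm
    have ha' : ∀ y, G.Adj a y → y = v ∨ y = c := by
      intro y hy
      rcases two_nbrs ht hstar ha.symm hac hy with h|h|h
      · exact (hvc h).elim
      · exact Or.inr h.symm
      · exact Or.inl h.symm
    have hb' : ∀ y, G.Adj b y → y = v ∨ y = c := by
      intro y hy
      rcases two_nbrs ht hstar hb.symm hbc hy with h|h|h
      · exact (hvc h).elim
      · exact Or.inr h.symm
      · exact Or.inl h.symm
    have hc' : ∀ y, G.Adj c y → y = a ∨ y = b := by
      intro y hy
      rcases two_nbrs ht hstar hac.symm hbc.symm hy with h|h|h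
      · exact ((fun h' => hba h'.symm) h).elim
      · exact Or.inr h.symm
      · exact Or.inl h.symm
    have hab' : a ≠ b := fun h => hba h.symm
    have hacne : a ≠ c := Ne.symm hca
    obtain ⟨W, G', hfin, hcW, hcle, ⟨iso⟩, hE, ht', hs', hp'⟩ :=
      step G ht hstar hpath (emb4 v a c b hva hvc hvb hacne hab' hcb)
        (SimpleGraph.cycleGraph 4)
        (by
          intro i j
          fin_cases i <;> fin_cases j <;>
            simp [SimpleGraph.cycleGraph_adj, ha, hb, hac, hbc, ha.symm, hb.symm, hac.symm,
              hbc.symm, nvc, ncv, nab, nba] <;> decide)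
        (by
          rintro i y hy
          fin_cases i
          · intro h
            rcases hv' y h with h'|h'
            · exact hy ⟨1, h'.symm⟩
            · exact hy ⟨3, h'.symm⟩
          · intro h
            rcases ha' y h with h'|h'
            · exact hy ⟨0, h'.symm⟩
            · exact hy ⟨2, h'.symm⟩
          · intro h
            rcases hc' y h with h'|h'
            · exact hy ⟨1, h'.symm⟩
            · exact hy ⟨3, h'.symm⟩
          · intro h
            rcases hb' y h with h'|h'
            · exact hy ⟨0, h'.symm⟩
            · exact hy ⟨2, h'.symm⟩)
    haveI := Fintype.ofFinite W
    have h4n : 4 ≤ n := by omega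
    have hcard' : Fintype.card W = n - 4 := by
      rw [← Nat.card_eq_fintype_card]; omega
    have ihres := ih (n-4) (by omega) W G' hcard' ht' hs' hp'
    have hH : Nat.card (SimpleGraph.cycleGraph 4).edgeSet = 4 := by
      rw [ncard_edge, e_cyc4]
    have harith : hf (n-4) + 4 = hf n := by unfold hf; split_ifs <;> omega
    refine ⟨by omega, fun hEq => ?_⟩
    have hx : Nat.card G'.edgeSet = hf (n-4) := by omega
    exact good_c4 h4n ⟨iso⟩ (ihres.2 hx)

lemma good_edge_card {n : ℕ} {W : Type} [Fintype W] (G : SimpleGraph W) [Fintype G.edgeSet]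
    (hcard : Fintype.card W = n) (hg : Good n G) : G.edgeFinset.card = hf n := by
  classical
  unfold Good at hg
  have key : ∀ (m : ℕ) (J : SimpleGraph (Fin m)),
      Nonempty (G ≃g (Bgr (n/4) ⊕g J)) →
      G.edgeFinset.card = 4 * (n/4) + Nat.card J.edgeSet ∧ n = 4 * (n/4) + m := by
    rintro m J ⟨e⟩
    letI : DecidableRel J.Adj := Classical.decRel _
    letI : DecidableRel (Bgr (n/4)).Adj := Classical.decRel _
    letI : DecidableRel ((Bgr (n/4)) ⊕g J).Adj := Classical.decRel _
    constructor
    · have h1 : Nat.card G.edgeSet = Nat.card ((Bgr (n/4)) ⊕g J).edgeSet :=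
        Nat.card_congr e.mapEdgeSet
      rw [← ncard_edge G, h1, ncard_edge, edge_card_sum, e_Bgr, ncard_edge]
    · have h := card_of_iso e
      omega
  have hJ0 : ∀ m : ℕ, Nat.card (⊥ : SimpleGraph (Fin m)).edgeSet = 0 := by
    intro m
    rw [ncard_edge, e_bot]
  have hJ2 : Nat.card (⊤ : SimpleGraph (Fin 2)).edgeSet = 1 := by
    rw [ncard_edge, e_top2]
  have hJ3 : Nat.card (SimpleGraph.pathGraph 3).edgeSet = 2 := by
    letI : DecidableRel (SimpleGraph.pathGraph 3).Adj :=
      fun a b => decidable_of_iff _ SimpleGraph.pathGraph_adj.symm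
    rw [ncard_edge, e_path3]
  rcases hg with h|h|h|h
  · obtain ⟨h1, h2⟩ := key 0 _ h
    rw [h1, hJ0]
    unfold hf; split_ifs <;> omega
  · obtain ⟨h1, h2⟩ := key 1 _ h
    rw [h1, hJ0]
    unfold hf; split_ifs <;> omega
  · obtain ⟨h1, h2⟩ := key 2 _ h
    rw [h1, hJ2]
    unfold hf; split_ifs <;> omega
  · obtain ⟨h1, h2⟩ := key 3 _ h
    rw [h1, hJ3]
    unfold hf; split_ifs <;> omega

end C4P

/-- A triangle-free graph `G` on `n` vertices with no induced `K_{1,3}` and no induced `P₃`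
has exactly `h(n) - 1` edges if and only if `G` is isomorphic to the disjoint union of
`⌊n/4⌋` copies of `C₄` together with a graph `J ∈ {∅, K₁, K₂, P₂}`. -/
theorem edge_bound_extremal_iff (n : ℕ) (G : SimpleGraph (Fin n))
    [Fintype G.edgeSet]
    (htriangle : G.CliqueFree 3)
    (hstar : ¬ Nonempty (completeBipartiteGraph (Fin 1) (Fin 3) ↪g G))
    (hpath : ¬ Nonempty (SimpleGraph.pathGraph 4 ↪g G)) :
    G.edgeFinset.card = (if n % 4 = 0 then n + 1 else n) - 1 ↔
    (Nonempty (G ≃g (((⊥ : SimpleGraph (Fin (n / 4))) □ SimpleGraph.cycleGraph 4) ⊕g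
        (⊥ : SimpleGraph (Fin 0)))) ∨
     Nonempty (G ≃g (((⊥ : SimpleGraph (Fin (n / 4))) □ SimpleGraph.cycleGraph 4) ⊕g
        (⊥ : SimpleGraph (Fin 1)))) ∨
     Nonempty (G ≃g (((⊥ : SimpleGraph (Fin (n / 4))) □ SimpleGraph.cycleGraph 4) ⊕g
        (⊤ : SimpleGraph (Fin 2)))) ∨
     Nonempty (G ≃g (((⊥ : SimpleGraph (Fin (n / 4))) □ SimpleGraph.cycleGraph 4) ⊕g
        SimpleGraph.pathGraph 3))) := by
  have hb : G.edgeFinset.card = Nat.card G.edgeSet := (C4P.ncard_edge G).symm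
  constructor
  · intro hEq
    have := (C4P.main n (Fin n) G (Fintype.card_fin n) htriangle hstar hpath).2
      (by rw [← hb]; exact hEq)
    exact this
  · intro hg
    rw [C4P.good_edge_card G (Fintype.card_fin n) hg]
    rfl
end

section
/- Let n ≥ 5 and let f: E(K_n) → {-1, 1} be a weighting that is zero-sum-K_4 free (no 4-element vertex subset has edge weights summing to 0). Let G_{-1} and G_1 be the graphs on the vertex set of K_n whose edge sets are the edges of weight -1 and of weight 1, respectively. Then at least one of G_{-1} and G_1 is triangle-free. -/
theorem finset_pair_eq_pair_iff {α : Type*} [DecidableEq α] {a b c d : α} :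
    ({a, b} : Finset α) = {c, d} ↔ a = c ∧ b = d ∨ a = d ∧ b = c := by
  rw [← Finset.coe_inj]
  simp only [Finset.coe_insert, Finset.coe_singleton]
  exact Set.pair_eq_pair_iff

theorem six_sum {n : ℕ} (f : Finset (Fin n) → ℤ)
    (hfree : ∀ S ∈ Finset.powersetCard 4 (Finset.univ : Finset (Fin n)),
      (∑ e ∈ Finset.powersetCard 2 S, f e) ≠ 0)
    (p q r s : Fin n) (hpq : p ≠ q) (hpr : p ≠ r) (hps : p ≠ s)
    (hqr : q ≠ r) (hqs : q ≠ s) (hrs : r ≠ s) :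
    f {p,q} + f {p,r} + f {p,s} + f {q,r} + f {q,s} + f {r,s} ≠ 0 := by
  have hqp := hpq.symm; have hrp := hpr.symm; have hsp := hps.symm
  have hrq := hqr.symm; have hsq := hqs.symm; have hsr := hrs.symm
  have hmem : ({p, q, r, s} : Finset (Fin n)) ∈
      Finset.powersetCard 4 (Finset.univ : Finset (Fin n)) := by
    rw [Finset.mem_powersetCard]
    refine ⟨Finset.subset_univ _, ?_⟩
    rw [Finset.card_insert_of_notMem (by simp [hpq, hpr, hps]),
      Finset.card_insert_of_notMem (by simp [hqr, hqs]),
      Finset.card_insert_of_notMem (by simp [hrs]), Finset.card_singleton]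
  have key := hfree _ hmem
  have heq : Finset.powersetCard 2 ({p, q, r, s} : Finset (Fin n)) =
      {{p, q}, {p, r}, {p, s}, {q, r}, {q, s}, {r, s}} := by
    ext e
    simp only [Finset.mem_powersetCard, Finset.mem_insert, Finset.mem_singleton]
    constructor
    · rintro ⟨hsub, hcard⟩
      obtain ⟨x, y, hxy, rfl⟩ := Finset.card_eq_two.mp hcard
      have hx := hsub (Finset.mem_insert_self x {y})
      have hy : y ∈ ({p,q,r,s} : Finset (Fin n)) := hsub (by simp)
      simp only [Finset.mem_insert, Finset.mem_singleton] at hx hy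
      rcases hx with rfl|rfl|rfl|rfl <;> rcases hy with rfl|rfl|rfl|rfl <;>
        simp_all [Finset.pair_comm]
    · rintro (rfl|rfl|rfl|rfl|rfl|rfl) <;>
        refine ⟨by intro t ht; simp at ht ⊢; tauto,
          Finset.card_eq_two.mpr ⟨_, _, by assumption, rfl⟩⟩
  rw [heq] at key
  rw [Finset.sum_insert (by
        simp [finset_pair_eq_pair_iff, hpq, hpr, hps, hqr, hqs, hrs, hqp, hrp, hsp, hrq, hsq, hsr]),
    Finset.sum_insert (by
        simp [finset_pair_eq_pair_iff, hpq, hpr, hps, hqr, hqs, hrs, hqp, hrp, hsp, hrq, hsq, hsr]),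
    Finset.sum_insert (by
        simp [finset_pair_eq_pair_iff, hpq, hpr, hps, hqr, hqs, hrs, hqp, hrp, hsp, hrq, hsq, hsr]),
    Finset.sum_insert (by
        simp [finset_pair_eq_pair_iff, hpq, hpr, hps, hqr, hqs, hrs, hqp, hrp, hsp, hrq, hsq, hsr]),
    Finset.sum_insert (by
        simp [finset_pair_eq_pair_iff, hpq, hpr, hps, hqr, hqs, hrs, hqp, hrp, hsp, hrq, hsq, hsr]),
    Finset.sum_singleton] at key
  intro h; exact key (by linarith)

theorem edge_val {n : ℕ} (f : Finset (Fin n) → ℤ)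
    (hf : ∀ e ∈ Finset.powersetCard 2 (Finset.univ : Finset (Fin n)), f e = -1 ∨ f e = 1)
    {u v : Fin n} (huv : u ≠ v) :
    f {u, v} ≠ 0 ∧ -1 ≤ f {u, v} ∧ f {u, v} ≤ 1 := by
  have := hf {u, v} (by
    rw [Finset.mem_powersetCard]
    exact ⟨Finset.subset_univ _, Finset.card_pair huv⟩)
  rcases this with h | h <;> rw [h] <;> norm_num

/-- Shared-vertex case: `a` is a vertex of both a `-1` triangle `{a,b,c}`
and a `+1` triangle `{a,y,z}`. -/
theorem shared_vertex {n : ℕ} (f : Finset (Fin n) → ℤ)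
    (hf : ∀ e ∈ Finset.powersetCard 2 (Finset.univ : Finset (Fin n)), f e = -1 ∨ f e = 1)
    (hfree : ∀ S ∈ Finset.powersetCard 4 (Finset.univ : Finset (Fin n)),
      (∑ e ∈ Finset.powersetCard 2 S, f e) ≠ 0)
    (a b c y z : Fin n)
    (hab : a ≠ b) (hac : a ≠ c) (hbc : b ≠ c)
    (hay : a ≠ y) (haz : a ≠ z) (hyz : y ≠ z)
    (vab : f {a, b} = -1) (vac : f {a, c} = -1) (vbc : f {b, c} = -1)
    (vay : f {a, y} = 1) (vaz : f {a, z} = 1) (vyz : f {y, z} = 1) : False := by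
  rcases eq_or_ne b y with rfl | hby
  · omega
  rcases eq_or_ne b z with rfl | hbz
  · omega
  rcases eq_or_ne c y with rfl | hcy
  · omega
  rcases eq_or_ne c z with rfl | hcz
  · omega
  have h1 := six_sum f hfree a b c y hab hac hay hbc hby hcy
  have h2 := six_sum f hfree a b c z hab hac haz hbc hbz hcz
  have h3 := six_sum f hfree a b y z hab hay haz hby hbz hyz
  have h4 := six_sum f hfree a c y z hac hay haz hcy hcz hyz
  have h5 := six_sum f hfree b c y z hbc hby hbz hcy hcz hyz
  have e1 := edge_val f hf hby
  have e2 := edge_val f hf hbz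
  have e3 := edge_val f hf hcy
  have e4 := edge_val f hf hcz
  omega

set_option maxHeartbeats 1000000 in
theorem mat9 (ax ay az bx by' bz cx cy cz : ℤ)
    (h1 : ax = -1 ∨ ax = 1) (h2 : ay = -1 ∨ ay = 1) (h3 : az = -1 ∨ az = 1)
    (h4 : bx = -1 ∨ bx = 1) (h5 : by' = -1 ∨ by' = 1) (h6 : bz = -1 ∨ bz = 1)
    (h7 : cx = -1 ∨ cx = 1) (h8 : cy = -1 ∨ cy = 1) (h9 : cz = -1 ∨ cz = 1)
    (c1 : ax + bx + cx ≠ 3) (c2 : ay + by' + cy ≠ 3) (c3 : az + bz + cz ≠ 3)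
    (r1 : ax + ay + az ≠ -3) (r2 : bx + by' + bz ≠ -3) (r3 : cx + cy + cz ≠ -3)
    (s1 : ax + ay + bx + by' ≠ 0) (s2 : ax + az + bx + bz ≠ 0) (s3 : ay + az + by' + bz ≠ 0)
    (s4 : ax + ay + cx + cy ≠ 0) (s5 : ax + az + cx + cz ≠ 0) (s6 : ay + az + cy + cz ≠ 0)
    (s7 : bx + by' + cx + cy ≠ 0) (s8 : bx + bz + cx + cz ≠ 0) (s9 : by' + bz + cy + cz ≠ 0) :
    False := by
  rcases h1 with rfl|rfl <;> rcases h2 with rfl|rfl <;> rcases h3 with rfl|rfl <;>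
    rcases h4 with rfl|rfl <;> rcases h5 with rfl|rfl <;> rcases h6 with rfl|rfl <;>
    rcases h7 with rfl|rfl <;> rcases h8 with rfl|rfl <;> rcases h9 with rfl|rfl <;> omega

theorem edge_val2 {n : ℕ} (f : Finset (Fin n) → ℤ)
    (hf : ∀ e ∈ Finset.powersetCard 2 (Finset.univ : Finset (Fin n)), f e = -1 ∨ f e = 1)
    {u v : Fin n} (huv : u ≠ v) : f {u, v} = -1 ∨ f {u, v} = 1 :=
  hf {u, v} (by
    rw [Finset.mem_powersetCard]
    exact ⟨Finset.subset_univ _, Finset.card_pair huv⟩)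

/-- Disjoint case: all six vertices distinct. -/
theorem disjoint_triangles {n : ℕ} (f : Finset (Fin n) → ℤ)
    (hf : ∀ e ∈ Finset.powersetCard 2 (Finset.univ : Finset (Fin n)), f e = -1 ∨ f e = 1)
    (hfree : ∀ S ∈ Finset.powersetCard 4 (Finset.univ : Finset (Fin n)),
      (∑ e ∈ Finset.powersetCard 2 S, f e) ≠ 0)
    (a b c x y z : Fin n)
    (hab : a ≠ b) (hac : a ≠ c) (hbc : b ≠ c)
    (hxy : x ≠ y) (hxz : x ≠ z) (hyz : y ≠ z)
    (hax : a ≠ x) (hay : a ≠ y) (haz : a ≠ z)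
    (hbx : b ≠ x) (hby : b ≠ y) (hbz : b ≠ z)
    (hcx : c ≠ x) (hcy : c ≠ y) (hcz : c ≠ z)
    (vab : f {a, b} = -1) (vac : f {a, c} = -1) (vbc : f {b, c} = -1)
    (vxy : f {x, y} = 1) (vxz : f {x, z} = 1) (vyz : f {y, z} = 1) : False := by
  -- columns
  have c1 := six_sum f hfree a b c x hab hac hax hbc hbx hcx
  have c2 := six_sum f hfree a b c y hab hac hay hbc hby hcy
  have c3 := six_sum f hfree a b c z hab hac haz hbc hbz hcz
  -- rows
  have r1 := six_sum f hfree a x y z hax hay haz hxy hxz hyz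
  have r2 := six_sum f hfree b x y z hbx hby hbz hxy hxz hyz
  have r3 := six_sum f hfree c x y z hcx hcy hcz hxy hxz hyz
  -- 2x2 squares
  have s1 := six_sum f hfree a b x y hab hax hay hbx hby hxy
  have s2 := six_sum f hfree a b x z hab hax haz hbx hbz hxz
  have s3 := six_sum f hfree a b y z hab hay haz hby hbz hyz
  have s4 := six_sum f hfree a c x y hac hax hay hcx hcy hxy
  have s5 := six_sum f hfree a c x z hac hax haz hcx hcz hxz
  have s6 := six_sum f hfree a c y z hac hay haz hcy hcz hyz
  have s7 := six_sum f hfree b c x y hbc hbx hby hcx hcy hxy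
  have s8 := six_sum f hfree b c x z hbc hbx hbz hcx hcz hxz
  have s9 := six_sum f hfree b c y z hbc hby hbz hcy hcz hyz
  rw [vab, vac, vbc] at c1 c2 c3
  rw [vxy, vxz, vyz] at r1 r2 r3
  rw [vab, vxy] at s1
  rw [vab, vxz] at s2
  rw [vab, vyz] at s3
  rw [vac, vxy] at s4
  rw [vac, vxz] at s5
  rw [vac, vyz] at s6
  rw [vbc, vxy] at s7
  rw [vbc, vxz] at s8
  rw [vbc, vyz] at s9
  exact mat9 (f {a,x}) (f {a,y}) (f {a,z}) (f {b,x}) (f {b,y}) (f {b,z})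
    (f {c,x}) (f {c,y}) (f {c,z})
    (edge_val2 f hf hax) (edge_val2 f hf hay) (edge_val2 f hf haz)
    (edge_val2 f hf hbx) (edge_val2 f hf hby) (edge_val2 f hf hbz)
    (edge_val2 f hf hcx) (edge_val2 f hf hcy) (edge_val2 f hf hcz)
    (fun h => c1 (by linarith)) (fun h => c2 (by linarith)) (fun h => c3 (by linarith))
    (fun h => r1 (by linarith)) (fun h => r2 (by linarith)) (fun h => r3 (by linarith))
    (fun h => s1 (by linarith)) (fun h => s2 (by linarith)) (fun h => s3 (by linarith))
    (fun h => s4 (by linarith)) (fun h => s5 (by linarith)) (fun h => s6 (by linarith))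
    (fun h => s7 (by linarith)) (fun h => s8 (by linarith)) (fun h => s9 (by linarith))

/-- If `n ≥ 5` and `f : E(K_n) → {-1,1}` is zero-sum-`K₄` free, then at least one of the
graphs `G₋₁` (edges of weight `-1`) and `G₁` (edges of weight `1`) is triangle-free. -/
theorem one_color_class_triangle_free (n : ℕ) (hn : 5 ≤ n) (f : Finset (Fin n) → ℤ)
    (hf : ∀ e ∈ Finset.powersetCard 2 (Finset.univ : Finset (Fin n)), f e = -1 ∨ f e = 1)
    (hfree : ∀ S ∈ Finset.powersetCard 4 (Finset.univ : Finset (Fin n)),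
      (∑ e ∈ Finset.powersetCard 2 S, f e) ≠ 0)
    (Gm G1 : SimpleGraph (Fin n))
    (hGm : ∀ u v : Fin n, Gm.Adj u v ↔ u ≠ v ∧ f ({u, v} : Finset (Fin n)) = -1)
    (hG1 : ∀ u v : Fin n, G1.Adj u v ↔ u ≠ v ∧ f ({u, v} : Finset (Fin n)) = 1) :
    Gm.CliqueFree 3 ∨ G1.CliqueFree 3 := by
  by_contra h
  push_neg at h
  obtain ⟨h1, h2⟩ := h
  rw [SimpleGraph.CliqueFree] at h1 h2
  push_neg at h1 h2
  obtain ⟨t, ht⟩ := h1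
  obtain ⟨s, hs⟩ := h2
  obtain ⟨a, b, c, hab, hac, hbc, rfl⟩ := Finset.card_eq_three.mp ht.card_eq
  obtain ⟨x, y, z, hxy, hxz, hyz, rfl⟩ := Finset.card_eq_three.mp hs.card_eq
  have vab : f {a, b} = -1 := ((hGm a b).mp (ht.isClique (by simp) (by simp) hab)).2
  have vac : f {a, c} = -1 := ((hGm a c).mp (ht.isClique (by simp) (by simp) hac)).2
  have vbc : f {b, c} = -1 := ((hGm b c).mp (ht.isClique (by simp) (by simp) hbc)).2
  have vxy : f {x, y} = 1 := ((hG1 x y).mp (hs.isClique (by simp) (by simp) hxy)).2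
  have vxz : f {x, z} = 1 := ((hG1 x z).mp (hs.isClique (by simp) (by simp) hxz)).2
  have vyz : f {y, z} = 1 := ((hG1 y z).mp (hs.isClique (by simp) (by simp) hyz)).2
  rcases eq_or_ne a x with rfl | hax
  · exact shared_vertex f hf hfree a b c y z hab hac hbc hxy hxz hyz vab vac vbc vxy vxz vyz
  rcases eq_or_ne a y with rfl | hay
  · exact shared_vertex f hf hfree a b c x z hab hac hbc hxy.symm hyz hxz vab vac vbc
      (by rw [Finset.pair_comm]; exact vxy) vyz vxz
  rcases eq_or_ne a z with rfl | haz
  · exact shared_vertex f hf hfree a b c x y hab hac hbc hxz.symm hyz.symm hxy vab vac vbc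
      (by rw [Finset.pair_comm]; exact vxz) (by rw [Finset.pair_comm]; exact vyz) vxy
  rcases eq_or_ne b x with rfl | hbx
  · exact shared_vertex f hf hfree b a c y z hab.symm hbc hac hxy hxz hyz
      (by rw [Finset.pair_comm]; exact vab) vbc vac vxy vxz vyz
  rcases eq_or_ne b y with rfl | hby
  · exact shared_vertex f hf hfree b a c x z hab.symm hbc hac hxy.symm hyz hxz
      (by rw [Finset.pair_comm]; exact vab) vbc vac
      (by rw [Finset.pair_comm]; exact vxy) vyz vxz
  rcases eq_or_ne b z with rfl | hbz
  · exact shared_vertex f hf hfree b a c x y hab.symm hbc hac hxz.symm hyz.symm hxy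
      (by rw [Finset.pair_comm]; exact vab) vbc vac
      (by rw [Finset.pair_comm]; exact vxz) (by rw [Finset.pair_comm]; exact vyz) vxy
  rcases eq_or_ne c x with rfl | hcx
  · exact shared_vertex f hf hfree c a b y z hac.symm hbc.symm hab hxy hxz hyz
      (by rw [Finset.pair_comm]; exact vac) (by rw [Finset.pair_comm]; exact vbc) vab vxy vxz vyz
  rcases eq_or_ne c y with rfl | hcy
  · exact shared_vertex f hf hfree c a b x z hac.symm hbc.symm hab hxy.symm hyz hxz
      (by rw [Finset.pair_comm]; exact vac) (by rw [Finset.pair_comm]; exact vbc) vab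
      (by rw [Finset.pair_comm]; exact vxy) vyz vxz
  rcases eq_or_ne c z with rfl | hcz
  · exact shared_vertex f hf hfree c a b x y hac.symm hbc.symm hab hxz.symm hyz.symm hxy
      (by rw [Finset.pair_comm]; exact vac) (by rw [Finset.pair_comm]; exact vbc) vab
      (by rw [Finset.pair_comm]; exact vxz) (by rw [Finset.pair_comm]; exact vyz) vxy
  exact disjoint_triangles f hf hfree a b c x y z hab hac hbc hxy hxz hyz
    hax hay haz hbx hby hbz hcx hcy hcz vab vac vbc vxy vxz vyz
end

section
/- Let n ≥ 5 and let h(n) = n+1 if n ≡ 0 (mod 4) and h(n) = n otherwise. If f: E(K_n) → {-1, 1} is a weighting with min{e(-1), e(1)} ≥ h(n), where e(i) is the number of edges of weight i, then there exists a 4-element subset of the vertices whose six edge weights sum to 0 (a zero-sum copy of K_4). -/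
open Finset

/-! Auxiliary machinery for zero-sum K₄. -/

variable {n : ℕ}

section PairBasics

lemma zsk4_mem_pc2 {x y : Fin n} (h : x ≠ y) :
    ({x, y} : Finset (Fin n)) ∈ powersetCard 2 (univ : Finset (Fin n)) := by
  rw [mem_powersetCard]
  exact ⟨subset_univ _, by rw [card_insert_of_notMem (by simpa using h), card_singleton]⟩

lemma zsk4_pair_eq {x y z w : Fin n} :
    ({x, y} : Finset (Fin n)) = {z, w} ↔ (x = z ∧ y = w) ∨ (x = w ∧ y = z) := by
  constructor
  · intro h
    have hx : x ∈ ({z, w} : Finset (Fin n)) := by rw [← h]; simp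
    have hy : y ∈ ({z, w} : Finset (Fin n)) := by rw [← h]; simp
    have hz : z ∈ ({x, y} : Finset (Fin n)) := by rw [h]; simp
    have hw : w ∈ ({x, y} : Finset (Fin n)) := by rw [h]; simp
    simp only [mem_insert, mem_singleton] at hx hy hz hw
    tauto
  · rintro (⟨rfl, rfl⟩ | ⟨rfl, rfl⟩)
    · rfl
    · exact Finset.pair_comm _ _

lemma zsk4_card_quad {a b c d : Fin n} (hab : a ≠ b) (hac : a ≠ c) (had : a ≠ d)
    (hbc : b ≠ c) (hbd : b ≠ d) (hcd : c ≠ d) :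
    ({a, b, c, d} : Finset (Fin n)).card = 4 := by
  rw [card_insert_of_notMem (by simp [hab, hac, had]),
    card_insert_of_notMem (by simp [hbc, hbd]),
    card_insert_of_notMem (by simpa using hcd), card_singleton]

lemma zsk4_pc2_quad {a b c d : Fin n} (hab : a ≠ b) (hac : a ≠ c) (had : a ≠ d)
    (hbc : b ≠ c) (hbd : b ≠ d) (hcd : c ≠ d) :
    powersetCard 2 ({a, b, c, d} : Finset (Fin n)) =
      {({a,b} : Finset (Fin n)), {a,c}, {a,d}, {b,c}, {b,d}, {c,d}} := by
  ext e
  simp only [mem_powersetCard, Finset.card_eq_two, mem_insert, mem_singleton]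
  constructor
  · rintro ⟨hsub, x, y, hxy, rfl⟩
    have hx : x ∈ ({a, b, c, d} : Finset (Fin n)) := hsub (by simp)
    have hy : y ∈ ({a, b, c, d} : Finset (Fin n)) := hsub (by simp)
    simp only [mem_insert, mem_singleton] at hx hy
    rcases hx with rfl | rfl | rfl | rfl <;> rcases hy with rfl | rfl | rfl | rfl <;>
      simp_all [zsk4_pair_eq]
  · have hs : ∀ x y : Fin n, x ∈ ({a,b,c,d} : Finset (Fin n)) → y ∈ ({a,b,c,d} : Finset (Fin n)) →
        ({x, y} : Finset (Fin n)) ⊆ {a, b, c, d} := by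
      intro x y hx hy t ht
      rcases mem_insert.mp ht with rfl | ht'
      · exact hx
      · rw [mem_singleton] at ht'; subst ht'; exact hy
    rintro (rfl | rfl | rfl | rfl | rfl | rfl)
    exacts [⟨hs a b (by simp) (by simp), a, b, hab, rfl⟩,
      ⟨hs a c (by simp) (by simp), a, c, hac, rfl⟩,
      ⟨hs a d (by simp) (by simp), a, d, had, rfl⟩,
      ⟨hs b c (by simp) (by simp), b, c, hbc, rfl⟩,
      ⟨hs b d (by simp) (by simp), b, d, hbd, rfl⟩,
      ⟨hs c d (by simp) (by simp), c, d, hcd, rfl⟩]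

lemma zsk4_sum_quad (f : Finset (Fin n) → ℤ) {a b c d : Fin n} (hab : a ≠ b) (hac : a ≠ c)
    (had : a ≠ d) (hbc : b ≠ c) (hbd : b ≠ d) (hcd : c ≠ d) :
    (∑ e ∈ powersetCard 2 ({a, b, c, d} : Finset (Fin n)), f e) =
      f {a,b} + f {a,c} + f {a,d} + f {b,c} + f {b,d} + f {c,d} := by
  rw [zsk4_pc2_quad hab hac had hbc hbd hcd]
  rw [show ({({a,b} : Finset (Fin n)), {a,c}, {a,d}, {b,c}, {b,d}, {c,d}} : Finset (Finset (Fin n)))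
      = insert {a,b} (insert {a,c} (insert {a,d} (insert {b,c} (insert {b,d} {{c,d}})))) from rfl]
  rw [sum_insert, sum_insert, sum_insert, sum_insert, sum_insert, sum_singleton]
  · ring
  all_goals simp only [mem_insert, mem_singleton, zsk4_pair_eq]; tauto

end PairBasics

section DecideLemmas

def zsk4B (b : Bool) : ℤ := if b then 1 else -1

set_option maxRecDepth 4000 in
lemma zsk4_mat33 : ∀ m11 m12 m13 m21 m22 m23 m31 m32 m33 : Bool,
    (zsk4B m11 + zsk4B m21 + zsk4B m31 ≠ 3) ∧
    (zsk4B m12 + zsk4B m22 + zsk4B m32 ≠ 3) ∧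
    (zsk4B m13 + zsk4B m23 + zsk4B m33 ≠ 3) ∧
    (zsk4B m11 + zsk4B m12 + zsk4B m13 ≠ -3) ∧
    (zsk4B m21 + zsk4B m22 + zsk4B m23 ≠ -3) ∧
    (zsk4B m31 + zsk4B m32 + zsk4B m33 ≠ -3) ∧
    (zsk4B m11 + zsk4B m12 + zsk4B m21 + zsk4B m22 ≠ 0) ∧
    (zsk4B m11 + zsk4B m13 + zsk4B m21 + zsk4B m23 ≠ 0) ∧
    (zsk4B m12 + zsk4B m13 + zsk4B m22 + zsk4B m23 ≠ 0) ∧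
    (zsk4B m11 + zsk4B m12 + zsk4B m31 + zsk4B m32 ≠ 0) ∧
    (zsk4B m11 + zsk4B m13 + zsk4B m31 + zsk4B m33 ≠ 0) ∧
    (zsk4B m12 + zsk4B m13 + zsk4B m32 + zsk4B m33 ≠ 0) ∧
    (zsk4B m21 + zsk4B m22 + zsk4B m31 + zsk4B m32 ≠ 0) ∧
    (zsk4B m21 + zsk4B m23 + zsk4B m31 + zsk4B m33 ≠ 0) ∧
    (zsk4B m22 + zsk4B m23 + zsk4B m32 + zsk4B m33 ≠ 0) →
    False := by
  decide

lemma zsk4_quad16 : ∀ u v w x : Bool,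
    (zsk4B u + zsk4B v ≠ -2) → (zsk4B w + zsk4B x ≠ -2) →
    (zsk4B u + zsk4B w ≠ 2) → (zsk4B v + zsk4B x ≠ 2) →
    (zsk4B u + zsk4B v + zsk4B w + zsk4B x ≠ 0) → False := by
  decide

lemma zsk4_toB {t : ℤ} (h : t = -1 ∨ t = 1) : ∃ b : Bool, t = zsk4B b := by
  rcases h with h | h
  · exact ⟨false, by simp [zsk4B, h]⟩
  · exact ⟨true, by simp [zsk4B, h]⟩

end DecideLemmas

section Graph

def zsk4adj (g : Finset (Fin n) → ℤ) (v w : Fin n) : Prop := v ≠ w ∧ g {v, w} = -1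

instance (g : Finset (Fin n) → ℤ) (v : Fin n) : DecidablePred (zsk4adj g v) := fun w => by
  unfold zsk4adj; infer_instance

def zsk4nbr (g : Finset (Fin n) → ℤ) (v : Fin n) : Finset (Fin n) :=
  univ.filter (zsk4adj g v)

lemma zsk4_mem_nbr {g : Finset (Fin n) → ℤ} {v w : Fin n} :
    w ∈ zsk4nbr g v ↔ v ≠ w ∧ g {v, w} = -1 := by
  simp [zsk4nbr, zsk4adj]

lemma zsk4_adj_symm {g : Finset (Fin n) → ℤ} {v w : Fin n} (h : zsk4adj g v w) :
    zsk4adj g w v := ⟨h.1.symm, by rw [Finset.pair_comm]; exact h.2⟩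

def zsk4ball (g : Finset (Fin n) → ℤ) (v : Fin n) : Finset (Fin n) :=
  univ.filter (fun w => w = v ∨ zsk4adj g v w ∨ ∃ u, zsk4adj g v u ∧ zsk4adj g u w)

lemma zsk4_mem_ball {g : Finset (Fin n) → ℤ} {v w : Fin n} :
    w ∈ zsk4ball g v ↔ w = v ∨ zsk4adj g v w ∨ ∃ u, zsk4adj g v u ∧ zsk4adj g u w := by
  simp [zsk4ball]

lemma zsk4_ball_eq {g : Finset (Fin n) → ℤ} {v b c d : Fin n}
    (hnv : zsk4nbr g v = {b, c}) (hnb : zsk4nbr g b = {v, d}) (hnc : zsk4nbr g c = {v, d}) :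
    zsk4ball g v = {v, b, c, d} := by
  ext w
  rw [zsk4_mem_ball]
  constructor
  · rintro (rfl | hadj | ⟨u, hu1, hu2⟩)
    · simp
    · have : w ∈ zsk4nbr g v := zsk4_mem_nbr.mpr ⟨hadj.1, hadj.2⟩
      rw [hnv] at this
      simp only [mem_insert, mem_singleton] at this ⊢
      tauto
    · have hu : u ∈ zsk4nbr g v := zsk4_mem_nbr.mpr ⟨hu1.1, hu1.2⟩
      rw [hnv] at hu
      simp only [mem_insert, mem_singleton] at hu
      have hw : w ∈ ({v, d} : Finset (Fin n)) := by
        rcases hu with rfl | rfl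
        · rw [← hnb]; exact zsk4_mem_nbr.mpr ⟨hu2.1, hu2.2⟩
        · rw [← hnc]; exact zsk4_mem_nbr.mpr ⟨hu2.1, hu2.2⟩
      simp only [mem_insert, mem_singleton] at hw ⊢
      tauto
  · have hb : b ∈ zsk4nbr g v := by rw [hnv]; simp
    have hc : c ∈ zsk4nbr g v := by rw [hnv]; simp
    have hd : d ∈ zsk4nbr g b := by rw [hnb]; simp
    rw [zsk4_mem_nbr] at hb hc hd
    intro hw
    simp only [mem_insert, mem_singleton] at hw
    rcases hw with rfl | rfl | rfl | rfl
    · exact Or.inl rfl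
    · exact Or.inr (Or.inl ⟨hb.1, hb.2⟩)
    · exact Or.inr (Or.inl ⟨hc.1, hc.2⟩)
    · exact Or.inr (Or.inr ⟨b, ⟨hb.1, hb.2⟩, hd.1, hd.2⟩)

lemma zsk4_quad_perm {a b c d : Fin n} :
    ({a, b, c, d} : Finset (Fin n)) = {b, a, d, c} ∧
    ({a, b, c, d} : Finset (Fin n)) = {c, a, d, b} ∧
    ({a, b, c, d} : Finset (Fin n)) = {d, b, c, a} := by
  refine ⟨?_, ?_, ?_⟩ <;> (ext t; simp only [mem_insert, mem_singleton]; tauto)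

lemma zsk4_handshake (g : Finset (Fin n) → ℤ) :
    ((powersetCard 2 (univ : Finset (Fin n))).filter (fun e => g e = -1)).card * 2 =
      ∑ v : Fin n, (zsk4nbr g v).card := by
  set F := (powersetCard 2 (univ : Finset (Fin n))).filter (fun e => g e = -1) with hF
  have hcard2 : ∀ e ∈ F, e.card = 2 := by
    intro e he
    exact ((mem_powersetCard.mp (mem_filter.mp he).1)).2
  have stepA : ∀ v : Fin n, (zsk4nbr g v).card = (F.filter (fun e => v ∈ e)).card := by
    intro v
    apply card_bij (fun w _ => ({v, w} : Finset (Fin n)))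
    · intro w hw
      rw [zsk4_mem_nbr] at hw
      exact mem_filter.mpr ⟨mem_filter.mpr ⟨zsk4_mem_pc2 hw.1, hw.2⟩, by simp⟩
    · intro w1 h1 w2 h2 heq
      rw [zsk4_mem_nbr] at h1 h2
      have : w1 ∈ ({v, w2} : Finset (Fin n)) := by rw [← heq]; simp
      simp only [mem_insert, mem_singleton] at this
      rcases this with h | h
      · exact absurd h.symm h1.1
      · exact h
    · intro e he
      have he' := mem_filter.mp he
      have hev : v ∈ e := he'.2
      obtain ⟨x, y, hxy, rfl⟩ := Finset.card_eq_two.mp (hcard2 e he'.1)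
      have hg' : g {x, y} = -1 := (mem_filter.mp he'.1).2
      simp only [mem_insert, mem_singleton] at hev
      rcases hev with rfl | rfl
      · exact ⟨y, zsk4_mem_nbr.mpr ⟨hxy, hg'⟩, rfl⟩
      · refine ⟨x, zsk4_mem_nbr.mpr ⟨Ne.symm hxy, ?_⟩, Finset.pair_comm _ _⟩
        rwa [Finset.pair_comm]
  calc F.card * 2 = ∑ e ∈ F, 2 := by rw [Finset.sum_const, smul_eq_mul, mul_comm]
    _ = ∑ e ∈ F, e.card := Finset.sum_congr rfl (fun e he => (hcard2 e he).symm)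
    _ = ∑ e ∈ F, (univ.filter (fun v : Fin n => v ∈ e)).card := by
        refine Finset.sum_congr rfl (fun e _ => ?_)
        rw [Finset.filter_univ_mem]
    _ = ∑ e ∈ F, ∑ v : Fin n, if v ∈ e then 1 else 0 := by
        refine Finset.sum_congr rfl (fun e _ => ?_)
        rw [Finset.card_filter]
    _ = ∑ v : Fin n, ∑ e ∈ F, if v ∈ e then 1 else 0 := Finset.sum_comm
    _ = ∑ v : Fin n, (F.filter (fun e => v ∈ e)).card := by
        refine Finset.sum_congr rfl (fun v _ => ?_)
        rw [Finset.card_filter]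
    _ = ∑ v : Fin n, (zsk4nbr g v).card := Finset.sum_congr rfl (fun v _ => (stepA v).symm)

end Graph

section Sparse

variable {g : Finset (Fin n) → ℤ}
  (hg : ∀ e ∈ powersetCard 2 (univ : Finset (Fin n)), g e = -1 ∨ g e = 1)
  (hsum6 : ∀ a b c d : Fin n, a ≠ b → a ≠ c → a ≠ d → b ≠ c → b ≠ d → c ≠ d →
    g {a,b} + g {a,c} + g {a,d} + g {b,c} + g {b,d} + g {c,d} ≠ 0)
  (htf : ∀ a b c : Fin n, a ≠ b → a ≠ c → b ≠ c →
    ¬(g {a,b} = -1 ∧ g {a,c} = -1 ∧ g {b,c} = -1))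

include hg in
lemma zsk4_pos_of_not_adj {x y : Fin n} (hxy : x ≠ y) (h : ¬ zsk4adj g x y) :
    g {x, y} = 1 := by
  rcases hg _ (zsk4_mem_pc2 hxy) with h' | h'
  · exact absurd ⟨hxy, h'⟩ h
  · exact h'

include hg hsum6 htf in
lemma zsk4_deg_le_two (v : Fin n) : (zsk4nbr g v).card ≤ 2 := by
  by_contra hlt
  push_neg at hlt
  obtain ⟨T, hT, hT3⟩ := Finset.exists_subset_card_eq hlt
  obtain ⟨x, y, z, hxy, hxz, hyz, rfl⟩ := Finset.card_eq_three.mp hT3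
  have hx := zsk4_mem_nbr.mp (hT (show x ∈ ({x,y,z} : Finset (Fin n)) by simp))
  have hy := zsk4_mem_nbr.mp (hT (show y ∈ ({x,y,z} : Finset (Fin n)) by simp))
  have hz := zsk4_mem_nbr.mp (hT (show z ∈ ({x,y,z} : Finset (Fin n)) by simp))
  have hxy1 : g {x, y} = 1 := by
    rcases hg _ (zsk4_mem_pc2 hxy) with h' | h'
    · exact absurd ⟨hx.2, hy.2, h'⟩ (htf v x y hx.1 hy.1 hxy)
    · exact h'
  have hxz1 : g {x, z} = 1 := by
    rcases hg _ (zsk4_mem_pc2 hxz) with h' | h'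
    · exact absurd ⟨hx.2, hz.2, h'⟩ (htf v x z hx.1 hz.1 hxz)
    · exact h'
  have hyz1 : g {y, z} = 1 := by
    rcases hg _ (zsk4_mem_pc2 hyz) with h' | h'
    · exact absurd ⟨hy.2, hz.2, h'⟩ (htf v y z hy.1 hz.1 hyz)
    · exact h'
  exact hsum6 v x y z hx.1 hy.1 hz.1 hxy hxz hyz
    (by rw [hx.2, hy.2, hz.2, hxy1, hxz1, hyz1]; ring)

include hg hsum6 htf in
lemma zsk4_struct (hreg : ∀ v : Fin n, (zsk4nbr g v).card = 2) (v : Fin n) :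
    ∃ b c d : Fin n, v ≠ b ∧ v ≠ c ∧ v ≠ d ∧ b ≠ c ∧ b ≠ d ∧ c ≠ d ∧
      zsk4nbr g v = {b, c} ∧ zsk4nbr g b = {v, d} ∧ zsk4nbr g c = {v, d} ∧
      zsk4nbr g d = {b, c} := by
  obtain ⟨b, c, hbc, hnv⟩ := Finset.card_eq_two.mp (hreg v)
  have hvb : zsk4adj g v b := by
    have : b ∈ zsk4nbr g v := by rw [hnv]; simp
    exact ⟨(zsk4_mem_nbr.mp this).1, (zsk4_mem_nbr.mp this).2⟩
  have hvc : zsk4adj g v c := by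
    have : c ∈ zsk4nbr g v := by rw [hnv]; simp
    exact ⟨(zsk4_mem_nbr.mp this).1, (zsk4_mem_nbr.mp this).2⟩
  have hbv : zsk4adj g b v := zsk4_adj_symm hvb
  obtain ⟨p, q, hpq, hnb⟩ := Finset.card_eq_two.mp (hreg b)
  have hvmem : v ∈ ({p, q} : Finset (Fin n)) := by
    rw [← hnb]; exact zsk4_mem_nbr.mpr ⟨hbv.1, hbv.2⟩
  simp only [mem_insert, mem_singleton] at hvmem
  obtain ⟨d, hvd, hnb'⟩ : ∃ d : Fin n, v ≠ d ∧ zsk4nbr g b = {v, d} := by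
    rcases hvmem with rfl | rfl
    · exact ⟨q, hpq, hnb⟩
    · exact ⟨p, Ne.symm hpq, by rw [hnb, Finset.pair_comm]⟩
  have hbd : zsk4adj g b d := by
    have : d ∈ zsk4nbr g b := by rw [hnb']; simp
    exact ⟨(zsk4_mem_nbr.mp this).1, (zsk4_mem_nbr.mp this).2⟩
  have hgbc : g {b, c} = 1 := by
    rcases hg _ (zsk4_mem_pc2 hbc) with h' | h'
    · exact absurd ⟨hvb.2, hvc.2, h'⟩ (htf v b c hvb.1 hvc.1 hbc)
    · exact h'
  have hdc : d ≠ c := by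
    rintro rfl
    exact absurd hbd.2 (by rw [hgbc]; norm_num)
  have hgvd : g {v, d} = 1 := by
    apply zsk4_pos_of_not_adj hg hvd
    intro hadj
    have : d ∈ zsk4nbr g v := zsk4_mem_nbr.mpr ⟨hadj.1, hadj.2⟩
    rw [hnv] at this
    simp only [mem_insert, mem_singleton] at this
    rcases this with rfl | rfl
    · exact hbd.1 rfl
    · exact hdc rfl
  have hgcd : g {c, d} = -1 := by
    have h6 := hsum6 v b c d hvb.1 hvc.1 hvd hbc hbd.1 (Ne.symm hdc)
    rcases hg _ (zsk4_mem_pc2 (Ne.symm hdc)) with h' | h'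
    · exact h'
    · exfalso
      apply h6
      rw [hvb.2, hvc.2, hgvd, hgbc, hbd.2, h']
      ring
  have hcd : zsk4adj g c d := ⟨Ne.symm hdc, hgcd⟩
  have hnc : zsk4nbr g c = {v, d} := by
    symm
    apply Finset.eq_of_subset_of_card_le
    · intro t ht
      simp only [mem_insert, mem_singleton] at ht
      rcases ht with rfl | rfl
      · exact zsk4_mem_nbr.mpr ⟨(zsk4_adj_symm hvc).1, (zsk4_adj_symm hvc).2⟩
      · exact zsk4_mem_nbr.mpr ⟨hcd.1, hcd.2⟩
    · rw [hreg c, card_insert_of_notMem (by simpa using hvd), card_singleton]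
  have hnd : zsk4nbr g d = {b, c} := by
    symm
    apply Finset.eq_of_subset_of_card_le
    · intro t ht
      simp only [mem_insert, mem_singleton] at ht
      rcases ht with rfl | rfl
      · exact zsk4_mem_nbr.mpr ⟨(zsk4_adj_symm hbd).1, (zsk4_adj_symm hbd).2⟩
      · exact zsk4_mem_nbr.mpr ⟨(zsk4_adj_symm hcd).1, (zsk4_adj_symm hcd).2⟩
    · rw [hreg d, card_insert_of_notMem (by simpa using hbc), card_singleton]
  exact ⟨b, c, d, hvb.1, hvc.1, hvd, hbc, hbd.1, Ne.symm hdc, hnv, hnb', hnc, hnd⟩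

include hg hsum6 htf in
lemma zsk4_div4 (hreg : ∀ v : Fin n, (zsk4nbr g v).card = 2) : n % 4 = 0 := by
  have hkey : ∀ v : Fin n, (zsk4ball g v).card = 4 ∧
      ∀ w ∈ zsk4ball g v, zsk4ball g w = zsk4ball g v := by
    intro v
    obtain ⟨b, c, d, hvb, hvc, hvd, hbc, hbd, hcd, hnv, hnb, hnc, hnd⟩ :=
      zsk4_struct hg hsum6 htf hreg v
    have hball : zsk4ball g v = {v, b, c, d} := zsk4_ball_eq hnv hnb hnc
    have hballb : zsk4ball g b = {v, b, c, d} := by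
      rw [zsk4_ball_eq hnb hnv hnd]
      exact (zsk4_quad_perm (a := v) (b := b) (c := c) (d := d)).1.symm
    have hballc : zsk4ball g c = {v, b, c, d} := by
      have h1 : zsk4nbr g v = {c, b} := by rw [hnv, Finset.pair_comm]
      have h2 : zsk4nbr g d = {c, b} := by rw [hnd, Finset.pair_comm]
      rw [zsk4_ball_eq hnc h1 h2]
      exact (zsk4_quad_perm (a := v) (b := b) (c := c) (d := d)).2.1.symm
    have hballd : zsk4ball g d = {v, b, c, d} := by
      have h1 : zsk4nbr g b = {d, v} := by rw [hnb, Finset.pair_comm]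
      have h2 : zsk4nbr g c = {d, v} := by rw [hnc, Finset.pair_comm]
      rw [zsk4_ball_eq hnd h1 h2]
      exact (zsk4_quad_perm (a := v) (b := b) (c := c) (d := d)).2.2.symm
    constructor
    · rw [hball]
      exact zsk4_card_quad hvb hvc hvd hbc hbd hcd
    · intro w hw
      rw [hball] at hw
      simp only [mem_insert, mem_singleton] at hw
      rcases hw with rfl | rfl | rfl | rfl
      · rw [hball]
      · rw [hballb, hball]
      · rw [hballc, hball]
      · rw [hballd, hball]
  classical
  set P : Finset (Finset (Fin n)) := univ.image (zsk4ball g) with hP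
  have hmem_self : ∀ v : Fin n, v ∈ zsk4ball g v := by
    intro v
    rw [zsk4_mem_ball]
    exact Or.inl rfl
  have hdisj : ∀ p ∈ P, ∀ q ∈ P, p ≠ q → Disjoint (id p) (id q) := by
    intro p hp q hq hpq
    obtain ⟨v, _, rfl⟩ := mem_image.mp hp
    obtain ⟨w, _, rfl⟩ := mem_image.mp hq
    rw [Finset.disjoint_left]
    intro x hxp hxq
    exact hpq (((hkey v).2 x hxp).symm.trans ((hkey w).2 x hxq))
  have hcover : (univ : Finset (Fin n)) = P.biUnion id := by
    ext x
    simp only [mem_biUnion, mem_univ, true_iff, id]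
    exact ⟨zsk4ball g x, mem_image.mpr ⟨x, mem_univ x, rfl⟩, hmem_self x⟩
  have hn : n = 4 * P.card := by
    have h1 : (univ : Finset (Fin n)).card = ∑ p ∈ P, (id p).card := by
      rw [hcover]
      exact card_biUnion hdisj
    have h2 : ∑ p ∈ P, (id p).card = ∑ p ∈ P, 4 := by
      refine Finset.sum_congr rfl (fun p hp => ?_)
      obtain ⟨v, _, rfl⟩ := mem_image.mp hp
      exact (hkey v).1
    rw [card_univ, Fintype.card_fin] at h1
    calc n = ∑ p ∈ P, (id p).card := h1
      _ = ∑ _p ∈ P, 4 := h2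
      _ = 4 * P.card := by rw [Finset.sum_const, smul_eq_mul, mul_comm]
  omega

include hg hsum6 htf in
lemma zsk4_sparse :
    ((powersetCard 2 (univ : Finset (Fin n))).filter (fun e => g e = -1)).card ≤ n ∧
    (((powersetCard 2 (univ : Finset (Fin n))).filter (fun e => g e = -1)).card = n →
      n % 4 = 0) := by
  have hh := zsk4_handshake g
  have hd : ∀ v : Fin n, (zsk4nbr g v).card ≤ 2 := zsk4_deg_le_two hg hsum6 htf
  have hsum_le : ∑ v : Fin n, (zsk4nbr g v).card ≤ n * 2 := by
    calc ∑ v : Fin n, (zsk4nbr g v).card ≤ ∑ _v : Fin n, 2 :=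
          Finset.sum_le_sum (fun v _ => hd v)
      _ = n * 2 := by rw [Finset.sum_const, card_univ, Fintype.card_fin, smul_eq_mul]
  constructor
  · omega
  · intro heq
    apply zsk4_div4 hg hsum6 htf
    intro v
    by_contra hne
    have hlt : (zsk4nbr g v).card < 2 := lt_of_le_of_ne (hd v) hne
    have : ∑ w : Fin n, (zsk4nbr g w).card < ∑ _w : Fin n, 2 :=
      Finset.sum_lt_sum (fun w _ => hd w) ⟨v, mem_univ v, hlt⟩
    rw [Finset.sum_const, card_univ, Fintype.card_fin, smul_eq_mul] at this
    omega

end Sparse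

section NoBoth

variable {g : Finset (Fin n) → ℤ}
  (hg : ∀ e ∈ powersetCard 2 (univ : Finset (Fin n)), g e = -1 ∨ g e = 1)
  (hsum6 : ∀ a b c d : Fin n, a ≠ b → a ≠ c → a ≠ d → b ≠ c → b ≠ d → c ≠ d →
    g {a,b} + g {a,c} + g {a,d} + g {b,c} + g {b,d} + g {c,d} ≠ 0)

include hg hsum6 in
lemma zsk4_overlap (a b c y z : Fin n) (hab : a ≠ b) (hac : a ≠ c) (hbc : b ≠ c)
    (hay : a ≠ y) (haz : a ≠ z) (hyz : y ≠ z)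
    (t1 : g {a,b} = -1) (t2 : g {a,c} = -1) (t3 : g {b,c} = -1)
    (i1 : g {a,y} = 1) (i2 : g {a,z} = 1) (i3 : g {y,z} = 1) : False := by
  have hby : b ≠ y := by rintro rfl; rw [t1] at i1; norm_num at i1
  have hbz : b ≠ z := by rintro rfl; rw [t1] at i2; norm_num at i2
  have hcy : c ≠ y := by rintro rfl; rw [t2] at i1; norm_num at i1
  have hcz : c ≠ z := by rintro rfl; rw [t2] at i2; norm_num at i2
  obtain ⟨bu, hu⟩ := zsk4_toB (hg _ (zsk4_mem_pc2 hby))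
  obtain ⟨bv, hv⟩ := zsk4_toB (hg _ (zsk4_mem_pc2 hbz))
  obtain ⟨bw, hw⟩ := zsk4_toB (hg _ (zsk4_mem_pc2 hcy))
  obtain ⟨bx, hx⟩ := zsk4_toB (hg _ (zsk4_mem_pc2 hcz))
  apply zsk4_quad16 bu bv bw bx
  · intro h
    apply hsum6 a b y z hab hay haz hby hbz hyz
    rw [t1, i1, i2, hu, hv, i3]; linarith
  · intro h
    apply hsum6 a c y z hac hay haz hcy hcz hyz
    rw [t2, i1, i2, hw, hx, i3]; linarith
  · intro h
    apply hsum6 a b c y hab hac hay hbc hby hcy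
    rw [t1, t2, i1, t3, hu, hw]; linarith
  · intro h
    apply hsum6 a b c z hab hac haz hbc hbz hcz
    rw [t1, t2, i2, t3, hv, hx]; linarith
  · intro h
    apply hsum6 b c y z hbc hby hbz hcy hcz hyz
    rw [t3, hu, hv, hw, hx, i3]; linarith

include hg hsum6 in
lemma zsk4_disjoint (a b c x y z : Fin n)
    (hab : a ≠ b) (hac : a ≠ c) (hbc : b ≠ c) (hxy : x ≠ y) (hxz : x ≠ z) (hyz : y ≠ z)
    (hax : a ≠ x) (hay : a ≠ y) (haz : a ≠ z)
    (hbx : b ≠ x) (hby : b ≠ y) (hbz : b ≠ z)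
    (hcx : c ≠ x) (hcy : c ≠ y) (hcz : c ≠ z)
    (t1 : g {a,b} = -1) (t2 : g {a,c} = -1) (t3 : g {b,c} = -1)
    (i1 : g {x,y} = 1) (i2 : g {x,z} = 1) (i3 : g {y,z} = 1) : False := by
  obtain ⟨m11, e11⟩ := zsk4_toB (hg _ (zsk4_mem_pc2 hax))
  obtain ⟨m12, e12⟩ := zsk4_toB (hg _ (zsk4_mem_pc2 hay))
  obtain ⟨m13, e13⟩ := zsk4_toB (hg _ (zsk4_mem_pc2 haz))
  obtain ⟨m21, e21⟩ := zsk4_toB (hg _ (zsk4_mem_pc2 hbx))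
  obtain ⟨m22, e22⟩ := zsk4_toB (hg _ (zsk4_mem_pc2 hby))
  obtain ⟨m23, e23⟩ := zsk4_toB (hg _ (zsk4_mem_pc2 hbz))
  obtain ⟨m31, e31⟩ := zsk4_toB (hg _ (zsk4_mem_pc2 hcx))
  obtain ⟨m32, e32⟩ := zsk4_toB (hg _ (zsk4_mem_pc2 hcy))
  obtain ⟨m33, e33⟩ := zsk4_toB (hg _ (zsk4_mem_pc2 hcz))
  apply zsk4_mat33 m11 m12 m13 m21 m22 m23 m31 m32 m33
  refine ⟨?_, ?_, ?_, ?_, ?_, ?_, ?_, ?_, ?_, ?_, ?_, ?_, ?_, ?_, ?_⟩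
  · intro h
    apply hsum6 a b c x hab hac hax hbc hbx hcx
    rw [t1, t2, e11, t3, e21, e31]; linarith
  · intro h
    apply hsum6 a b c y hab hac hay hbc hby hcy
    rw [t1, t2, e12, t3, e22, e32]; linarith
  · intro h
    apply hsum6 a b c z hab hac haz hbc hbz hcz
    rw [t1, t2, e13, t3, e23, e33]; linarith
  · intro h
    apply hsum6 a x y z hax hay haz hxy hxz hyz
    rw [e11, e12, e13, i1, i2, i3]; linarith
  · intro h
    apply hsum6 b x y z hbx hby hbz hxy hxz hyz
    rw [e21, e22, e23, i1, i2, i3]; linarith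
  · intro h
    apply hsum6 c x y z hcx hcy hcz hxy hxz hyz
    rw [e31, e32, e33, i1, i2, i3]; linarith
  · intro h
    apply hsum6 a b x y hab hax hay hbx hby hxy
    rw [t1, e11, e12, e21, e22, i1]; linarith
  · intro h
    apply hsum6 a b x z hab hax haz hbx hbz hxz
    rw [t1, e11, e13, e21, e23, i2]; linarith
  · intro h
    apply hsum6 a b y z hab hay haz hby hbz hyz
    rw [t1, e12, e13, e22, e23, i3]; linarith
  · intro h
    apply hsum6 a c x y hac hax hay hcx hcy hxy
    rw [t2, e11, e12, e31, e32, i1]; linarith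
  · intro h
    apply hsum6 a c x z hac hax haz hcx hcz hxz
    rw [t2, e11, e13, e31, e33, i2]; linarith
  · intro h
    apply hsum6 a c y z hac hay haz hcy hcz hyz
    rw [t2, e12, e13, e32, e33, i3]; linarith
  · intro h
    apply hsum6 b c x y hbc hbx hby hcx hcy hxy
    rw [t3, e21, e22, e31, e32, i1]; linarith
  · intro h
    apply hsum6 b c x z hbc hbx hbz hcx hcz hxz
    rw [t3, e21, e23, e31, e33, i2]; linarith
  · intro h
    apply hsum6 b c y z hbc hby hbz hcy hcz hyz
    rw [t3, e22, e23, e32, e33, i3]; linarith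

include hg hsum6 in
lemma zsk4_no_both (a b c x y z : Fin n)
    (hab : a ≠ b) (hac : a ≠ c) (hbc : b ≠ c) (hxy : x ≠ y) (hxz : x ≠ z) (hyz : y ≠ z)
    (t1 : g {a,b} = -1) (t2 : g {a,c} = -1) (t3 : g {b,c} = -1)
    (i1 : g {x,y} = 1) (i2 : g {x,z} = 1) (i3 : g {y,z} = 1) : False := by
  by_cases hax : a = x
  · subst hax
    exact zsk4_overlap hg hsum6 a b c y z hab hac hbc hxy hxz hyz t1 t2 t3 i1 i2 i3
  by_cases hay : a = y
  · subst hay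
    exact zsk4_overlap hg hsum6 a b c x z hab hac hbc hax hyz hxz t1 t2 t3
      (by rw [Finset.pair_comm]; exact i1) i3 i2
  by_cases haz : a = z
  · subst haz
    exact zsk4_overlap hg hsum6 a b c x y hab hac hbc hax hay hxy t1 t2 t3
      (by rw [Finset.pair_comm]; exact i2) (by rw [Finset.pair_comm]; exact i3) i1
  by_cases hbx : b = x
  · subst hbx
    exact zsk4_overlap hg hsum6 b a c y z (Ne.symm hab) hbc hac hxy hxz hyz
      (by rw [Finset.pair_comm]; exact t1) t3 t2 i1 i2 i3
  by_cases hby : b = y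
  · subst hby
    exact zsk4_overlap hg hsum6 b a c x z (Ne.symm hab) hbc hac hbx hyz hxz
      (by rw [Finset.pair_comm]; exact t1) t3 t2
      (by rw [Finset.pair_comm]; exact i1) i3 i2
  by_cases hbz : b = z
  · subst hbz
    exact zsk4_overlap hg hsum6 b a c x y (Ne.symm hab) hbc hac hbx hby hxy
      (by rw [Finset.pair_comm]; exact t1) t3 t2
      (by rw [Finset.pair_comm]; exact i2) (by rw [Finset.pair_comm]; exact i3) i1
  by_cases hcx : c = x
  · subst hcx
    exact zsk4_overlap hg hsum6 c a b y z (Ne.symm hac) (Ne.symm hbc) hab hxy hxz hyz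
      (by rw [Finset.pair_comm]; exact t2) (by rw [Finset.pair_comm]; exact t3) t1 i1 i2 i3
  by_cases hcy : c = y
  · subst hcy
    exact zsk4_overlap hg hsum6 c a b x z (Ne.symm hac) (Ne.symm hbc) hab hcx hyz hxz
      (by rw [Finset.pair_comm]; exact t2) (by rw [Finset.pair_comm]; exact t3) t1
      (by rw [Finset.pair_comm]; exact i1) i3 i2
  by_cases hcz : c = z
  · subst hcz
    exact zsk4_overlap hg hsum6 c a b x y (Ne.symm hac) (Ne.symm hbc) hab hcx hcy hxy
      (by rw [Finset.pair_comm]; exact t2) (by rw [Finset.pair_comm]; exact t3) t1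
      (by rw [Finset.pair_comm]; exact i2) (by rw [Finset.pair_comm]; exact i3) i1
  exact zsk4_disjoint hg hsum6 a b c x y z hab hac hbc hxy hxz hyz
    hax hay haz hbx hby hbz hcx hcy hcz t1 t2 t3 i1 i2 i3

end NoBoth

/-- If `n ≥ 5` and `f : E(K_n) → {-1,1}` satisfies `min{e(-1), e(1)} ≥ h(n)`, where
`h(n) = n+1` if `4 ∣ n` and `h(n) = n` otherwise, then there is a zero-sum copy of `K₄`. -/
theorem zero_sum_K4_of_min_edge_count (n : ℕ) (hn : 5 ≤ n) (f : Finset (Fin n) → ℤ)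
    (hf : ∀ e ∈ Finset.powersetCard 2 (Finset.univ : Finset (Fin n)), f e = -1 ∨ f e = 1)
    (hmin : (if n % 4 = 0 then n + 1 else n) ≤
      min (((Finset.powersetCard 2 (Finset.univ : Finset (Fin n))).filter
              (fun e => f e = -1)).card)
          (((Finset.powersetCard 2 (Finset.univ : Finset (Fin n))).filter
              (fun e => f e = 1)).card)) :
    ∃ S ∈ Finset.powersetCard 4 (Finset.univ : Finset (Fin n)),
      (∑ e ∈ Finset.powersetCard 2 S, f e) = 0 := by
  classical
  by_contra hcon
  push_neg at hcon
  have hsum6 : ∀ a b c d : Fin n, a ≠ b → a ≠ c → a ≠ d → b ≠ c → b ≠ d → c ≠ d →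
      f {a,b} + f {a,c} + f {a,d} + f {b,c} + f {b,d} + f {c,d} ≠ 0 := by
    intro a b c d hab hac had hbc hbd hcd h
    have hmem : ({a,b,c,d} : Finset (Fin n)) ∈ powersetCard 4 (univ : Finset (Fin n)) :=
      mem_powersetCard.mpr ⟨subset_univ _, zsk4_card_quad hab hac had hbc hbd hcd⟩
    exact hcon _ hmem (by rw [zsk4_sum_quad f hab hac had hbc hbd hcd]; exact h)
  have hneg : (if n % 4 = 0 then n + 1 else n) ≤
      ((Finset.powersetCard 2 (Finset.univ : Finset (Fin n))).filter
        (fun e => f e = -1)).card := le_trans hmin (min_le_left _ _)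
  have hpos : (if n % 4 = 0 then n + 1 else n) ≤
      ((Finset.powersetCard 2 (Finset.univ : Finset (Fin n))).filter
        (fun e => f e = 1)).card := le_trans hmin (min_le_right _ _)
  by_cases hTneg : ∃ a b c : Fin n, a ≠ b ∧ a ≠ c ∧ b ≠ c ∧
      f {a,b} = -1 ∧ f {a,c} = -1 ∧ f {b,c} = -1
  · by_cases hTpos : ∃ x y z : Fin n, x ≠ y ∧ x ≠ z ∧ y ≠ z ∧
        f {x,y} = 1 ∧ f {x,z} = 1 ∧ f {y,z} = 1
    · obtain ⟨a, b, c, hab, hac, hbc, t1, t2, t3⟩ := hTneg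
      obtain ⟨x, y, z, hxy, hxz, hyz, i1, i2, i3⟩ := hTpos
      exact zsk4_no_both hf hsum6 a b c x y z hab hac hbc hxy hxz hyz t1 t2 t3 i1 i2 i3
    · -- no positive triangle: the positive graph is sparse
      set g : Finset (Fin n) → ℤ := fun e => - f e with hgdef
      have hg : ∀ e ∈ powersetCard 2 (univ : Finset (Fin n)), g e = -1 ∨ g e = 1 := by
        intro e he
        rcases hf e he with h | h <;> simp [hgdef, h]
      have hsum6' : ∀ a b c d : Fin n, a ≠ b → a ≠ c → a ≠ d → b ≠ c → b ≠ d → c ≠ d →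
          g {a,b} + g {a,c} + g {a,d} + g {b,c} + g {b,d} + g {c,d} ≠ 0 := by
        intro a b c d hab hac had hbc hbd hcd h
        apply hsum6 a b c d hab hac had hbc hbd hcd
        simp only [hgdef] at h
        linarith
      have htf : ∀ a b c : Fin n, a ≠ b → a ≠ c → b ≠ c →
          ¬(g {a,b} = -1 ∧ g {a,c} = -1 ∧ g {b,c} = -1) := by
        intro a b c hab hac hbc ⟨h1, h2, h3⟩
        simp only [hgdef, neg_eq_iff_eq_neg] at h1 h2 h3
        exact hTpos ⟨a, b, c, hab, hac, hbc, by linarith, by linarith, by linarith⟩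
      have hsp := zsk4_sparse hg hsum6' htf
      have hcardeq : ((powersetCard 2 (univ : Finset (Fin n))).filter
            (fun e => g e = -1)).card =
          ((powersetCard 2 (univ : Finset (Fin n))).filter (fun e => f e = 1)).card := by
        congr 1
        apply Finset.filter_congr
        intro e _
        have hge : g e = - f e := rfl
        constructor <;> intro h <;> [skip; skip] <;> omega
      rw [hcardeq] at hsp
      by_cases h4 : n % 4 = 0
      · rw [if_pos h4] at hpos
        omega
      · rw [if_neg h4] at hpos
        exact h4 (hsp.2 (le_antisymm hsp.1 hpos))
  · -- no negative triangle: the negative graph is sparse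
    have htf : ∀ a b c : Fin n, a ≠ b → a ≠ c → b ≠ c →
        ¬(f {a,b} = -1 ∧ f {a,c} = -1 ∧ f {b,c} = -1) := by
      intro a b c hab hac hbc ⟨h1, h2, h3⟩
      exact hTneg ⟨a, b, c, hab, hac, hbc, h1, h2, h3⟩
    have hsp := zsk4_sparse hf hsum6 htf
    by_cases h4 : n % 4 = 0
    · rw [if_pos h4] at hneg
      omega
    · rw [if_neg h4] at hneg
      exact h4 (hsp.2 (le_antisymm hsp.1 hneg))
end

section
/- Let the vertex set of K_n be partitioned as X ∪ Y with 2|X|(|X| − 1) = |Y|(|Y| − 1), and define f: E(K_n) → {-2, -1, 0, 1, 2} by f(uv) = -2 if u, v ∈ X, f(uv) = 1 if u, v ∈ Y, and f(uv) = 0 otherwise. Then ∑_{e ∈ E(K_n)} f(e) = 0 and f is zero-sum-K_4 free (no 4-element vertex subset has edge weights summing to 0). -/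
open Finset

private lemma two_mul_choose_two (n : ℕ) : 2 * n.choose 2 = n * (n - 1) := by
  induction n with
  | zero => simp
  | succ m ih =>
    rw [Nat.choose_succ_succ, Nat.mul_add, ih, Nat.choose_one_right]
    cases m with
    | zero => simp
    | succ k => simp only [Nat.succ_sub_one]; ring

private lemma sum_f_eq (n : ℕ) (X Y : Finset (Fin n)) (hdisj : Disjoint X Y)
    (f : Finset (Fin n) → ℤ)
    (hf : ∀ e ∈ Finset.powersetCard 2 (Finset.univ : Finset (Fin n)),
      (e ⊆ X → f e = -2) ∧ (e ⊆ Y → f e = 1) ∧ (¬ e ⊆ X → ¬ e ⊆ Y → f e = 0))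
    (S : Finset (Fin n)) :
    (∑ e ∈ Finset.powersetCard 2 S, f e)
      = -2 * ((S ∩ X).card.choose 2 : ℤ) + ((S ∩ Y).card.choose 2 : ℤ) := by
  have key : ∀ e ∈ powersetCard 2 S,
      f e = -2 * (if e ⊆ X then (1 : ℤ) else 0) + (if e ⊆ Y then (1 : ℤ) else 0) := by
    intro e he
    rw [mem_powersetCard] at he
    have he' : e ∈ powersetCard 2 (univ : Finset (Fin n)) := by
      rw [mem_powersetCard]; exact ⟨subset_univ _, he.2⟩
    obtain ⟨h1, h2, h3⟩ := hf e he'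
    by_cases hX : e ⊆ X
    · have hY : ¬ e ⊆ Y := by
        intro hY
        have hsub : e ⊆ X ∩ Y := subset_inter hX hY
        rw [disjoint_iff_inter_eq_empty.mp hdisj] at hsub
        have := card_le_card hsub
        simp [he.2] at this
      simp [hX, hY, h1 hX]
    · by_cases hY : e ⊆ Y
      · simp [hX, hY, h2 hY]
      · simp [hX, hY, h3 hX hY]
  rw [Finset.sum_congr rfl key, Finset.sum_add_distrib, ← Finset.mul_sum,
    Finset.sum_boole, Finset.sum_boole]
  have hfX : (powersetCard 2 S).filter (· ⊆ X) = powersetCard 2 (S ∩ X) := by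
    ext e
    simp only [mem_filter, mem_powersetCard, subset_inter_iff]
    tauto
  have hfY : (powersetCard 2 S).filter (· ⊆ Y) = powersetCard 2 (S ∩ Y) := by
    ext e
    simp only [mem_filter, mem_powersetCard, subset_inter_iff]
    tauto
  rw [hfX, hfY, card_powersetCard, card_powersetCard]

/-- If `V(K_n) = X ∪ Y` with `2|X|(|X|-1) = |Y|(|Y|-1)` and `f` is `-2` on edges inside `X`,
`1` on edges inside `Y` and `0` on crossing edges, then `∑ f = 0` and `f` is
zero-sum-`K₄` free. -/
theorem partition_weighting_zero_sum_K4_free (n : ℕ) (X Y : Finset (Fin n))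
    (hdisj : Disjoint X Y) (hcover : X ∪ Y = Finset.univ)
    (hXY : 2 * (X.card * (X.card - 1)) = Y.card * (Y.card - 1))
    (f : Finset (Fin n) → ℤ)
    (hf : ∀ e ∈ Finset.powersetCard 2 (Finset.univ : Finset (Fin n)),
      (e ⊆ X → f e = -2) ∧ (e ⊆ Y → f e = 1) ∧ (¬ e ⊆ X → ¬ e ⊆ Y → f e = 0)) :
    (∑ e ∈ Finset.powersetCard 2 (Finset.univ : Finset (Fin n)), f e) = 0 ∧
    (∀ S ∈ Finset.powersetCard 4 (Finset.univ : Finset (Fin n)),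
      (∑ e ∈ Finset.powersetCard 2 S, f e) ≠ 0) := by
  constructor
  · rw [sum_f_eq n X Y hdisj f hf, Finset.univ_inter, Finset.univ_inter]
    have h1 := two_mul_choose_two X.card
    have h2 := two_mul_choose_two Y.card
    have : Y.card.choose 2 = 2 * X.card.choose 2 := by omega
    rw [this]
    push_cast
    ring
  · intro S hS
    rw [sum_f_eq n X Y hdisj f hf]
    rw [mem_powersetCard] at hS
    have hunion : (S ∩ X) ∪ (S ∩ Y) = S := by
      rw [← Finset.inter_union_distrib_left, hcover, Finset.inter_univ]
    have hd : Disjoint (S ∩ X) (S ∩ Y) :=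
      hdisj.mono inter_subset_right inter_subset_right
    have hab : (S ∩ X).card + (S ∩ Y).card = 4 := by
      rw [← card_union_of_disjoint hd, hunion, hS.2]
    set a := (S ∩ X).card with haa
    set b := (S ∩ Y).card with hbb
    have ha4 : a ≤ 4 := by omega
    have hb4 : b ≤ 4 := by omega
    interval_cases a <;> interval_cases b <;> first | omega | decide
end

section
/- There are infinitely many pairs (x, y) of positive odd integers satisfying the Pell equation y² − 2x² = −1; consequently, there are infinitely many pairs (a, b) of positive integers with 2a(a − 1) = b(b − 1) (namely a = (x+1)/2, b = (y+1)/2). -/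
private def pellF : ℕ → ℤ × ℤ
  | 0 => (1, 1)
  | n + 1 => (3 * (pellF n).1 + 2 * (pellF n).2, 4 * (pellF n).1 + 3 * (pellF n).2)

private lemma pellF_mem (n : ℕ) : 0 < (pellF n).1 ∧ 0 < (pellF n).2 ∧ Odd (pellF n).1 ∧
    Odd (pellF n).2 ∧ (pellF n).2 ^ 2 - 2 * (pellF n).1 ^ 2 = -1 := by
  induction n with
  | zero => exact ⟨one_pos, one_pos, odd_one, odd_one, by decide⟩
  | succ n ih =>
    obtain ⟨h1, h2, ⟨k, hk⟩, ⟨l, hl⟩, h5⟩ := ih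
    refine ⟨by simp [pellF]; linarith, by simp [pellF]; linarith, ⟨3 * k + 2 * l + 2, ?_⟩,
      ⟨4 * k + 3 * l + 3, ?_⟩, ?_⟩
    · simp [pellF]; rw [hk, hl]; ring
    · simp [pellF]; rw [hk, hl]; ring
    · simp only [pellF]; nlinarith [h5]

private lemma pellF_mono : StrictMono fun n => (pellF n).1 := by
  apply strictMono_nat_of_lt_succ
  intro n
  obtain ⟨h1, h2, _, _, _⟩ := pellF_mem n
  simp only [pellF]
  linarith

private def pellG : ℕ → ℕ × ℕ
  | 0 => (1, 1)
  | n + 1 => (3 * (pellG n).1 + 2 * (pellG n).2 - 2, 4 * (pellG n).1 + 3 * (pellG n).2 - 3)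

private lemma pellG_mem (n : ℕ) : 1 ≤ (pellG n).1 ∧ 1 ≤ (pellG n).2 ∧
    (2 * ((pellG n).2 : ℤ) - 1) ^ 2 - 2 * (2 * ((pellG n).1 : ℤ) - 1) ^ 2 = -1 := by
  induction n with
  | zero => simp [pellG]
  | succ n ih =>
    obtain ⟨h1, h2, h3⟩ := ih
    set a := (pellG n).1
    set b := (pellG n).2
    have ha : (pellG (n + 1)).1 = 3 * a + 2 * b - 2 := rfl
    have hb : (pellG (n + 1)).2 = 4 * a + 3 * b - 3 := rfl
    refine ⟨by omega, by omega, ?_⟩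
    rw [ha, hb]
    have ha' : ((3 * a + 2 * b - 2 : ℕ) : ℤ) = 3 * a + 2 * b - 2 := by
      push_cast [Nat.cast_sub (by omega : 2 ≤ 3 * a + 2 * b)]; ring
    have hb' : ((4 * a + 3 * b - 3 : ℕ) : ℤ) = 4 * a + 3 * b - 3 := by
      push_cast [Nat.cast_sub (by omega : 3 ≤ 4 * a + 3 * b)]; ring
    rw [ha', hb']
    nlinarith [h3]

private lemma pellG_mono : StrictMono fun n => (pellG n).1 := by
  apply strictMono_nat_of_lt_succ
  intro n
  obtain ⟨h1, h2, _⟩ := pellG_mem n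
  have : (pellG (n + 1)).1 = 3 * (pellG n).1 + 2 * (pellG n).2 - 2 := rfl
  omega

/-- There are infinitely many pairs of positive odd integers `(x, y)` with `y² - 2x² = -1`;
consequently there are infinitely many pairs of positive integers `(a, b)` with
`2a(a-1) = b(b-1)`. -/
theorem infinitely_many_pell_pairs :
    {p : ℤ × ℤ | 0 < p.1 ∧ 0 < p.2 ∧ Odd p.1 ∧ Odd p.2 ∧
      p.2 ^ 2 - 2 * p.1 ^ 2 = -1}.Infinite ∧
    {p : ℕ × ℕ | 0 < p.1 ∧ 0 < p.2 ∧
      2 * (p.1 * (p.1 - 1)) = p.2 * (p.2 - 1)}.Infinite := by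
  constructor
  · apply Set.infinite_of_injective_forall_mem (f := pellF)
    · intro m n h
      exact pellF_mono.injective (congrArg Prod.fst h)
    · intro n; exact pellF_mem n
  · apply Set.infinite_of_injective_forall_mem (f := pellG)
    · intro m n h
      exact pellG_mono.injective (congrArg Prod.fst h)
    · intro n
      obtain ⟨h1, h2, h3⟩ := pellG_mem n
      refine ⟨h1, h2, ?_⟩
      set a := (pellG n).1
      set b := (pellG n).2
      have : (2 * (a * (a - 1) : ℕ) : ℤ) = ((b * (b - 1) : ℕ) : ℤ) := by
        push_cast [Nat.cast_sub h1, Nat.cast_sub h2]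
        nlinarith [h3]
      exact_mod_cast this
end
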